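/- arXiv:1604.02097 — 2 statements merged into one kernel-verified Lean document; each statement's English description precedes it below -/
import Mathlib

section
/- Let 0 ≤ β < 1 and r > 1, and let x₀ = (x₀₁, x₀₂) have positive integer entries. Then in a (β, r, x₀)-urn process X, color 1 (the fitter color) almost surely eventually leads forever: with probability one there exists a (random) time t* such that X₁(t) > X₂(t) for all t ≥ t*. -/
set_option maxHeartbeats 1000000

open MeasureTheory Filter

noncomputable section

/-- Transition probability of the nonlinear Pólya urn with feedback strength `β` and
fitness ratio `r`: from `(x₁,x₂)` move to `(x₁+1,x₂)` with probability
`r·x₁^β/(r·x₁^β + x₂^β)`, to `(x₁,x₂+1)` with probability `x₂^β/(r·x₁^β + x₂^β)`,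
and nowhere else. -/
def urnStep (β r : ℝ) (x y : ℕ × ℕ) : ℝ :=
  if y = (x.1 + 1, x.2) then r * (x.1 : ℝ) ^ β / (r * (x.1 : ℝ) ^ β + (x.2 : ℝ) ^ β)
  else if y = (x.1, x.2 + 1) then (x.2 : ℝ) ^ β / (r * (x.1 : ℝ) ^ β + (x.2 : ℝ) ^ β)
  else 0

/-- `μ` is the law (on trajectories `ℕ → ℕ × ℕ`) of a `(β,r,x₀)`-urn process:
a probability measure under which each finite initial trajectory starting at `x₀`
has probability equal to the product of the one-step urn transition probabilities. -/
def IsUrnProcess (μ : Measure (ℕ → ℕ × ℕ)) (β r : ℝ) (x₀ : ℕ × ℕ) : Prop :=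
  IsProbabilityMeasure μ ∧
  ∀ (n : ℕ) (path : ℕ → ℕ × ℕ), path 0 = x₀ →
    (μ {ω | ∀ t ≤ n, ω t = path t}).toReal
      = ∏ t ∈ Finset.range n, urnStep β r (path t) (path (t + 1))

/-- `N_t`: the number of ties up to (and including) time `t`. -/
def numTiesUpTo (ω : ℕ → ℕ × ℕ) (t : ℕ) : ℕ :=
  ((Finset.range (t + 1)).filter (fun j => (ω j).1 = (ω j).2)).card

/-- The intensity `N`: the total number of ties (possibly `∞`). -/
def intensity (ω : ℕ → ℕ × ℕ) : ℕ∞ :=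
  {t : ℕ | (ω t).1 = (ω t).2}.encard

/-- `T_n` (for `n ≥ 1`): the time of the `n`-th tie, i.e. the (unique, if it exists) time `s`
at which a tie occurs and the number of ties up to `s` equals `n`; `⊤` if there is no such time. -/
def nthTieTime (n : ℕ) (ω : ℕ → ℕ × ℕ) : ℕ∞ :=
  sInf {t : ℕ∞ | ∃ s : ℕ, t = (s : ℕ∞) ∧ (ω s).1 = (ω s).2 ∧ numTiesUpTo ω s = n}

/-- The event `{T ≥ t}` where `T` is the duration (time of the last tie, with the convention
`T = -1` if there is no tie): for `t : ℕ` this event is exactly `{∃ s ≥ t, a tie occurs at s}`. -/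
def durationTail (t : ℕ) : Set (ℕ → ℕ × ℕ) :=
  {ω | ∃ s, t ≤ s ∧ (ω s).1 = (ω s).2}

namespace Urn

def up (x : ℕ × ℕ) : ℕ × ℕ := (x.1 + 1, x.2)
def dn (x : ℕ × ℕ) : ℕ × ℕ := (x.1, x.2 + 1)

def S (β r : ℝ) (x : ℕ × ℕ) : ℝ := r * (x.1 : ℝ) ^ β + (x.2 : ℝ) ^ β
def pp (β r : ℝ) (x : ℕ × ℕ) : ℝ := r * (x.1 : ℝ) ^ β / S β r x
def qq (β r : ℝ) (x : ℕ × ℕ) : ℝ := (x.2 : ℝ) ^ β / S β r x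

def Pos (x : ℕ × ℕ) : Prop := 0 < x.1 ∧ 0 < x.2

variable {β r : ℝ} {x : ℕ × ℕ}

lemma rpow_nat_pos {n : ℕ} (hn : 0 < n) : 0 < (n : ℝ) ^ β :=
  Real.rpow_pos_of_pos (by exact_mod_cast hn) β

lemma S_pos (hr : 1 < r) (hx : Pos x) : 0 < S β r x :=
  add_pos (mul_pos (lt_trans one_pos hr) (rpow_nat_pos hx.1)) (rpow_nat_pos hx.2)

lemma pp_nonneg (hr : 1 < r) (hx : Pos x) : 0 ≤ pp β r x :=
  div_nonneg (mul_nonneg (le_of_lt (lt_trans one_pos hr)) (Real.rpow_nonneg (Nat.cast_nonneg _) _)) (le_of_lt (S_pos hr hx))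

lemma qq_nonneg (hr : 1 < r) (hx : Pos x) : 0 ≤ qq β r x :=
  div_nonneg (Real.rpow_nonneg (Nat.cast_nonneg _) _) (le_of_lt (S_pos hr hx))

lemma pp_add_qq (hr : 1 < r) (hx : Pos x) : pp β r x + qq β r x = 1 := by
  rw [pp, qq, ← add_div]
  exact div_self (ne_of_gt (S_pos hr hx))

lemma pp_le_one (hr : 1 < r) (hx : Pos x) : pp β r x ≤ 1 := by
  have h := pp_add_qq (β := β) hr hx
  have := qq_nonneg (β := β) hr hx
  linarith

lemma qq_le_one (hr : 1 < r) (hx : Pos x) : qq β r x ≤ 1 := by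
  have h := pp_add_qq (β := β) hr hx
  have := pp_nonneg (β := β) hr hx
  linarith

lemma Pos.up (hx : Pos x) : Pos (up x) := ⟨Nat.succ_pos _, hx.2⟩
lemma Pos.dn (hx : Pos x) : Pos (dn x) := ⟨hx.1, Nat.succ_pos _⟩

/-- when `x.2 ≤ x.1`, the up probability is at least `r/(r+1)`. -/
lemma pp_ge (hβ0 : 0 ≤ β) (hr : 1 < r) (hx : Pos x) (h : x.2 ≤ x.1) :
    r / (r + 1) ≤ pp β r x := by
  have hr0 : (0:ℝ) < r := lt_trans one_pos hr
  have ha : 0 < (x.1 : ℝ) ^ β := rpow_nat_pos hx.1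
  have hba : (x.2 : ℝ) ^ β ≤ (x.1 : ℝ) ^ β :=
    Real.rpow_le_rpow (Nat.cast_nonneg _) (by exact_mod_cast h) hβ0
  rw [pp, div_le_div_iff₀ (by positivity) (S_pos hr hx)]
  rw [S]; nlinarith [hba, ha, hr0]

/-- survival probability: probability that no tie occurs within the next `m` steps. -/
def surv (β r : ℝ) : ℕ → ℕ × ℕ → ℝ
  | 0, _ => 1
  | m+1, x =>
      pp β r x * (if (up x).1 = (up x).2 then 0 else surv β r m (up x))
      + qq β r x * (if (dn x).1 = (dn x).2 then 0 else surv β r m (dn x))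

/-- absorbed version. -/
def survA (β r : ℝ) (m : ℕ) (x : ℕ × ℕ) : ℝ :=
  if x.1 = x.2 then 0 else surv β r m x

lemma surv_succ (m : ℕ) (x : ℕ × ℕ) :
    surv β r (m+1) x = pp β r x * survA β r m (up x) + qq β r x * survA β r m (dn x) := rfl

lemma surv_nonneg (hr : 1 < r) (m : ℕ) : ∀ x, Pos x → 0 ≤ surv β r m x := by
  induction m with
  | zero => intro x hx; exact zero_le_one
  | succ m ih =>
    intro x hx
    rw [surv]
    have h1 : 0 ≤ (if (up x).1 = (up x).2 then 0 else surv β r m (up x)) := by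
      split
      · exact le_refl 0
      · exact ih _ hx.up
    have h2 : 0 ≤ (if (dn x).1 = (dn x).2 then 0 else surv β r m (dn x)) := by
      split
      · exact le_refl 0
      · exact ih _ hx.dn
    have := pp_nonneg (β := β) hr hx
    have := qq_nonneg (β := β) hr hx
    positivity

lemma survA_nonneg (hr : 1 < r) (m : ℕ) (x : ℕ × ℕ) (hx : Pos x) : 0 ≤ survA β r m x := by
  rw [survA]; split
  · exact le_refl 0
  · exact surv_nonneg hr m x hx

lemma surv_le_one (hr : 1 < r) (m : ℕ) : ∀ x, Pos x → surv β r m x ≤ 1 := by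
  induction m with
  | zero => intro x hx; exact le_refl 1
  | succ m ih =>
    intro x hx
    rw [surv]
    have h1 : (if (up x).1 = (up x).2 then 0 else surv β r m (up x)) ≤ 1 := by
      split
      · exact zero_le_one
      · exact ih _ hx.up
    have h2 : (if (dn x).1 = (dn x).2 then 0 else surv β r m (dn x)) ≤ 1 := by
      split
      · exact zero_le_one
      · exact ih _ hx.dn
    have hp0 := pp_nonneg (β := β) hr hx
    have hq0 := qq_nonneg (β := β) hr hx
    calc pp β r x * (if (up x).1 = (up x).2 then 0 else surv β r m (up x))
          + qq β r x * (if (dn x).1 = (dn x).2 then 0 else surv β r m (dn x))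
        ≤ pp β r x * 1 + qq β r x * 1 := by
          gcongr
      _ = 1 := by rw [mul_one, mul_one, pp_add_qq hr hx]

lemma surv_antitone (hr : 1 < r) (m : ℕ) : ∀ x, Pos x → surv β r (m+1) x ≤ surv β r m x := by
  induction m with
  | zero =>
    intro x hx
    exact surv_le_one hr 1 x hx
  | succ m ih =>
    intro x hx
    rw [surv_succ, surv_succ]
    have hp0 := pp_nonneg (β := β) hr hx
    have hq0 := qq_nonneg (β := β) hr hx
    gcongr
    · rw [survA, survA]; split
      · exact le_refl 0
      · exact ih _ hx.up
    · rw [survA, survA]; split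
      · exact le_refl 0
      · exact ih _ hx.dn

/-- Gambler's ruin lower bound: if color 1 leads by `d+1`, survival (no tie in `m` steps)
has probability at least `1 - r⁻¹ ^ (d+1)`. -/
lemma surv_gambler (hβ0 : 0 ≤ β) (hr : 1 < r) (m : ℕ) :
    ∀ x, Pos x → ∀ d : ℕ, x.1 = x.2 + (d + 1) → 1 - r⁻¹ ^ (d+1) ≤ surv β r m x := by
  have hr0 : (0:ℝ) < r := lt_trans one_pos hr
  have hi0 : (0:ℝ) < r⁻¹ := inv_pos.mpr hr0
  have hi1 : r⁻¹ < 1 := inv_lt_one_of_one_lt₀ hr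
  induction m with
  | zero =>
    intro x hx d hd
    rw [surv]
    nlinarith [pow_pos hi0 (d+1), pow_le_one₀ (le_of_lt hi0) (le_of_lt hi1) (n := d+1)]
  | succ m ih =>
    intro x hx d hd
    have hup : ¬ ((up x).1 = (up x).2) := by
      simp only [up]; omega
    have hiup : 1 - r⁻¹ ^ (d+2) ≤ surv β r m (up x) := by
      apply ih _ hx.up (d+1); simp only [up]; omega
    have hp := pp_ge hβ0 hr hx (by omega)
    have hp1 := pp_le_one (β := β) hr hx
    have hp0 := pp_nonneg (β := β) hr hx
    have hq0 := qq_nonneg (β := β) hr hx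
    have hqe : qq β r x = 1 - pp β r x := by
      have := pp_add_qq (β := β) hr hx; linarith
    have hsu1 : surv β r m (up x) ≤ 1 := surv_le_one hr m _ hx.up
    rw [surv_succ, survA, survA, if_neg hup]
    rcases Nat.eq_zero_or_pos d with hd0 | hdpos
    · subst hd0
      have hdn : (dn x).1 = (dn x).2 := by simp only [dn]; omega
      rw [if_pos hdn, mul_zero, add_zero]
      have key : r / (r+1) * (1 - r⁻¹ ^ 2) ≤ pp β r x * surv β r m (up x) := by
        apply mul_le_mul hp hiup (by nlinarith [pow_pos hi0 2]) hp0
      refine le_trans ?_ key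
      have : r * r⁻¹ = 1 := mul_inv_cancel₀ (ne_of_gt hr0)
      rw [pow_one, pow_two]
      rw [div_mul_eq_mul_div, le_div_iff₀ (by linarith)]
      nlinarith
    · have hdn : ¬ ((dn x).1 = (dn x).2) := by simp only [dn]; omega
      rw [if_neg hdn]
      obtain ⟨d', rfl⟩ : ∃ d', d = d' + 1 := ⟨d - 1, by omega⟩
      have hidn : 1 - r⁻¹ ^ (d'+1) ≤ surv β r m (dn x) := by
        apply ih _ hx.dn d'; simp only [dn]; omega
      have hiup' : 1 - r⁻¹ ^ (d'+3) ≤ surv β r m (up x) := by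
        have h : d' + 1 + 2 = d' + 3 := by omega
        rw [← h]; exact hiup
      have hri : r * r⁻¹ = 1 := mul_inv_cancel₀ (ne_of_gt hr0)
      have hBpos : (0:ℝ) < r⁻¹ ^ (d'+1) := pow_pos hi0 _
      have hA : r⁻¹ ^ (d'+3) = r⁻¹ ^ (d'+1) * r⁻¹ * r⁻¹ := by ring
      have hC : r⁻¹ ^ (d'+1+1) = r⁻¹ ^ (d'+1) * r⁻¹ := by ring
      have hkey : 1 ≤ pp β r x * (1 + r⁻¹) := by
        have h0 : r/(r+1) * (1 + r⁻¹) = 1 := by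
          field_simp
        nlinarith [mul_nonneg (sub_nonneg.2 hp) (by positivity : (0:ℝ) ≤ 1 + r⁻¹)]
      have expand : pp β r x * (1 - r⁻¹ ^ (d'+3)) + (1 - pp β r x) * (1 - r⁻¹ ^ (d'+1))
          - (1 - r⁻¹ ^ (d'+1+1)) = r⁻¹ ^ (d'+1) * (1 - r⁻¹) * (pp β r x * (1 + r⁻¹) - 1) := by
        rw [hA, hC]; ring
      have step : 1 - r⁻¹ ^ (d'+1+1)
          ≤ pp β r x * (1 - r⁻¹ ^ (d'+3)) + (1 - pp β r x) * (1 - r⁻¹ ^ (d'+1)) := by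
        nlinarith [mul_nonneg (mul_nonneg hBpos.le (by linarith : (0:ℝ) ≤ 1 - r⁻¹))
          (sub_nonneg.2 hkey)]
      refine le_trans step ?_
      rw [hqe]
      have hple : (0:ℝ) ≤ 1 - r⁻¹ ^ (d'+3) := by
        nlinarith [pow_pos hi0 (d'+3), pow_le_one₀ (le_of_lt hi0) (le_of_lt hi1) (n := d'+3)]
      gcongr
      all_goals first
        | exact hiup'
        | linarith

/-- From a tie, survival forever has probability at least `(r-1)/(r+1)` at every horizon. -/
lemma surv_tie (hβ0 : 0 ≤ β) (hr : 1 < r) (hx : Pos x) (ht : x.1 = x.2) (m : ℕ) :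
    (r - 1) / (r + 1) ≤ surv β r m x := by
  have hr0 : (0:ℝ) < r := lt_trans one_pos hr
  have hr1 : (0:ℝ) < r + 1 := by linarith
  cases m with
  | zero =>
    rw [surv]
    rw [div_le_one hr1]; linarith
  | succ m =>
    have hup : ¬ ((up x).1 = (up x).2) := by simp only [up]; omega
    have hdn : ¬ ((dn x).1 = (dn x).2) := by simp only [dn]; omega
    rw [surv_succ, survA, survA, if_neg hup, if_neg hdn]
    have hgam : 1 - r⁻¹ ^ (0+1) ≤ surv β r m (up x) := by
      apply surv_gambler hβ0 hr m _ hx.up 0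
      simp only [up]; omega
    have hp := pp_ge hβ0 hr hx (le_of_eq ht.symm)
    have hq0 := qq_nonneg (β := β) hr hx
    have hs0 : 0 ≤ surv β r m (dn x) := surv_nonneg hr m _ hx.dn
    have hp0 := pp_nonneg (β := β) hr hx
    have hri : r * r⁻¹ = 1 := mul_inv_cancel₀ (ne_of_gt hr0)
    have h1 : 0 ≤ 1 - r⁻¹ ^ (0+1) := by
      rw [pow_one]
      have : r⁻¹ ≤ 1 := by rw [inv_le_one_iff₀]; right; linarith
      linarith
    have key : r/(r+1) * (1 - r⁻¹ ^ (0+1)) ≤ pp β r x * surv β r m (up x) := by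
      apply mul_le_mul hp hgam h1 hp0
    have e : r/(r+1) * (1 - r⁻¹ ^ (0+1)) = (r-1)/(r+1) := by
      rw [pow_one]; field_simp
    nlinarith [mul_nonneg hq0 hs0]

/-! ### Real analysis: increments of `t ^ (1-β)` -/

section rpowinc
variable (hβ0 : 0 ≤ β) (hβ1 : β < 1)

lemma rpow_inc_le (hβ0 : 0 ≤ β) (hβ1 : β < 1) {a : ℝ} (ha : 1 ≤ a) :
    (a+1) ^ (1-β) - a ^ (1-β) ≤ (1-β) * a ^ (-β) := by
  have ha0 : (0:ℝ) < a := lt_of_lt_of_le one_pos ha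
  obtain ⟨ξ, hξ, hslope⟩ := exists_hasDerivAt_eq_slope (fun t => t ^ (1-β))
    (fun t => (1-β) * t ^ (-β)) (by linarith : a < a + 1)
    (fun t ht => by
      have ht0 : (0:ℝ) < t := lt_of_lt_of_le ha0 ht.1
      exact (Real.continuousAt_rpow_const t (1-β) (Or.inl (ne_of_gt ht0))).continuousWithinAt)
    (fun t ht => by
      have ht0 : (0:ℝ) < t := lt_trans ha0 ht.1
      have := Real.hasDerivAt_rpow_const (x := t) (p := 1-β) (Or.inl (ne_of_gt ht0))
      have he : (1:ℝ) - β - 1 = -β := by ring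
      rwa [he] at this)
  have hξ0 : 0 < ξ := lt_trans ha0 hξ.1
  have hmono : ξ ^ (-β) ≤ a ^ (-β) :=
    Real.rpow_le_rpow_of_nonpos ha0 (le_of_lt hξ.1) (by linarith)
  have hden : a + 1 - a = 1 := by ring
  rw [hden, div_one] at hslope
  rw [← hslope]
  have h1β : 0 ≤ 1 - β := by linarith
  exact mul_le_mul_of_nonneg_left hmono h1β

lemma rpow_inc_ge (hβ0 : 0 ≤ β) (hβ1 : β < 1) {a : ℝ} (ha : 1 ≤ a) :
    (1-β) * (a+1) ^ (-β) ≤ (a+1) ^ (1-β) - a ^ (1-β) := by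
  have ha0 : (0:ℝ) < a := lt_of_lt_of_le one_pos ha
  obtain ⟨ξ, hξ, hslope⟩ := exists_hasDerivAt_eq_slope (fun t => t ^ (1-β))
    (fun t => (1-β) * t ^ (-β)) (by linarith : a < a + 1)
    (fun t ht => by
      have ht0 : (0:ℝ) < t := lt_of_lt_of_le ha0 ht.1
      exact (Real.continuousAt_rpow_const t (1-β) (Or.inl (ne_of_gt ht0))).continuousWithinAt)
    (fun t ht => by
      have ht0 : (0:ℝ) < t := lt_trans ha0 ht.1
      have := Real.hasDerivAt_rpow_const (x := t) (p := 1-β) (Or.inl (ne_of_gt ht0))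
      have he : (1:ℝ) - β - 1 = -β := by ring
      rwa [he] at this)
  have hξ0 : 0 < ξ := lt_trans ha0 hξ.1
  have hmono : (a+1) ^ (-β) ≤ ξ ^ (-β) :=
    Real.rpow_le_rpow_of_nonpos hξ0 (le_of_lt hξ.2) (by linarith)
  have hden : a + 1 - a = 1 := by ring
  rw [hden, div_one] at hslope
  rw [← hslope]
  have h1β : 0 ≤ 1 - β := by linarith
  exact mul_le_mul_of_nonneg_left hmono h1β

end rpowinc

/-! ### Lyapunov function and drift -/

def V (β : ℝ) (x : ℕ × ℕ) : ℝ := (x.2:ℝ) ^ (1-β) - (x.1:ℝ) ^ (1-β)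

def dlt (β r : ℝ) : ℝ := (1-β) * (r-1) / (2*(r+1))

def Kr (r : ℝ) : ℕ := ⌈(r+1)/(r-1)⌉₊

lemma dlt_pos (hβ1 : β < 1) (hr : 1 < r) : 0 < dlt β r := by
  rw [dlt]
  apply div_pos (mul_pos (by linarith) (by linarith)) (by linarith)

lemma V_nonneg (hβ1 : β < 1) (h : x.1 ≤ x.2) : 0 ≤ V β x := by
  rw [V, sub_nonneg]
  exact Real.rpow_le_rpow (Nat.cast_nonneg _) (by exact_mod_cast h) (by linarith)

lemma K_spec (hβ0 : 0 ≤ β) (hβ1 : β < 1) (hr : 1 < r) (hK : Kr r ≤ x.1) :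
    (1+r)/2 ≤ r * ((x.1:ℝ)/((x.1:ℝ)+1)) ^ β := by
  have hr0 : (0:ℝ) < r := lt_trans one_pos hr
  have hr1 : (0:ℝ) < r - 1 := by linarith
  have haK : (r+1)/(r-1) ≤ (x.1:ℝ) := by
    calc (r+1)/(r-1) ≤ (Kr r : ℝ) := Nat.le_ceil _
    _ ≤ (x.1:ℝ) := by exact_mod_cast hK
  have ha0 : (0:ℝ) < (x.1:ℝ) := by
    have : (0:ℝ) < (r+1)/(r-1) := by positivity
    linarith
  have ha1 : (0:ℝ) < (x.1:ℝ) + 1 := by linarith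
  have hq0 : 0 < (x.1:ℝ)/((x.1:ℝ)+1) := by positivity
  have hq1 : (x.1:ℝ)/((x.1:ℝ)+1) ≤ 1 := by
    rw [div_le_one ha1]; linarith
  have hmono : ((x.1:ℝ)/((x.1:ℝ)+1)) ^ (1:ℝ) ≤ ((x.1:ℝ)/((x.1:ℝ)+1)) ^ β :=
    Real.rpow_le_rpow_of_exponent_ge hq0 hq1 (by linarith)
  rw [Real.rpow_one] at hmono
  have hlin : (1+r)/2 ≤ r * ((x.1:ℝ)/((x.1:ℝ)+1)) := by
    rw [mul_div_assoc', div_le_div_iff₀ (by norm_num) ha1]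
    have h1 : (r+1) ≤ (x.1:ℝ) * (r-1) := by
      rw [div_le_iff₀ hr1] at haK; linarith
    nlinarith
  calc (1+r)/2 ≤ r * ((x.1:ℝ)/((x.1:ℝ)+1)) := hlin
    _ ≤ r * ((x.1:ℝ)/((x.1:ℝ)+1)) ^ β := by
        exact mul_le_mul_of_nonneg_left hmono (le_of_lt hr0)

/-- The one-step drift of `V` in the region `x.1 < x.2`, `x.1 ≥ Kr r`. -/
lemma drift (hβ0 : 0 ≤ β) (hβ1 : β < 1) (hr : 1 < r) (hx : Pos x)
    (hlt : x.1 < x.2) (hK : Kr r ≤ x.1) :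
    pp β r x * V β (up x) + qq β r x * V β (dn x)
      ≤ V β x - dlt β r * ((x.1 + x.2 : ℕ):ℝ) ^ (-β) := by
  have hr0 : (0:ℝ) < r := lt_trans one_pos hr
  have ha1 : (1:ℝ) ≤ (x.1:ℝ) := by exact_mod_cast hx.1
  have hb1 : (1:ℝ) ≤ (x.2:ℝ) := by exact_mod_cast hx.2
  have ha0 : (0:ℝ) < (x.1:ℝ) := lt_of_lt_of_le one_pos ha1
  have hb0 : (0:ℝ) < (x.2:ℝ) := lt_of_lt_of_le one_pos hb1
  have hc0 : (0:ℝ) < 1 - β := by linarith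
  have hS := S_pos (β := β) hr hx
  have hp0 := pp_nonneg (β := β) hr hx
  have hq0 := qq_nonneg (β := β) hr hx
  have hpq := pp_add_qq (β := β) hr hx
  have hVup : V β (up x) = (x.2:ℝ) ^ (1-β) - ((x.1:ℝ)+1) ^ (1-β) := by
    simp only [V, up]; push_cast; ring_nf
  have hVdn : V β (dn x) = ((x.2:ℝ)+1) ^ (1-β) - (x.1:ℝ) ^ (1-β) := by
    simp only [V, dn]; push_cast; ring_nf
  have hsplit : pp β r x * V β (up x) + qq β r x * V β (dn x)
      = V β x + (qq β r x * (((x.2:ℝ)+1) ^ (1-β) - (x.2:ℝ) ^ (1-β))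
          - pp β r x * (((x.1:ℝ)+1) ^ (1-β) - (x.1:ℝ) ^ (1-β))) := by
    rw [hVup, hVdn, V]
    linear_combination ((x.2:ℝ) ^ (1-β) - (x.1:ℝ) ^ (1-β)) * hpq
  have hIncB := rpow_inc_le hβ0 hβ1 hb1
  have hIncA := rpow_inc_ge hβ0 hβ1 ha1
  have hstep1 : qq β r x * (((x.2:ℝ)+1) ^ (1-β) - (x.2:ℝ) ^ (1-β))
      - pp β r x * (((x.1:ℝ)+1) ^ (1-β) - (x.1:ℝ) ^ (1-β))
      ≤ (1-β) * (qq β r x * (x.2:ℝ) ^ (-β) - pp β r x * ((x.1:ℝ)+1) ^ (-β)) := by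
    have h1 := mul_le_mul_of_nonneg_left hIncB hq0
    have h2 := mul_le_mul_of_nonneg_left hIncA hp0
    nlinarith
  -- identify the drift
  have eB : qq β r x * (x.2:ℝ) ^ (-β) = 1 / S β r x := by
    rw [qq, div_mul_eq_mul_div, ← Real.rpow_add hb0, add_neg_cancel, Real.rpow_zero]
  have eA : pp β r x * ((x.1:ℝ)+1) ^ (-β) = (r * ((x.1:ℝ)/((x.1:ℝ)+1)) ^ β) / S β r x := by
    rw [pp, div_mul_eq_mul_div]
    congr 1
    rw [Real.div_rpow (le_of_lt ha0) (by linarith), Real.rpow_neg (by linarith)]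
    rw [div_eq_mul_inv]; ring
  have hKs := K_spec (x := x) hβ0 hβ1 hr hK
  have hdrift : qq β r x * (x.2:ℝ) ^ (-β) - pp β r x * ((x.1:ℝ)+1) ^ (-β)
      ≤ (1 - (1+r)/2) / S β r x := by
    rw [eB, eA]
    rw [div_sub_div_same, div_le_div_iff₀ hS hS]
    have : 1 - r * ((x.1:ℝ)/((x.1:ℝ)+1)) ^ β ≤ 1 - (1+r)/2 := by linarith
    nlinarith
  -- compare S with (r+1) * s^β
  have hsum : ((x.1 + x.2 : ℕ):ℝ) = (x.1:ℝ) + (x.2:ℝ) := by push_cast; ring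
  have hs1 : (1:ℝ) ≤ ((x.1 + x.2 : ℕ):ℝ) := by rw [hsum]; linarith
  have hs0 : (0:ℝ) < ((x.1 + x.2 : ℕ):ℝ) := lt_of_lt_of_le one_pos hs1
  have hsb0 : (0:ℝ) < ((x.1 + x.2 : ℕ):ℝ) ^ β := Real.rpow_pos_of_pos hs0 β
  have hSle : S β r x ≤ (r+1) * ((x.1 + x.2 : ℕ):ℝ) ^ β := by
    rw [S]
    have h1 : (x.1:ℝ) ^ β ≤ ((x.1 + x.2 : ℕ):ℝ) ^ β := by
      apply Real.rpow_le_rpow (le_of_lt ha0) _ hβ0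
      rw [hsum]; linarith
    have h2 : (x.2:ℝ) ^ β ≤ ((x.1 + x.2 : ℕ):ℝ) ^ β := by
      apply Real.rpow_le_rpow (le_of_lt hb0) _ hβ0
      rw [hsum]; linarith
    nlinarith
  have hfin : dlt β r * ((x.1 + x.2 : ℕ):ℝ) ^ (-β) ≤ (1-β) * ((1+r)/2 - 1) / S β r x := by
    rw [Real.rpow_neg (le_of_lt hs0), dlt]
    have e1 : (1-β) * (r-1) / (2*(r+1)) * (((x.1 + x.2 : ℕ):ℝ) ^ β)⁻¹
        = ((1-β) * ((1+r)/2 - 1)) / ((r+1) * ((x.1 + x.2 : ℕ):ℝ) ^ β) := by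
      rw [div_mul_eq_mul_div, div_eq_div_iff (by positivity) (by positivity)]
      field_simp
      ring
    rw [e1]
    apply div_le_div_of_nonneg_left _ hS hSle
    nlinarith
  have hS' : (1-β) * ((1 - (1+r)/2) / S β r x) = - ((1-β) * ((1+r)/2 - 1) / S β r x) := by
    field_simp; ring
  calc pp β r x * V β (up x) + qq β r x * V β (dn x)
      ≤ V β x + (1-β) * (qq β r x * (x.2:ℝ) ^ (-β) - pp β r x * ((x.1:ℝ)+1) ^ (-β)) := by
        rw [hsplit]; linarith
    _ ≤ V β x + (1-β) * ((1 - (1+r)/2) / S β r x) := by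
        have := mul_le_mul_of_nonneg_left hdrift (le_of_lt hc0)
        linarith
    _ ≤ V β x - dlt β r * ((x.1 + x.2 : ℕ):ℝ) ^ (-β) := by
        rw [hS']; linarith

/-! ### The absorbed value process and the Lyapunov estimate -/

def AV (β r : ℝ) : ℕ → ℕ × ℕ → ℝ
  | 0, x => V β x
  | m+1, x => if x.1 < x.2 then pp β r x * AV β r m (up x) + qq β r x * AV β r m (dn x)
              else V β x

lemma AV_nonneg (hβ1 : β < 1) (hr : 1 < r) (m : ℕ) :
    ∀ x, Pos x → x.1 ≤ x.2 → 0 ≤ AV β r m x := by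
  induction m with
  | zero => intro x hx h; exact V_nonneg hβ1 h
  | succ m ih =>
    intro x hx h
    rw [AV]
    split
    · rename_i hlt
      have h1 := ih (up x) hx.up (by simp only [up]; omega)
      have h2 := ih (dn x) hx.dn (by simp only [dn]; omega)
      have hp0 := pp_nonneg (β := β) hr hx
      have hq0 := qq_nonneg (β := β) hr hx
      positivity
    · exact V_nonneg hβ1 h

lemma survA_zero_tie (h : x.1 = x.2) (m : ℕ) : survA β r m x = 0 := by
  rw [survA, if_pos h]

/-- Main Lyapunov estimate. -/
lemma AV_le (hβ0 : 0 ≤ β) (hβ1 : β < 1) (hr : 1 < r) (m : ℕ) :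
    ∀ x, Pos x → Kr r ≤ x.1 → x.1 ≤ x.2 →
    AV β r m x ≤ V β x
      - dlt β r * ∑ j ∈ Finset.range m, ((x.1 + x.2 + j : ℕ):ℝ) ^ (-β) * survA β r j x := by
  induction m with
  | zero =>
    intro x hx hK h
    rw [AV]; simp
  | succ m ih =>
    intro x hx hK h
    rcases Nat.lt_or_ge x.1 x.2 with hlt | hge
    · rw [AV, if_pos hlt]
      have hup := ih (up x) hx.up (by simp only [up]; omega) (by simp only [up]; omega)
      have hdn := ih (dn x) hx.dn (by simp only [dn]; omega) (by simp only [dn]; omega)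
      have hp0 := pp_nonneg (β := β) hr hx
      have hq0 := qq_nonneg (β := β) hr hx
      have hnt : ¬ (x.1 = x.2) := by omega
      -- rewrite the sums over children
      have hsumup : ∀ j : ℕ, (((up x).1 + (up x).2 + j : ℕ):ℝ) = ((x.1 + x.2 + (j+1) : ℕ):ℝ) := by
        intro j; congr 1; simp only [up]; omega
      have hsumdn : ∀ j : ℕ, (((dn x).1 + (dn x).2 + j : ℕ):ℝ) = ((x.1 + x.2 + (j+1) : ℕ):ℝ) := by
        intro j; congr 1; simp only [dn]; omega
      have hcomb : pp β r x * AV β r m (up x) + qq β r x * AV β r m (dn x)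
          ≤ pp β r x * V β (up x) + qq β r x * V β (dn x)
            - dlt β r * ∑ j ∈ Finset.range m,
               ((x.1 + x.2 + (j+1) : ℕ):ℝ) ^ (-β) * surv β r (j+1) x := by
        have e : ∑ j ∈ Finset.range m, ((x.1 + x.2 + (j+1) : ℕ):ℝ) ^ (-β) * surv β r (j+1) x
            = pp β r x * ∑ j ∈ Finset.range m,
                (((up x).1 + (up x).2 + j : ℕ):ℝ) ^ (-β) * survA β r j (up x)
              + qq β r x * ∑ j ∈ Finset.range m,
                (((dn x).1 + (dn x).2 + j : ℕ):ℝ) ^ (-β) * survA β r j (dn x) := by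
          rw [Finset.mul_sum, Finset.mul_sum, ← Finset.sum_add_distrib]
          apply Finset.sum_congr rfl
          intro j _
          rw [hsumup j, hsumdn j, surv_succ]
          ring
        rw [e]
        have h1 := mul_le_mul_of_nonneg_left hup hp0
        have h2 := mul_le_mul_of_nonneg_left hdn hq0
        have hd0 := le_of_lt (dlt_pos hβ1 hr)
        nlinarith
      refine le_trans hcomb ?_
      have hdrift := drift hβ0 hβ1 hr hx hlt hK
      have hfinal : dlt β r * ((x.1 + x.2 : ℕ):ℝ) ^ (-β)
            + dlt β r * ∑ j ∈ Finset.range m,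
               ((x.1 + x.2 + (j+1) : ℕ):ℝ) ^ (-β) * surv β r (j+1) x
          = dlt β r * ∑ j ∈ Finset.range (m+1),
               ((x.1 + x.2 + j : ℕ):ℝ) ^ (-β) * survA β r j x := by
        rw [Finset.sum_range_succ']
        have e0 : ((x.1 + x.2 + 0 : ℕ):ℝ) ^ (-β) * survA β r 0 x
            = ((x.1 + x.2 : ℕ):ℝ) ^ (-β) := by
          rw [survA, if_neg hnt, surv]
          norm_num
        rw [e0]
        have e1 : ∀ j : ℕ, survA β r (j+1) x = surv β r (j+1) x := by
          intro j; rw [survA, if_neg hnt]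
        have e2 : ∑ j ∈ Finset.range m, ((x.1 + x.2 + (j+1) : ℕ):ℝ) ^ (-β) * survA β r (j+1) x
            = ∑ j ∈ Finset.range m, ((x.1 + x.2 + (j+1) : ℕ):ℝ) ^ (-β) * surv β r (j+1) x := by
          apply Finset.sum_congr rfl; intro j _; rw [e1 j]
        rw [e2]; ring
      linarith
    · have heq : x.1 = x.2 := by omega
      rw [AV, if_neg (by omega)]
      have : ∑ j ∈ Finset.range (m+1), ((x.1 + x.2 + j : ℕ):ℝ) ^ (-β) * survA β r j x = 0 := by
        apply Finset.sum_eq_zero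
        intro j _
        rw [survA_zero_tie heq, mul_zero]
      rw [this, mul_zero, sub_zero]

/-! ### Divergence of the series -/

lemma sum_rpow_div (hβ0 : 0 ≤ β) (hβ1 : β < 1) (A : ℕ) (hA : 1 ≤ A) :
    Tendsto (fun m => ∑ j ∈ Finset.range m, ((A + j : ℕ):ℝ) ^ (-β)) atTop atTop := by
  have hterm : ∀ j : ℕ, (1/(A:ℝ)) * (1/((j:ℝ)+1)) ≤ ((A + j : ℕ):ℝ) ^ (-β) := by
    intro j
    have hA0 : (0:ℝ) < (A:ℝ) := by exact_mod_cast hA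
    have hAj : (1:ℝ) ≤ ((A + j : ℕ):ℝ) := by
      have : 1 ≤ A + j := by omega
      exact_mod_cast this
    have h1 : ((A + j : ℕ):ℝ) ^ (-1:ℝ) ≤ ((A + j : ℕ):ℝ) ^ (-β) :=
      Real.rpow_le_rpow_of_exponent_le hAj (by linarith)
    refine le_trans ?_ h1
    rw [Real.rpow_neg_one]
    push_cast
    rw [div_mul_div_comm, mul_one, ← one_div]
    apply one_div_le_one_div_of_le (by positivity)
    have hA1 : (1:ℝ) ≤ (A:ℝ) := by exact_mod_cast hA
    nlinarith [mul_nonneg (sub_nonneg.2 hA1) (Nat.cast_nonneg (α := ℝ) j)]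
  apply tendsto_atTop_mono
    (fun m => Finset.sum_le_sum (fun j _ => hterm j))
  have := Real.tendsto_sum_range_one_div_nat_succ_atTop
  have h2 : Tendsto (fun m => (1/(A:ℝ)) * ∑ j ∈ Finset.range m, 1/((j:ℝ)+1)) atTop atTop := by
    apply Tendsto.const_mul_atTop (by positivity) this
  convert h2 using 2 with m
  rw [Finset.mul_sum]

/-! ### The limit of survival probabilities is zero in the region `x.1 < x.2` -/

def sl (β r : ℝ) (x : ℕ × ℕ) : ℝ := ⨅ m, surv β r m x

lemma surv_anti (hr : 1 < r) (hx : Pos x) : Antitone (fun m => surv β r m x) :=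
  antitone_nat_of_succ_le (fun m => surv_antitone hr m x hx)

lemma surv_bdd (hr : 1 < r) (hx : Pos x) :
    BddBelow (Set.range (fun m => surv β r m x)) := by
  refine ⟨0, ?_⟩
  rintro y ⟨m, rfl⟩
  exact surv_nonneg hr m x hx

lemma tendsto_sl (hr : 1 < r) (hx : Pos x) :
    Tendsto (fun m => surv β r m x) atTop (nhds (sl β r x)) :=
  tendsto_atTop_ciInf (surv_anti hr hx) (surv_bdd hr hx)

lemma sl_nonneg (hr : 1 < r) (hx : Pos x) : 0 ≤ sl β r x :=
  le_ciInf (fun m => surv_nonneg hr m x hx)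

lemma sl_le_surv (hr : 1 < r) (hx : Pos x) (m : ℕ) : sl β r x ≤ surv β r m x :=
  ciInf_le (surv_bdd hr hx) m

lemma sl_le_one (hr : 1 < r) (hx : Pos x) : sl β r x ≤ 1 := by
  have := sl_le_surv (β := β) hr hx 0
  rw [surv] at this; exact this

lemma sl_zero_K (hβ0 : 0 ≤ β) (hβ1 : β < 1) (hr : 1 < r) (hx : Pos x)
    (hK : Kr r ≤ x.1) (hlt : x.1 < x.2) : sl β r x = 0 := by
  have hd0 := dlt_pos (r := r) hβ1 hr
  have hnt : ¬ (x.1 = x.2) := by omega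
  have hub : ∀ m : ℕ, dlt β r * (∑ j ∈ Finset.range m, ((x.1 + x.2 + j : ℕ):ℝ) ^ (-β)) * sl β r x
      ≤ V β x := by
    intro m
    have h1 := AV_le hβ0 hβ1 hr m x hx hK (le_of_lt hlt)
    have h2 := AV_nonneg hβ1 hr m x hx (le_of_lt hlt)
    have h3 : dlt β r * ∑ j ∈ Finset.range m, ((x.1 + x.2 + j : ℕ):ℝ) ^ (-β) * survA β r j x
        ≤ V β x := by linarith
    refine le_trans ?_ h3
    rw [mul_assoc, Finset.sum_mul]
    apply mul_le_mul_of_nonneg_left _ (le_of_lt hd0)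
    apply Finset.sum_le_sum
    intro j _
    rw [survA, if_neg hnt]
    exact mul_le_mul_of_nonneg_left (sl_le_surv hr hx j)
      (Real.rpow_nonneg (Nat.cast_nonneg _) _)
  by_contra hne
  have hsl0 : 0 < sl β r x := lt_of_le_of_ne (sl_nonneg hr hx) (Ne.symm hne)
  have hdiv : Tendsto (fun m => dlt β r *
      (∑ j ∈ Finset.range m, ((x.1 + x.2 + j : ℕ):ℝ) ^ (-β)) * sl β r x) atTop atTop := by
    apply Tendsto.atTop_mul_const hsl0
    apply Tendsto.const_mul_atTop hd0
    exact sum_rpow_div hβ0 hβ1 (x.1 + x.2) (by omega)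
  obtain ⟨m, hm⟩ := (hdiv.eventually_gt_atTop (V β x)).exists
  exact absurd (hub m) (not_le.mpr hm)

lemma sl_rec (hr : 1 < r) (hx : Pos x) :
    sl β r x = pp β r x * (if (up x).1 = (up x).2 then 0 else sl β r (up x))
      + qq β r x * (if (dn x).1 = (dn x).2 then 0 else sl β r (dn x)) := by
  have hL : Tendsto (fun m => surv β r (m+1) x) atTop (nhds (sl β r x)) :=
    (tendsto_sl hr hx).comp (tendsto_add_atTop_nat 1)
  have hRup : Tendsto (fun m => (if (up x).1 = (up x).2 then 0 else surv β r m (up x)))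
      atTop (nhds (if (up x).1 = (up x).2 then 0 else sl β r (up x))) := by
    split
    · exact tendsto_const_nhds
    · exact tendsto_sl hr hx.up
  have hRdn : Tendsto (fun m => (if (dn x).1 = (dn x).2 then 0 else surv β r m (dn x)))
      atTop (nhds (if (dn x).1 = (dn x).2 then 0 else sl β r (dn x))) := by
    split
    · exact tendsto_const_nhds
    · exact tendsto_sl hr hx.dn
  have hR : Tendsto (fun m => pp β r x * (if (up x).1 = (up x).2 then 0 else surv β r m (up x))
      + qq β r x * (if (dn x).1 = (dn x).2 then 0 else surv β r m (dn x))) atTop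
      (nhds (pp β r x * (if (up x).1 = (up x).2 then 0 else sl β r (up x))
        + qq β r x * (if (dn x).1 = (dn x).2 then 0 else sl β r (dn x)))) :=
    ((hRup.const_mul _).add (hRdn.const_mul _))
  exact tendsto_nhds_unique hL hR

lemma pp_lower (hβ0 : 0 ≤ β) (hβ1 : β < 1) (hr : 1 < r) {a b : ℕ} (ha : 0 < a) (hb : 0 < b) :
    ∀ j : ℕ, (r/(r + (b:ℝ))) * (1/((j:ℝ)+1)) ≤ pp β r (a, b + j) := by
  intro j
  have hr0 : (0:ℝ) < r := lt_trans one_pos hr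
  have hb1 : (1:ℝ) ≤ (b:ℝ) := by exact_mod_cast hb
  have hA1 : (1:ℝ) ≤ (a:ℝ) ^ β := Real.one_le_rpow (by exact_mod_cast ha) hβ0
  have hBj : ((b + j : ℕ):ℝ) ^ β ≤ (b:ℝ) + (j:ℝ) := by
    have h1 : ((b + j : ℕ):ℝ) ^ β ≤ ((b + j : ℕ):ℝ) ^ (1:ℝ) := by
      apply Real.rpow_le_rpow_of_exponent_le _ (by linarith)
      have : 1 ≤ b + j := by omega
      exact_mod_cast this
    rw [Real.rpow_one] at h1
    push_cast at h1 ⊢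
    linarith
  have hS : S β r (a, b + j) = r * (a:ℝ) ^ β + ((b + j : ℕ):ℝ) ^ β := by
    rw [S]
  have hS0 : 0 < S β r (a, b + j) := S_pos hr ⟨ha, by omega⟩
  rw [pp]
  have hBj0 : (0:ℝ) ≤ ((b + j : ℕ):ℝ) ^ β := Real.rpow_nonneg (Nat.cast_nonneg _) _
  have hj0 : (0:ℝ) ≤ (j:ℝ) := Nat.cast_nonneg _
  -- goal: r/(r+b) * (1/(j+1)) ≤ r * a^β / S
  rw [div_mul_div_comm, mul_one, div_le_div_iff₀ (by positivity) hS0, hS]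
  have key : (r + (b:ℝ)) * ((j:ℝ)+1) ≥ r + ((b + j:ℕ):ℝ) ^ β / (a:ℝ) ^ β := by
    have h2 : ((b + j:ℕ):ℝ) ^ β / (a:ℝ) ^ β ≤ (b:ℝ) + (j:ℝ) := by
      rw [div_le_iff₀ (by positivity)]
      nlinarith
    nlinarith
  have hA0 : (0:ℝ) < (a:ℝ) ^ β := by positivity
  -- r * (r*a^β + B) ≤ r*a^β * ((r+b)*(j+1))
  have expand : r * (r * (a:ℝ)^β + ((b + j:ℕ):ℝ) ^ β)
      = (a:ℝ)^β * r * (r + ((b + j:ℕ):ℝ) ^ β / (a:ℝ)^β) := by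
    field_simp
  simp only [Prod.fst] at *
  rw [expand]
  calc (a:ℝ)^β * r * (r + ((b + j:ℕ):ℝ) ^ β / (a:ℝ)^β)
      ≤ (a:ℝ)^β * r * ((r + (b:ℝ)) * ((j:ℝ)+1)) := by
        apply mul_le_mul_of_nonneg_left key (by positivity)
    _ = r * (a:ℝ)^β * ((r + (b:ℝ)) * ((j:ℝ)+1)) := by ring

lemma sl_zero (hβ0 : 0 ≤ β) (hβ1 : β < 1) (hr : 1 < r) :
    ∀ d : ℕ, ∀ x : ℕ × ℕ, Pos x → x.1 < x.2 → Kr r ≤ x.1 + d → sl β r x = 0 := by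
  have hr0 : (0:ℝ) < r := lt_trans one_pos hr
  intro d
  induction d with
  | zero =>
    intro x hx hlt hK
    exact sl_zero_K hβ0 hβ1 hr hx (by omega) hlt
  | succ d ih =>
    intro x hx hlt hK
    by_cases hKx : Kr r ≤ x.1
    · exact sl_zero_K hβ0 hβ1 hr hx hKx hlt
    -- the up-neighbor limit vanishes; iterate the down chain
    have hchain : ∀ M : ℕ, ∀ b : ℕ, x.1 < b →
        sl β r (x.1, b) ≤ Real.exp (-(∑ j ∈ Finset.range M, pp β r (x.1, b + j))) := by
      intro M
      induction M with
      | zero =>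
        intro b hb
        simpa using sl_le_one hr (x := (x.1, b)) ⟨hx.1, by omega⟩
      | succ M ihM =>
        intro b hb
        have hxb : Pos (x.1, b) := ⟨hx.1, by omega⟩
        have hrec := sl_rec (β := β) hr hxb
        have hupterm : pp β r (x.1, b) *
            (if (up (x.1, b)).1 = (up (x.1, b)).2 then 0 else sl β r (up (x.1, b))) = 0 := by
          by_cases htie : (up (x.1, b)).1 = (up (x.1, b)).2
          · rw [if_pos htie, mul_zero]
          · rw [if_neg htie]
            have hup : sl β r (up (x.1, b)) = 0 := by
              apply ih (up (x.1, b)) hxb.up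
              · simp only [up] at htie ⊢; omega
              · simp only [up]; omega
            rw [hup, mul_zero]
        have hdnnt : ¬ ((dn (x.1, b)).1 = (dn (x.1, b)).2) := by
          simp only [dn]; omega
        rw [hrec, hupterm, if_neg hdnnt, zero_add]
        have hdn : dn (x.1, b) = (x.1, b + 1) := rfl
        rw [hdn]
        have hqb : qq β r (x.1, b) ≤ Real.exp (-(pp β r (x.1, b))) := by
          have h1 : qq β r (x.1, b) = 1 - pp β r (x.1, b) := by
            have := pp_add_qq (β := β) hr hxb; linarith
          rw [h1]
          have := Real.add_one_le_exp (-(pp β r (x.1, b)))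
          linarith
        have hq0 := qq_nonneg (β := β) hr hxb
        have hs0 := sl_nonneg (β := β) hr (x := (x.1, b+1)) ⟨hx.1, by omega⟩
        calc qq β r (x.1, b) * sl β r (x.1, b + 1)
            ≤ Real.exp (-(pp β r (x.1, b))) *
              Real.exp (-(∑ j ∈ Finset.range M, pp β r (x.1, b + 1 + j))) := by
              apply mul_le_mul hqb (ihM (b+1) (by omega)) hs0 (le_of_lt (Real.exp_pos _))
          _ = Real.exp (-(∑ j ∈ Finset.range (M+1), pp β r (x.1, b + j))) := by
              rw [← Real.exp_add]
              congr 1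
              rw [Finset.sum_range_succ']
              have : ∀ j : ℕ, x.1 = x.1 ∧ b + (j+1) = b + 1 + j := fun j => ⟨rfl, by omega⟩
              have e : ∑ j ∈ Finset.range M, pp β r (x.1, b + (j+1))
                  = ∑ j ∈ Finset.range M, pp β r (x.1, b + 1 + j) := by
                apply Finset.sum_congr rfl
                intro j _
                congr 1
                exact Prod.ext rfl (by omega)
              rw [e]
              simp only [Nat.add_zero]
              ring
    -- now let M → ∞
    have hsum : Tendsto (fun M => ∑ j ∈ Finset.range M, pp β r (x.1, x.2 + j)) atTop atTop := by
      apply tendsto_atTop_mono (fun M => Finset.sum_le_sum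
        (fun j _ => pp_lower hβ0 hβ1 hr hx.1 (by omega : 0 < x.2) j))
      have h2 : Tendsto (fun M => (r/(r + (x.2:ℝ))) * ∑ j ∈ Finset.range M, 1/((j:ℝ)+1))
          atTop atTop := by
        apply Tendsto.const_mul_atTop (by positivity)
        exact Real.tendsto_sum_range_one_div_nat_succ_atTop
      convert h2 using 2 with M
      rw [Finset.mul_sum]
    have hexp : Tendsto (fun M => Real.exp (-(∑ j ∈ Finset.range M, pp β r (x.1, x.2 + j))))
        atTop (nhds 0) :=
      Real.tendsto_exp_atBot.comp (tendsto_neg_atBot_iff.mpr hsum)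
    have hle : sl β r x ≤ 0 := by
      apply ge_of_tendsto hexp
      filter_upwards with M
      have := hchain M x.2 hlt
      rwa [Prod.mk.eta] at this
    exact le_antisymm hle (sl_nonneg hr hx)

/-- Main analytic conclusion: in the region where color 2 leads, the probability of
never reaching a tie within `m` steps tends to `0`. -/
lemma surv_tendsto_zero (hβ0 : 0 ≤ β) (hβ1 : β < 1) (hr : 1 < r) (hx : Pos x)
    (hlt : x.1 < x.2) : Tendsto (fun m => surv β r m x) atTop (nhds 0) := by
  have h := sl_zero hβ0 hβ1 hr (Kr r) x hx hlt (by omega)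
  rw [← h]
  exact tendsto_sl hr hx

/-! ### Cylinder sets -/

def pad (l : List (ℕ × ℕ)) : ℕ → ℕ × ℕ := fun t => l.getD t (0,0)

def cyl (l : List (ℕ × ℕ)) : Set (ℕ → ℕ × ℕ) := {ω | ∀ t < l.length, ω t = pad l t}

def wt (β r : ℝ) (l : List (ℕ × ℕ)) : ℝ :=
  ∏ t ∈ Finset.range (l.length - 1), urnStep β r (pad l t) (pad l (t+1))

lemma urnStep_up (β r : ℝ) (x : ℕ × ℕ) : urnStep β r x (up x) = pp β r x := by
  simp only [up, urnStep, Prod.mk.injEq]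
  rw [if_pos trivial, pp, S]

lemma urnStep_dn (β r : ℝ) (x : ℕ × ℕ) : urnStep β r x (dn x) = qq β r x := by
  simp only [dn, urnStep, Prod.mk.injEq]
  rw [if_neg (by omega), if_pos trivial, qq, S]

lemma urnStep_other (β r : ℝ) (x y : ℕ × ℕ) (h1 : y ≠ up x) (h2 : y ≠ dn x) :
    urnStep β r x y = 0 := by
  rw [urnStep, if_neg (fun h => h1 (h.trans rfl)), if_neg (fun h => h2 (h.trans rfl))]

lemma urnStep_nonneg (hβ0 : 0 ≤ β) (hr : 1 < r) (x y : ℕ × ℕ) : 0 ≤ urnStep β r x y := by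
  have hr0 : (0:ℝ) < r := lt_trans one_pos hr
  rw [urnStep]
  have h1 : (0:ℝ) ≤ (x.1 : ℝ) ^ β := Real.rpow_nonneg (Nat.cast_nonneg _) _
  have h2 : (0:ℝ) ≤ (x.2 : ℝ) ^ β := Real.rpow_nonneg (Nat.cast_nonneg _) _
  split
  · apply div_nonneg (by positivity) (by positivity)
  · split
    · apply div_nonneg (by positivity) (by positivity)
    · exact le_refl 0

lemma wt_nonneg (hβ0 : 0 ≤ β) (hr : 1 < r) (l : List (ℕ × ℕ)) : 0 ≤ wt β r l :=
  Finset.prod_nonneg (fun t _ => urnStep_nonneg hβ0 hr _ _)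

lemma cyl_measurableSet (l : List (ℕ × ℕ)) : MeasurableSet (cyl l) := by
  have : cyl l = ⋂ (t : ℕ) (_ : t < l.length), (fun ω : ℕ → ℕ × ℕ => ω t) ⁻¹' {pad l t} := by
    ext ω; simp [cyl]
  rw [this]
  exact MeasurableSet.iInter (fun t => MeasurableSet.iInter (fun _ =>
    (measurable_pi_apply t) (measurableSet_singleton _)))

/-- tie events -/
def tieSet : Set (ℕ × ℕ) := {p | p.1 = p.2}

lemma tieSet_measurable : MeasurableSet tieSet := by
  have : tieSet = ⋃ n : ℕ, {((n,n) : ℕ × ℕ)} := by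
    ext p
    simp only [tieSet, Set.mem_setOf_eq, Set.mem_iUnion, Set.mem_singleton_iff]
    constructor
    · intro h; exact ⟨p.1, by rw [Prod.ext_iff]; exact ⟨rfl, h.symm⟩⟩
    · rintro ⟨n, rfl⟩; rfl
  rw [this]
  exact MeasurableSet.iUnion (fun n => measurableSet_singleton _)

def noTieIn (a m : ℕ) : Set (ℕ → ℕ × ℕ) := {ω | ∀ s, a ≤ s → s < a + m → (ω s).1 ≠ (ω s).2}

def noTieFrom (a : ℕ) : Set (ℕ → ℕ × ℕ) := {ω | ∀ s, a ≤ s → (ω s).1 ≠ (ω s).2}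

lemma noTieIn_measurable (a m : ℕ) : MeasurableSet (noTieIn a m) := by
  have : noTieIn a m = ⋂ (s : ℕ) (_ : a ≤ s) (_ : s < a + m),
      (fun ω : ℕ → ℕ × ℕ => ω s) ⁻¹' tieSetᶜ := by
    ext ω; simp [noTieIn, tieSet]
  rw [this]
  exact MeasurableSet.iInter fun s => MeasurableSet.iInter fun _ =>
    MeasurableSet.iInter fun _ => (measurable_pi_apply s) tieSet_measurable.compl

lemma noTieFrom_measurable (a : ℕ) : MeasurableSet (noTieFrom a) := by
  have : noTieFrom a = ⋂ (s : ℕ) (_ : a ≤ s), (fun ω : ℕ → ℕ × ℕ => ω s) ⁻¹' tieSetᶜ := by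
    ext ω; simp [noTieFrom, tieSet]
  rw [this]
  exact MeasurableSet.iInter fun s => MeasurableSet.iInter fun _ =>
    (measurable_pi_apply s) tieSet_measurable.compl

lemma durationTail_measurable (a : ℕ) : MeasurableSet (durationTail a) := by
  have : durationTail a = ⋃ (s : ℕ) (_ : a ≤ s), (fun ω : ℕ → ℕ × ℕ => ω s) ⁻¹' tieSet := by
    ext ω; simp [durationTail, tieSet]
  rw [this]
  exact MeasurableSet.iUnion fun s => MeasurableSet.iUnion fun _ =>
    (measurable_pi_apply s) tieSet_measurable

lemma noTieFrom_eq_compl (a : ℕ) : noTieFrom a = (durationTail a)ᶜ := by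
  ext ω
  simp only [noTieFrom, durationTail, Set.mem_setOf_eq, Set.mem_compl_iff, not_exists, not_and]

lemma noTieFrom_eq_iInter (a : ℕ) : noTieFrom a = ⋂ m, noTieIn a m := by
  ext ω
  simp only [noTieFrom, noTieIn, Set.mem_setOf_eq, Set.mem_iInter]
  constructor
  · intro h m s hs _; exact h s hs
  · intro h s hs
    exact h (s - a + 1) s hs (by omega)

lemma noTieIn_antitone (a : ℕ) : Antitone (fun m => noTieIn a m) := by
  intro m m' h ω hω
  intro s hs hs'
  exact hω s hs (by omega)

/-- The measure of a cylinder. -/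
lemma meas_cyl {μ : Measure (ℕ → ℕ × ℕ)} {x₀ : ℕ × ℕ} (hμ : IsUrnProcess μ β r x₀)
    (l : List (ℕ × ℕ)) (hne : l ≠ []) (hhead : pad l 0 = x₀) :
    (μ (cyl l)).toReal = wt β r l := by
  have h := hμ.2 (l.length - 1) (pad l) hhead
  have hlen : 1 ≤ l.length := List.length_pos_iff.mpr hne
  have e : {ω : ℕ → ℕ × ℕ | ∀ t ≤ l.length - 1, ω t = pad l t} = cyl l := by
    ext ω
    simp only [Set.mem_setOf_eq, cyl]
    constructor
    · intro hω t ht; exact hω t (by omega)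
    · intro hω t ht; exact hω t (by omega)
  rw [e] at h
  exact h

lemma meas_cyl' {μ : Measure (ℕ → ℕ × ℕ)} {x₀ : ℕ × ℕ} (hμ : IsUrnProcess μ β r x₀)
    (l : List (ℕ × ℕ)) (hne : l ≠ []) (hhead : pad l 0 = x₀) :
    μ (cyl l) = ENNReal.ofReal (wt β r l) := by
  haveI := hμ.1
  rw [← meas_cyl hμ l hne hhead, ENNReal.ofReal_toReal (measure_ne_top μ _)]

lemma pad_append_lt (l : List (ℕ × ℕ)) (y : ℕ × ℕ) {t : ℕ} (h : t < l.length) :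
    pad (l ++ [y]) t = pad l t := by
  rw [pad, pad, List.getD_append _ _ _ _ h]

lemma pad_append_last (l : List (ℕ × ℕ)) (y : ℕ × ℕ) :
    pad (l ++ [y]) l.length = y := by
  rw [pad, List.getD_append_right _ _ _ _ (le_refl _), Nat.sub_self]
  rfl

lemma wt_append (l : List (ℕ × ℕ)) (y : ℕ × ℕ) (hne : l ≠ []) :
    wt β r (l ++ [y]) = wt β r l * urnStep β r (pad l (l.length - 1)) y := by
  have hlen : 1 ≤ l.length := List.length_pos_iff.mpr hne
  have hlen2 : (l ++ [y]).length - 1 = l.length := by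
    rw [List.length_append, List.length_singleton]
    omega
  rw [wt, hlen2]
  obtain ⟨n, hn⟩ : ∃ n, l.length = n + 1 := ⟨l.length - 1, by omega⟩
  rw [hn, Finset.prod_range_succ]
  congr 1
  · rw [wt, hn]
    apply Finset.prod_congr (by norm_num)
    intro t ht
    simp only [Finset.mem_range] at ht
    rw [pad_append_lt l y (by omega), pad_append_lt l y (by omega)]
  · rw [pad_append_lt l y (by omega)]
    have h1 : n + 1 = l.length := hn.symm
    rw [h1, pad_append_last]
    have h2 : n = l.length - 1 := by omega
    rw [h2]

lemma cyl_append (l : List (ℕ × ℕ)) (y : ℕ × ℕ) :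
    cyl (l ++ [y]) = cyl l ∩ {ω | ω l.length = y} := by
  ext ω
  simp only [cyl, Set.mem_setOf_eq, Set.mem_inter_iff, List.length_append,
    List.length_singleton]
  constructor
  · intro h
    refine ⟨fun t ht => ?_, ?_⟩
    · rw [← pad_append_lt l y ht]; exact h t (by omega)
    · rw [← pad_append_last l y]; exact h l.length (by omega)
  · rintro ⟨h1, h2⟩ t ht
    rcases Nat.lt_or_ge t l.length with h | h
    · rw [pad_append_lt l y h]; exact h1 t h
    · have : t = l.length := by omega
      subst this
      rw [pad_append_last]; exact h2

/-- Bridge: measure of "cylinder and no tie in the next `m` steps". -/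
lemma meas_cyl_noTie (hβ0 : 0 ≤ β) (hr : 1 < r) {μ : Measure (ℕ → ℕ × ℕ)} {x₀ : ℕ × ℕ}
    (hμ : IsUrnProcess μ β r x₀) :
    ∀ (m : ℕ) (l : List (ℕ × ℕ)), l ≠ [] → pad l 0 = x₀ →
      (μ (cyl l ∩ noTieIn l.length m)).toReal
        = wt β r l * surv β r m (pad l (l.length - 1)) := by
  haveI := hμ.1
  intro m
  induction m with
  | zero =>
    intro l hne hhead
    have e : noTieIn l.length 0 = Set.univ := by
      ext ω
      simp only [noTieIn, Set.mem_setOf_eq, Set.mem_univ, iff_true]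
      intro s h1 h2; exfalso; omega
    rw [e, Set.inter_univ, surv, mul_one]
    exact meas_cyl hμ l hne hhead
  | succ m ih =>
    intro l hne hhead
    have hlen : 1 ≤ l.length := List.length_pos_iff.mpr hne
    set n := l.length with hn
    set z := pad l (n - 1) with hz
    set a : ℕ × ℕ → Set (ℕ → ℕ × ℕ) :=
      fun y => if y.1 = y.2 then ∅ else (cyl (l ++ [y]) ∩ noTieIn (n+1) m) with ha
    have ha_sub : ∀ y, a y ⊆ {ω | ω n = y} := by
      intro y
      rw [ha]; dsimp only
      split
      · exact Set.empty_subset _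
      · intro ω hω
        have := hω.1
        rw [cyl_append] at this
        exact this.2
    have ha_meas : ∀ y, MeasurableSet (a y) := by
      intro y
      rw [ha]; dsimp only
      split
      · exact MeasurableSet.empty
      · exact (cyl_measurableSet _).inter (noTieIn_measurable _ _)
    -- decomposition
    have hdecomp : cyl l ∩ noTieIn n (m+1) = ⋃ y, a y := by
      ext ω
      constructor
      · intro hω
        refine Set.mem_iUnion.mpr ⟨ω n, ?_⟩
        have hyne : (ω n).1 ≠ (ω n).2 := hω.2 n (le_refl n) (by omega)
        rw [ha]; dsimp only
        simp only [if_neg hyne]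
        refine ⟨?_, ?_⟩
        · rw [cyl_append]; exact ⟨hω.1, rfl⟩
        · intro s hs hs'
          exact hω.2 s (by omega) (by omega)
      · intro hω
        obtain ⟨y, hy⟩ := Set.mem_iUnion.mp hω
        rw [ha] at hy; dsimp only at hy
        by_cases htie : y.1 = y.2
        · rw [if_pos htie] at hy; exact absurd hy (Set.notMem_empty ω)
        · rw [if_neg htie] at hy
          have hcy := hy.1
          rw [cyl_append] at hcy
          obtain ⟨hcyl, heq⟩ := hcy
          refine ⟨hcyl, ?_⟩
          intro s hs hs'
          rcases Nat.eq_or_lt_of_le hs with h | h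
          · rw [← h]
            have heq' : ω n = y := heq
            rw [heq']
            exact htie
          · exact hy.2 s (by omega) (by omega)
    -- junk is null
    have happne : ∀ y : ℕ × ℕ, (l ++ [y]) ≠ [] := by
      intro y h
      have := congrArg List.length h
      simp at this
    have happhead : ∀ y : ℕ × ℕ, pad (l ++ [y]) 0 = x₀ := by
      intro y
      rw [pad_append_lt l y (by omega), hhead]
    have hnull : ∀ y : ℕ × ℕ, y ≠ up z → y ≠ dn z → μ (a y) = 0 := by
      intro y h1 h2
      apply measure_mono_null (t := cyl (l ++ [y]))
      · rw [ha]; dsimp only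
        split
        · exact Set.empty_subset _
        · exact Set.inter_subset_left
      · rw [meas_cyl' hμ _ (happne y) (happhead y), wt_append _ _ hne,
          urnStep_other β r _ _ h1 h2, mul_zero, ENNReal.ofReal_zero]
    set J : Set (ℕ → ℕ × ℕ) := ⋃ (y : {y : ℕ × ℕ // y ≠ up z ∧ y ≠ dn z}), a y.1 with hJ
    have hJ0 : μ J = 0 := measure_iUnion_null (fun y => hnull y.1 y.2.1 y.2.2)
    have hsplit : (⋃ y, a y) = (a (up z) ∪ a (dn z)) ∪ J := by
      ext ω
      constructor
      · intro hω
        obtain ⟨y, hy⟩ := Set.mem_iUnion.mp hω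
        by_cases e1 : y = up z
        · exact Or.inl (Or.inl (e1 ▸ hy))
        · by_cases e2 : y = dn z
          · exact Or.inl (Or.inr (e2 ▸ hy))
          · exact Or.inr (Set.mem_iUnion.mpr ⟨⟨y, e1, e2⟩, hy⟩)
      · intro hω
        rcases hω with (h | h) | h
        · exact Set.mem_iUnion.mpr ⟨up z, h⟩
        · exact Set.mem_iUnion.mpr ⟨dn z, h⟩
        · obtain ⟨y, hy⟩ := Set.mem_iUnion.mp h
          exact Set.mem_iUnion.mpr ⟨y.1, hy⟩
    have hupdn : up z ≠ dn z := by
      intro h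
      have := congrArg Prod.fst h
      simp only [up, dn] at this
      omega
    have hdisj : Disjoint (a (up z)) (a (dn z)) := by
      rw [Set.disjoint_left]
      intro ω h1 h2
      have e1 := ha_sub (up z) h1
      have e2 := ha_sub (dn z) h2
      exact hupdn (e1.symm.trans e2)
    have hmm : μ (cyl l ∩ noTieIn n (m+1)) = μ (a (up z)) + μ (a (dn z)) := by
      rw [hdecomp, hsplit]
      have h1 : μ ((a (up z) ∪ a (dn z)) ∪ J) = μ (a (up z) ∪ a (dn z)) := by
        apply le_antisymm
        · calc μ ((a (up z) ∪ a (dn z)) ∪ J)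
              ≤ μ (a (up z) ∪ a (dn z)) + μ J := measure_union_le _ _
            _ = μ (a (up z) ∪ a (dn z)) := by rw [hJ0, add_zero]
        · exact measure_mono Set.subset_union_left
      rw [h1]
      exact measure_union hdisj (ha_meas (dn z))
    -- compute each branch
    have htoR : ∀ y : ℕ × ℕ, (μ (a y)).toReal
        = wt β r l * (urnStep β r z y * (if y.1 = y.2 then 0 else surv β r m y)) := by
      intro y
      by_cases htie : y.1 = y.2
      · rw [ha]; dsimp only
        simp only [if_pos htie]
        rw [measure_empty, mul_zero, mul_zero]
        rfl
      · rw [ha]; dsimp only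
        simp only [if_neg htie]
        have hlap : (l ++ [y]).length = n + 1 := by
          rw [List.length_append, List.length_singleton]
        have hpadlast : pad (l ++ [y]) (n + 1 - 1) = y := by
          have e' : n + 1 - 1 = l.length := by omega
          rw [e', pad_append_last]
        have := ih (l ++ [y]) (happne y) (happhead y)
        rw [hlap, hpadlast] at this
        rw [this, wt_append _ _ hne]
        ring
    rw [hmm, ENNReal.toReal_add (measure_ne_top μ _) (measure_ne_top μ _),
      htoR (up z), htoR (dn z), urnStep_up, urnStep_dn]
    have : surv β r (m+1) z
        = pp β r z * (if (up z).1 = (up z).2 then 0 else surv β r m (up z))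
          + qq β r z * (if (dn z).1 = (dn z).2 then 0 else surv β r m (dn z)) := rfl
    rw [this]
    ring

end Urn

namespace Urn

variable {β r : ℝ} {x : ℕ × ℕ}

/-- Admissibility of a finite path. -/
def Adm (l : List (ℕ × ℕ)) : Prop :=
  ∀ t, t + 1 < l.length → pad l (t+1) = up (pad l t) ∨ pad l (t+1) = dn (pad l t)

lemma Adm_pos {x₀ : ℕ × ℕ} {l : List (ℕ × ℕ)} (hx₀ : Pos x₀) (hhead : pad l 0 = x₀)
    (hA : Adm l) : ∀ t < l.length, Pos (pad l t) := by
  intro t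
  induction t with
  | zero => intro _; rw [hhead]; exact hx₀
  | succ t iht =>
    intro ht
    rcases hA t (by omega) with h | h
    · rw [h]; exact (iht (by omega)).up
    · rw [h]; exact (iht (by omega)).dn

lemma wt_zero_of_not_adm {l : List (ℕ × ℕ)} (h : ¬ Adm l) : wt β r l = 0 := by
  rw [Adm] at h
  push_neg at h
  obtain ⟨t, ht, h1, h2⟩ := h
  rw [wt]
  exact Finset.prod_eq_zero (Finset.mem_range.mpr (by omega))
    (urnStep_other β r _ _ h1 h2)

lemma null_noTieFrom (hβ0 : 0 ≤ β) (hβ1 : β < 1) (hr : 1 < r)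
    {μ : Measure (ℕ → ℕ × ℕ)} {x₀ : ℕ × ℕ} (hμ : IsUrnProcess μ β r x₀) (hx₀ : Pos x₀)
    (l : List (ℕ × ℕ)) (hne : l ≠ []) (hhead : pad l 0 = x₀)
    (hreg : (pad l (l.length - 1)).1 < (pad l (l.length - 1)).2) :
    μ (cyl l ∩ noTieFrom l.length) = 0 := by
  haveI := hμ.1
  have hbound : ∀ m : ℕ, μ (cyl l ∩ noTieFrom l.length)
      ≤ ENNReal.ofReal (wt β r l * surv β r m (pad l (l.length - 1))) := by
    intro m
    have hsub : cyl l ∩ noTieFrom l.length ⊆ cyl l ∩ noTieIn l.length m := by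
      apply Set.inter_subset_inter_right
      rw [noTieFrom_eq_iInter]
      exact Set.iInter_subset _ m
    calc μ (cyl l ∩ noTieFrom l.length) ≤ μ (cyl l ∩ noTieIn l.length m) := measure_mono hsub
      _ = ENNReal.ofReal (wt β r l * surv β r m (pad l (l.length - 1))) := by
          rw [← meas_cyl_noTie hβ0 hr hμ m l hne hhead,
            ENNReal.ofReal_toReal (measure_ne_top μ _)]
  by_cases hAdm : Adm l
  · have hlen : 1 ≤ l.length := List.length_pos_iff.mpr hne
    have hz := Adm_pos hx₀ hhead hAdm (l.length - 1) (by omega)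
    have htz := surv_tendsto_zero hβ0 hβ1 hr hz hreg
    have h0 : Tendsto (fun m => ENNReal.ofReal
        (wt β r l * surv β r m (pad l (l.length - 1)))) atTop (nhds 0) := by
      have h1 : Tendsto (fun m => wt β r l * surv β r m (pad l (l.length - 1)))
          atTop (nhds 0) := by
        have := htz.const_mul (wt β r l)
        rwa [mul_zero] at this
      have h2 := ENNReal.tendsto_ofReal h1
      rwa [ENNReal.ofReal_zero] at h2
    exact le_antisymm (ge_of_tendsto h0 (Eventually.of_forall hbound)) (zero_le)
  · have hw : wt β r l = 0 := wt_zero_of_not_adm hAdm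
    have := hbound 0
    rw [hw, zero_mul, ENNReal.ofReal_zero] at this
    exact le_antisymm this (zero_le)

lemma tieAfter_bound (hβ0 : 0 ≤ β) (hβ1 : β < 1) (hr : 1 < r)
    {μ : Measure (ℕ → ℕ × ℕ)} {x₀ : ℕ × ℕ} (hμ : IsUrnProcess μ β r x₀) (hx₀ : Pos x₀)
    (l : List (ℕ × ℕ)) (hne : l ≠ []) (hhead : pad l 0 = x₀)
    (htie : (pad l (l.length - 1)).1 = (pad l (l.length - 1)).2) :
    μ (cyl l ∩ durationTail l.length)
      ≤ ENNReal.ofReal (1 - (r-1)/(r+1)) * μ (cyl l) := by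
  haveI := hμ.1
  have hr0 : (0:ℝ) < r := lt_trans one_pos hr
  have hc0 : 0 < (r-1)/(r+1) := div_pos (by linarith) (by linarith)
  have hc1 : (r-1)/(r+1) < 1 := by
    rw [div_lt_one (by linarith)]; linarith
  by_cases hAdm : Adm l
  · have hlen : 1 ≤ l.length := List.length_pos_iff.mpr hne
    have hz := Adm_pos hx₀ hhead hAdm (l.length - 1) (by omega)
    have hw0 := wt_nonneg (β := β) (r := r) hβ0 hr l
    have hsurvc : ∀ m : ℕ, (r-1)/(r+1) ≤ surv β r m (pad l (l.length - 1)) :=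
      fun m => surv_tie hβ0 hr hz htie m
    -- lower bound for the no-tie-forever part
    have hmeasm : ∀ m : ℕ, μ (cyl l ∩ noTieIn l.length m)
        = ENNReal.ofReal (wt β r l * surv β r m (pad l (l.length - 1))) := by
      intro m
      rw [← meas_cyl_noTie hβ0 hr hμ m l hne hhead,
        ENNReal.ofReal_toReal (measure_ne_top μ _)]
    have htends := tendsto_measure_iInter_atTop
      (s := fun m => cyl l ∩ noTieIn l.length m)
      (fun m => ((cyl_measurableSet l).inter (noTieIn_measurable _ _)).nullMeasurableSet)
      (fun m m' h => Set.inter_subset_inter_right _ (noTieIn_antitone _ h))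
      ⟨0, measure_ne_top μ _⟩
    have hiInter : (⋂ m, (cyl l ∩ noTieIn l.length m)) = cyl l ∩ noTieFrom l.length := by
      rw [noTieFrom_eq_iInter]
      exact (Set.inter_iInter _ _).symm
    rw [hiInter] at htends
    have hlb : ENNReal.ofReal (wt β r l * ((r-1)/(r+1))) ≤ μ (cyl l ∩ noTieFrom l.length) := by
      apply ge_of_tendsto htends
      filter_upwards with m
      rw [Function.comp_apply, hmeasm m]
      exact ENNReal.ofReal_le_ofReal (mul_le_mul_of_nonneg_left (hsurvc m) hw0)
    have hadd : μ (cyl l ∩ durationTail l.length) + μ (cyl l ∩ noTieFrom l.length)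
        = μ (cyl l) := by
      have := measure_inter_add_diff (μ := μ) (cyl l) (durationTail_measurable l.length)
      rwa [Set.diff_eq, ← noTieFrom_eq_compl] at this
    have heq : μ (cyl l ∩ durationTail l.length)
        = μ (cyl l) - μ (cyl l ∩ noTieFrom l.length) :=
      ENNReal.eq_sub_of_add_eq (measure_ne_top μ _) hadd
    rw [heq, meas_cyl' hμ l hne hhead]
    calc ENNReal.ofReal (wt β r l) - μ (cyl l ∩ noTieFrom l.length)
        ≤ ENNReal.ofReal (wt β r l) - ENNReal.ofReal (wt β r l * ((r-1)/(r+1))) :=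
          tsub_le_tsub_left hlb _
      _ = ENNReal.ofReal (wt β r l - wt β r l * ((r-1)/(r+1))) := by
          rw [ENNReal.ofReal_sub _ (by positivity)]
      _ = ENNReal.ofReal ((1 - (r-1)/(r+1)) * wt β r l) := by
          congr 1; ring
      _ = ENNReal.ofReal (1 - (r-1)/(r+1)) * ENNReal.ofReal (wt β r l) := by
          rw [ENNReal.ofReal_mul (by linarith)]
  · have hw : wt β r l = 0 := wt_zero_of_not_adm hAdm
    have h0 : μ (cyl l) = 0 := by
      rw [meas_cyl' hμ l hne hhead, hw, ENNReal.ofReal_zero]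
    calc μ (cyl l ∩ durationTail l.length) ≤ μ (cyl l) := measure_mono Set.inter_subset_left
      _ = 0 := h0
      _ ≤ _ := zero_le

/-! ### Counting ties -/

lemma numTies_succ (ω : ℕ → ℕ × ℕ) (s : ℕ) :
    numTiesUpTo ω (s+1) = numTiesUpTo ω s + (if (ω (s+1)).1 = (ω (s+1)).2 then 1 else 0) := by
  rw [numTiesUpTo, numTiesUpTo, Finset.range_add_one, Finset.filter_insert]
  split
  · rw [Finset.card_insert_of_notMem (by simp), add_comm]
  · rw [add_zero]

lemma numTies_zero (ω : ℕ → ℕ × ℕ) :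
    numTiesUpTo ω 0 = if (ω 0).1 = (ω 0).2 then 1 else 0 := by
  rw [numTiesUpTo]
  rw [Finset.range_one, Finset.filter_singleton]
  split
  · rw [Finset.card_singleton]
  · rw [Finset.card_empty]

lemma numTies_mono (ω : ℕ → ℕ × ℕ) {s s' : ℕ} (h : s ≤ s') :
    numTiesUpTo ω s ≤ numTiesUpTo ω s' := by
  apply Finset.card_le_card
  apply Finset.filter_subset_filter
  intro t ht
  simp only [Finset.mem_range] at ht ⊢
  omega

lemma numTies_lt (ω : ℕ → ℕ × ℕ) {s s' : ℕ} (h : s < s')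
    (ht : (ω s').1 = (ω s').2) : numTiesUpTo ω s < numTiesUpTo ω s' := by
  obtain ⟨t, rfl⟩ : ∃ t, s' = t + 1 := ⟨s' - 1, by omega⟩
  rw [numTies_succ, if_pos ht]
  have := numTies_mono ω (show s ≤ t by omega)
  omega

lemma exists_count (ω : ℕ → ℕ × ℕ) {n : ℕ} (hn : 1 ≤ n)
    (h : ∃ s', n ≤ numTiesUpTo ω s') :
    ∃ s, (ω s).1 = (ω s).2 ∧ numTiesUpTo ω s = n := by
  classical
  have hs : n ≤ numTiesUpTo ω (Nat.find h) := Nat.find_spec h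
  rcases Nat.eq_zero_or_pos (Nat.find h) with h0 | hpos
  · rw [h0] at hs
    have h1 := numTies_zero ω
    by_cases htie : (ω 0).1 = (ω 0).2
    · rw [if_pos htie] at h1
      exact ⟨0, htie, by omega⟩
    · rw [if_neg htie] at h1
      omega
  · obtain ⟨t, ht⟩ : ∃ t, Nat.find h = t + 1 := ⟨Nat.find h - 1, by omega⟩
    have hmin : ¬ n ≤ numTiesUpTo ω t := Nat.find_min h (by omega)
    rw [ht] at hs
    have hsucc := numTies_succ ω t
    by_cases htie : (ω (t+1)).1 = (ω (t+1)).2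
    · rw [if_pos htie] at hsucc
      exact ⟨t+1, htie, by omega⟩
    · rw [if_neg htie] at hsucc
      omega

lemma count_unbounded (ω : ℕ → ℕ × ℕ) (hinf : {t | (ω t).1 = (ω t).2}.Infinite) :
    ∀ n, ∃ s, n ≤ numTiesUpTo ω s := by
  intro n
  induction n with
  | zero => exact ⟨0, Nat.zero_le _⟩
  | succ n ih =>
    obtain ⟨s, hs⟩ := ih
    obtain ⟨s', hmem, hlt⟩ := hinf.exists_gt s
    have h1 := numTies_lt ω hlt hmem
    exact ⟨s', by omega⟩

lemma numTies_congr {ω ω' : ℕ → ℕ × ℕ} {s : ℕ} (h : ∀ j ≤ s, ω j = ω' j) :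
    numTiesUpTo ω s = numTiesUpTo ω' s := by
  rw [numTiesUpTo, numTiesUpTo]
  congr 1
  apply Finset.filter_congr
  intro j hj
  simp only [Finset.mem_range] at hj
  rw [h j (by omega)]

/-! ### Prefix lists -/

def pref (ω : ℕ → ℕ × ℕ) (s : ℕ) : List (ℕ × ℕ) := (List.range (s+1)).map ω

lemma pref_length (ω : ℕ → ℕ × ℕ) (s : ℕ) : (pref ω s).length = s + 1 := by
  rw [pref, List.length_map, List.length_range]

lemma pref_ne_nil (ω : ℕ → ℕ × ℕ) (s : ℕ) : pref ω s ≠ [] := by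
  apply List.ne_nil_of_length_pos
  rw [pref_length]
  omega

lemma pad_pref (ω : ℕ → ℕ × ℕ) (s : ℕ) {t : ℕ} (h : t ≤ s) : pad (pref ω s) t = ω t := by
  have hlt : t < (pref ω s).length := by rw [pref_length]; omega
  rw [pad, List.getD_eq_getElem _ _ hlt]
  simp [pref]

lemma mem_cyl_pref (ω : ℕ → ℕ × ℕ) (s : ℕ) : ω ∈ cyl (pref ω s) := by
  intro t ht
  rw [pref_length] at ht
  rw [pad_pref ω s (by omega)]

/-! ### the events `at least n ties` -/

def Bn (x₀ : ℕ × ℕ) (n : ℕ) : Set (ℕ → ℕ × ℕ) :=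
  {ω | ω 0 = x₀ ∧ ∃ s, (ω s).1 = (ω s).2 ∧ numTiesUpTo ω s = n}

def WnT (x₀ : ℕ × ℕ) (n : ℕ) : Type :=
  {l : List (ℕ × ℕ) // l ≠ [] ∧ pad l 0 = x₀ ∧
    (pad l (l.length - 1)).1 = (pad l (l.length - 1)).2 ∧
    numTiesUpTo (pad l) (l.length - 1) = n}

instance (x₀ : ℕ × ℕ) (n : ℕ) : Countable (WnT x₀ n) := by
  rw [WnT]; infer_instance

lemma Bn_subset (x₀ : ℕ × ℕ) {n : ℕ} (hn : 1 ≤ n) :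
    Bn x₀ (n+1) ⊆ ⋃ (w : WnT x₀ n), (cyl w.1 ∩ durationTail w.1.length) := by
  intro ω hω
  obtain ⟨h0, s', hs'tie, hs'cnt⟩ := hω
  obtain ⟨s, hstie, hscnt⟩ := exists_count ω hn ⟨s', by omega⟩
  have hss' : s < s' := by
    by_contra hcon
    have := numTies_mono ω (show s' ≤ s by omega)
    omega
  have hcnt' : numTiesUpTo (pad (pref ω s)) ((pref ω s).length - 1) = n := by
    rw [pref_length]
    have e : s + 1 - 1 = s := by omega
    rw [e]
    rw [numTies_congr (fun j hj => pad_pref ω s hj)]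
    exact hscnt
  have htie' : (pad (pref ω s) ((pref ω s).length - 1)).1
      = (pad (pref ω s) ((pref ω s).length - 1)).2 := by
    rw [pref_length]
    have e : s + 1 - 1 = s := by omega
    rw [e, pad_pref ω s (le_refl s)]
    exact hstie
  have hhead : pad (pref ω s) 0 = x₀ := by
    rw [pad_pref ω s (by omega)]
    exact h0
  refine Set.mem_iUnion.mpr ⟨⟨pref ω s, pref_ne_nil ω s, hhead, htie', hcnt'⟩, ?_⟩
  refine ⟨mem_cyl_pref ω s, ⟨s', ?_, hs'tie⟩⟩
  rw [pref_length]
  omega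

lemma cyl_inj_aux {ω : ℕ → ℕ × ℕ} {x₀ : ℕ × ℕ} {n : ℕ} (w w' : WnT x₀ n)
    (h : ω ∈ cyl w.1) (h' : ω ∈ cyl w'.1) (hlt : w.1.length < w'.1.length) : False := by
  obtain ⟨l, hne, hh, htie, hcnt⟩ := w
  obtain ⟨l', hne', hh', htie', hcnt'⟩ := w'
  simp only at h h' hlt ⊢
  have hlen : 1 ≤ l.length := List.length_pos_iff.mpr hne
  have hlen' : 1 ≤ l'.length := List.length_pos_iff.mpr hne'
  set s := l.length - 1 with hs
  set s' := l'.length - 1 with hs'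
  have hss' : s < s' := by omega
  have e1 : (ω s).1 = (ω s).2 := by
    have := h s (by omega)
    rw [this]; exact htie
  have e2 : (ω s').1 = (ω s').2 := by
    have := h' s' (by omega)
    rw [this]; exact htie'
  have c1 : numTiesUpTo ω s = n := by
    rw [numTies_congr (fun j hj => h j (by omega))]
    exact hcnt
  have c2 : numTiesUpTo ω s' = n := by
    rw [numTies_congr (fun j hj => h' j (by omega))]
    exact hcnt'
  have := numTies_lt ω hss' e2
  omega

lemma Wn_pairwise (x₀ : ℕ × ℕ) (n : ℕ) :
    Pairwise (Function.onFun Disjoint (fun w : WnT x₀ n => cyl w.1)) := by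
  intro w w' hne
  rw [Function.onFun, Set.disjoint_left]
  intro ω h h'
  rcases lt_trichotomy w.1.length w'.1.length with hl | hl | hl
  · exact cyl_inj_aux w w' h h' hl
  · apply hne
    apply Subtype.ext
    apply List.ext_getElem hl
    intro i h1 h2
    have e1 : ω i = pad w.1 i := h i h1
    have e2 : ω i = pad w'.1 i := h' i h2
    rw [pad, List.getD_eq_getElem _ _ h1] at e1
    rw [pad, List.getD_eq_getElem _ _ h2] at e2
    rw [← e1, ← e2]
  · exact cyl_inj_aux w' w h' h hl

lemma cyl_subset_Bn {x₀ : ℕ × ℕ} {n : ℕ} (w : WnT x₀ n) : cyl w.1 ⊆ Bn x₀ n := by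
  obtain ⟨l, hne, hh, htie, hcnt⟩ := w
  intro ω h
  simp only at h ⊢
  have hlen : 1 ≤ l.length := List.length_pos_iff.mpr hne
  refine ⟨by rw [h 0 (by omega)]; exact hh, l.length - 1, ?_, ?_⟩
  · rw [h (l.length - 1) (by omega)]; exact htie
  · rw [numTies_congr (fun j hj => h j (by omega))]; exact hcnt

/-- geometric decay of the number of ties -/
lemma Bn_step (hβ0 : 0 ≤ β) (hβ1 : β < 1) (hr : 1 < r)
    {μ : Measure (ℕ → ℕ × ℕ)} {x₀ : ℕ × ℕ} (hμ : IsUrnProcess μ β r x₀) (hx₀ : Pos x₀)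
    {n : ℕ} (hn : 1 ≤ n) :
    μ (Bn x₀ (n+1)) ≤ ENNReal.ofReal (1 - (r-1)/(r+1)) * μ (Bn x₀ n) := by
  haveI := hμ.1
  calc μ (Bn x₀ (n+1))
      ≤ μ (⋃ (w : WnT x₀ n), (cyl w.1 ∩ durationTail w.1.length)) :=
        measure_mono (Bn_subset x₀ hn)
    _ ≤ ∑' (w : WnT x₀ n), μ (cyl w.1 ∩ durationTail w.1.length) := measure_iUnion_le _
    _ ≤ ∑' (w : WnT x₀ n), ENNReal.ofReal (1 - (r-1)/(r+1)) * μ (cyl w.1) := by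
        apply ENNReal.tsum_le_tsum
        intro w
        exact tieAfter_bound hβ0 hβ1 hr hμ hx₀ w.1 w.2.1 w.2.2.1 w.2.2.2.1
    _ = ENNReal.ofReal (1 - (r-1)/(r+1)) * ∑' (w : WnT x₀ n), μ (cyl w.1) :=
        ENNReal.tsum_mul_left
    _ = ENNReal.ofReal (1 - (r-1)/(r+1)) * μ (⋃ (w : WnT x₀ n), cyl w.1) := by
        rw [measure_iUnion (Wn_pairwise x₀ n) (fun w => cyl_measurableSet w.1)]
    _ ≤ ENNReal.ofReal (1 - (r-1)/(r+1)) * μ (Bn x₀ n) := by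
        apply mul_le_mul_right
        apply measure_mono
        exact Set.iUnion_subset (fun w => cyl_subset_Bn w)

lemma Bn_geo (hβ0 : 0 ≤ β) (hβ1 : β < 1) (hr : 1 < r)
    {μ : Measure (ℕ → ℕ × ℕ)} {x₀ : ℕ × ℕ} (hμ : IsUrnProcess μ β r x₀) (hx₀ : Pos x₀) :
    ∀ n : ℕ, μ (Bn x₀ (n+1)) ≤ (ENNReal.ofReal (1 - (r-1)/(r+1)))^n := by
  haveI := hμ.1
  intro n
  induction n with
  | zero => rw [pow_zero]; exact prob_le_one
  | succ n ih =>
    calc μ (Bn x₀ (n+2)) ≤ ENNReal.ofReal (1 - (r-1)/(r+1)) * μ (Bn x₀ (n+1)) :=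
          Bn_step hβ0 hβ1 hr hμ hx₀ (by omega)
      _ ≤ ENNReal.ofReal (1 - (r-1)/(r+1)) * (ENNReal.ofReal (1 - (r-1)/(r+1)))^n :=
          mul_le_mul_right ih _
      _ = (ENNReal.ofReal (1 - (r-1)/(r+1)))^(n+1) := by rw [pow_succ, mul_comm]

/-- infinitely many ties is a null event -/
lemma tieInf_null (hβ0 : 0 ≤ β) (hβ1 : β < 1) (hr : 1 < r)
    {μ : Measure (ℕ → ℕ × ℕ)} {x₀ : ℕ × ℕ} (hμ : IsUrnProcess μ β r x₀) (hx₀ : Pos x₀) :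
    μ {ω | ω 0 = x₀ ∧ {t | (ω t).1 = (ω t).2}.Infinite} = 0 := by
  have hr0 : (0:ℝ) < r := lt_trans one_pos hr
  have hsub : ∀ n : ℕ, {ω : ℕ → ℕ × ℕ | ω 0 = x₀ ∧ {t | (ω t).1 = (ω t).2}.Infinite}
      ⊆ Bn x₀ (n+1) := by
    intro n ω hω
    obtain ⟨h0, hinf⟩ := hω
    obtain ⟨s', hs'⟩ := count_unbounded ω hinf (n+1)
    obtain ⟨s, hstie, hscnt⟩ := exists_count ω (by omega) ⟨s', hs'⟩
    exact ⟨h0, s, hstie, hscnt⟩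
  have hbound : ∀ n : ℕ, μ {ω : ℕ → ℕ × ℕ | ω 0 = x₀ ∧ {t | (ω t).1 = (ω t).2}.Infinite}
      ≤ (ENNReal.ofReal (1 - (r-1)/(r+1)))^n :=
    fun n => le_trans (measure_mono (hsub n)) (Bn_geo hβ0 hβ1 hr hμ hx₀ n)
  have hlt1 : ENNReal.ofReal (1 - (r-1)/(r+1)) < 1 := by
    rw [ENNReal.ofReal_lt_one]
    have hc0 : 0 < (r-1)/(r+1) := div_pos (by linarith) (by linarith)
    linarith
  have htends := ENNReal.tendsto_pow_atTop_nhds_zero_of_lt_one hlt1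
  exact le_antisymm (ge_of_tendsto htends (Eventually.of_forall hbound)) (zero_le)

/-- index type for the color-2-leads-forever covering -/
def WgT (x₀ : ℕ × ℕ) : Type :=
  {l : List (ℕ × ℕ) // l ≠ [] ∧ pad l 0 = x₀ ∧
    (pad l (l.length - 1)).1 < (pad l (l.length - 1)).2}

instance (x₀ : ℕ × ℕ) : Countable (WgT x₀) := by
  rw [WgT]; infer_instance

end Urn

/-- For `0 ≤ β < 1` and `r > 1`, in a `(β,r,x₀)`-urn process the fitter
color 1 almost surely eventually leads forever: with probability one there is a time `t*`
such that `X₁(t) > X₂(t)` for all `t ≥ t*`. -/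
theorem stmt_13 (β r : ℝ) (hβ0 : 0 ≤ β) (hβ1 : β < 1) (hr : 1 < r)
    (x₀ : ℕ × ℕ) (hx₁ : 0 < x₀.1) (hx₂ : 0 < x₀.2)
    (μ : Measure (ℕ → ℕ × ℕ)) (hμ : IsUrnProcess μ β r x₀) :
    ∀ᵐ ω ∂μ, ∃ tstar : ℕ, ∀ t : ℕ, tstar ≤ t → (ω t).2 < (ω t).1 := by
  haveI := hμ.1
  have hx₀ : Urn.Pos x₀ := ⟨hx₁, hx₂⟩
  rw [MeasureTheory.ae_iff]
  set G : Set (ℕ → ℕ × ℕ) := (fun ω : ℕ → ℕ × ℕ => ω 0) ⁻¹' {x₀} with hGdef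
  have hGmeas : MeasurableSet G := (measurable_pi_apply 0) (measurableSet_singleton x₀)
  have hμG : μ G = 1 := by
    have h := hμ.2 0 (fun _ => x₀) rfl
    simp only [Finset.range_zero, Finset.prod_empty] at h
    have e : {ω : ℕ → ℕ × ℕ | ∀ t ≤ 0, ω t = (fun _ => x₀) t} = G := by
      ext ω
      simp only [Set.mem_setOf_eq, hGdef, Set.mem_preimage, Set.mem_singleton_iff]
      constructor
      · intro hh; exact hh 0 (le_refl 0)
      · intro hh t ht
        have : t = 0 := by omega
        rw [this]; exact hh
    rw [e] at h
    rw [← ENNReal.ofReal_toReal (measure_ne_top μ G), h, ENNReal.ofReal_one]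
  have hGc : μ Gᶜ = 0 := by
    have h := measure_compl hGmeas (measure_ne_top μ G)
    rw [hμG, measure_univ] at h
    simpa using h
  have hN2 : μ {ω : ℕ → ℕ × ℕ | ω 0 = x₀ ∧ {t | (ω t).1 = (ω t).2}.Infinite} = 0 :=
    Urn.tieInf_null hβ0 hβ1 hr hμ hx₀
  have hN3 : μ (⋃ (w : Urn.WgT x₀), (Urn.cyl w.1 ∩ Urn.noTieFrom w.1.length)) = 0 :=
    measure_iUnion_null (fun w =>
      Urn.null_noTieFrom hβ0 hβ1 hr hμ hx₀ w.1 w.2.1 w.2.2.1 w.2.2.2)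
  apply measure_mono_null
    (t := Gᶜ ∪ {ω : ℕ → ℕ × ℕ | ω 0 = x₀ ∧ {t | (ω t).1 = (ω t).2}.Infinite}
    ∪ (⋃ (w : Urn.WgT x₀), (Urn.cyl w.1 ∩ Urn.noTieFrom w.1.length)))
  · intro ω hω
    simp only [Set.mem_setOf_eq] at hω
    push_neg at hω
    by_cases h0 : ω 0 = x₀
    · by_cases hinf : {t | (ω t).1 = (ω t).2}.Infinite
      · exact Or.inl (Or.inr ⟨h0, hinf⟩)
      · -- finitely many ties
        have hfin : {t | (ω t).1 = (ω t).2}.Finite := Set.not_infinite.mp hinf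
        obtain ⟨t₀, ht₀⟩ := hfin.bddAbove
        obtain ⟨t, htt, hle⟩ := hω (t₀ + 1)
        have hnt : ∀ s, t ≤ s → (ω s).1 ≠ (ω s).2 := by
          intro s hs hcon
          have hmem : s ∈ {t | (ω t).1 = (ω t).2} := hcon
          have := ht₀ hmem
          omega
        have hreg : (ω t).1 < (ω t).2 := by
          have := hnt t (le_refl t)
          omega
        refine Or.inr (Set.mem_iUnion.mpr ⟨⟨Urn.pref ω t, Urn.pref_ne_nil ω t, ?_, ?_⟩, ?_⟩)
        · rw [Urn.pad_pref ω t (by omega)]; exact h0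
        · rw [Urn.pref_length]
          have e : t + 1 - 1 = t := by omega
          rw [e, Urn.pad_pref ω t (le_refl t)]
          exact hreg
        · refine ⟨Urn.mem_cyl_pref ω t, ?_⟩
          intro s hs
          rw [Urn.pref_length] at hs
          exact hnt s (by omega)
    · exact Or.inl (Or.inl h0)
  · exact measure_union_null (measure_union_null hGc hN2) hN3

end
end

section
/- Let r > 1, β ≥ 0, and let x₀ = (x₀₁, x₀₂) have positive integer entries. Then the intensity of a (β, r, x₀)-urn process satisfies, for all n ≥ 1, P[N(β, r, x₀) ≥ n] ≤ r^{−(x₀₁−x₀₂)⁺} · (2/(r+1))^{n−1}, where (x)⁺ = max{x, 0}. Moreover, lim_{n→∞} (1/n) · log P[N(β, r, x₀) ≥ n] = log(2/(r+1)). -/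
open MeasureTheory Filter

noncomputable section

namespace Urn

def upS (x : ℕ × ℕ) : ℕ × ℕ := (x.1 + 1, x.2)
def dnS (x : ℕ × ℕ) : ℕ × ℕ := (x.1, x.2 + 1)
def stp (c : Bool) (x : ℕ × ℕ) : ℕ × ℕ := if c then upS x else dnS x
def pA (β r : ℝ) (x : ℕ × ℕ) : ℝ := urnStep β r x (upS x)
def pB (β r : ℝ) (x : ℕ × ℕ) : ℝ := urnStep β r x (dnS x)
def pC (β r : ℝ) (c : Bool) (x : ℕ × ℕ) : ℝ := if c then pA β r x else pB β r x
def tind (x : ℕ × ℕ) : ℕ := if x.1 = x.2 then 1 else 0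

lemma pA_eq (β r : ℝ) (x : ℕ × ℕ) :
    pA β r x = r * (x.1 : ℝ) ^ β / (r * (x.1 : ℝ) ^ β + (x.2 : ℝ) ^ β) := by
  simp [pA, urnStep, upS]

lemma pB_eq (β r : ℝ) (x : ℕ × ℕ) :
    pB β r x = (x.2 : ℝ) ^ β / (r * (x.1 : ℝ) ^ β + (x.2 : ℝ) ^ β) := by
  simp [pB, urnStep, dnS, Prod.ext_iff]

/-- good states -/
def ok (x : ℕ × ℕ) : Prop := 1 ≤ x.1 ∧ 1 ≤ x.2

lemma ok_upS {x : ℕ × ℕ} (h : ok x) : ok (upS x) := ⟨le_trans h.1 (Nat.le_succ _), h.2⟩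
lemma ok_dnS {x : ℕ × ℕ} (h : ok x) : ok (dnS x) := ⟨h.1, le_trans h.2 (Nat.le_succ _)⟩
lemma ok_stp {x : ℕ × ℕ} (c : Bool) (h : ok x) : ok (stp c x) := by
  cases c <;> simp [stp] <;> [exact ok_dnS h; exact ok_upS h]

section basics
variable {β r : ℝ}

lemma denom_pos (hβ : 0 ≤ β) (hr : 1 < r) {x : ℕ × ℕ} (hx : ok x) :
    0 < r * (x.1 : ℝ) ^ β + (x.2 : ℝ) ^ β := by
  have h1 : (0:ℝ) < (x.1 : ℝ) ^ β :=
    Real.rpow_pos_of_pos (by exact_mod_cast hx.1) _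
  have h2 : (0:ℝ) < (x.2 : ℝ) ^ β :=
    Real.rpow_pos_of_pos (by exact_mod_cast hx.2) _
  nlinarith

lemma pA_pos (hβ : 0 ≤ β) (hr : 1 < r) {x : ℕ × ℕ} (hx : ok x) : 0 < pA β r x := by
  rw [pA_eq]
  apply div_pos _ (denom_pos hβ hr hx)
  have h1 : (0:ℝ) < (x.1 : ℝ) ^ β :=
    Real.rpow_pos_of_pos (by exact_mod_cast hx.1) _
  nlinarith

lemma pB_pos (hβ : 0 ≤ β) (hr : 1 < r) {x : ℕ × ℕ} (hx : ok x) : 0 < pB β r x := by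
  rw [pB_eq]
  apply div_pos _ (denom_pos hβ hr hx)
  exact Real.rpow_pos_of_pos (by exact_mod_cast hx.2) _

lemma pA_add_pB (hβ : 0 ≤ β) (hr : 1 < r) {x : ℕ × ℕ} (hx : ok x) : pA β r x + pB β r x = 1 := by
  rw [pA_eq, pB_eq, ← add_div, div_self (ne_of_gt (denom_pos hβ hr hx))]

lemma pA_le_one (hβ : 0 ≤ β) (hr : 1 < r) {x : ℕ × ℕ} (hx : ok x) : pA β r x ≤ 1 := by
  have := pA_add_pB hβ hr hx; have := pB_pos hβ hr hx; linarith

lemma pB_le_one (hβ : 0 ≤ β) (hr : 1 < r) {x : ℕ × ℕ} (hx : ok x) : pB β r x ≤ 1 := by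
  have := pA_add_pB hβ hr hx; have := pA_pos hβ hr hx; linarith

lemma pC_nonneg (hβ : 0 ≤ β) (hr : 1 < r) {x : ℕ × ℕ} (c : Bool) (hx : ok x) : 0 ≤ pC β r c x := by
  cases c <;> simp [pC] <;> [exact (pB_pos hβ hr hx).le; exact (pA_pos hβ hr hx).le]

lemma pC_le_one (hβ : 0 ≤ β) (hr : 1 < r) {x : ℕ × ℕ} (c : Bool) (hx : ok x) : pC β r c x ≤ 1 := by
  cases c <;> simp [pC] <;> [exact pB_le_one hβ hr hx; exact pA_le_one hβ hr hx]

/-- the key drift inequality: if `x.2 ≤ x.1` then `pA/r + pB·r ≤ 1`. -/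
lemma drift_s17 (hβ : 0 ≤ β) (hr : 1 < r) {x : ℕ × ℕ} (hx : ok x) (hgap : x.2 ≤ x.1) :
    pA β r x * r⁻¹ + pB β r x * r ≤ 1 := by
  have hd := denom_pos (β := β) hβ hr hx
  have hr0 : (0:ℝ) < r := by linarith
  have hab : (x.2 : ℝ) ^ β ≤ (x.1 : ℝ) ^ β := by
    apply Real.rpow_le_rpow (by positivity) (by exact_mod_cast hgap) hβ
  rw [pA_eq, pB_eq, div_mul_eq_mul_div, div_mul_eq_mul_div, ← add_div,
    div_le_one hd]
  have : r * (x.1:ℝ)^β * r⁻¹ = (x.1:ℝ)^β := by field_simp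
  rw [this]
  nlinarith

lemma pA_at_tie (hβ : 0 ≤ β) (hr : 1 < r) {z : ℕ} (hz : 1 ≤ z) : pA β r (z, z) = r / (r + 1) := by
  have h1 : (0:ℝ) < (z : ℝ) ^ β := Real.rpow_pos_of_pos (by exact_mod_cast hz) _
  have h2 : r * (z:ℝ)^β + (z:ℝ)^β = (r+1) * (z:ℝ)^β := by ring
  rw [pA_eq]
  simp only [h2]
  rw [mul_comm r ((z:ℝ)^β), mul_comm (r+1) ((z:ℝ)^β), mul_div_mul_left _ _ (ne_of_gt h1)]

lemma pB_at_tie (hβ : 0 ≤ β) (hr : 1 < r) {z : ℕ} (hz : 1 ≤ z) : pB β r (z, z) = 1 / (r + 1) := by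
  have h1 : (0:ℝ) < (z : ℝ) ^ β := Real.rpow_pos_of_pos (by exact_mod_cast hz) _
  have hr1 : (0:ℝ) < r + 1 := by linarith
  have h2 : r * (z:ℝ)^β + (z:ℝ)^β = (z:ℝ)^β * (r+1) := by ring
  rw [pB_eq, h2]
  rw [show ((z:ℝ)^β : ℝ) = (z:ℝ)^β * 1 from (mul_one _).symm] 
  rw [mul_assoc]
  rw [mul_div_mul_left _ _ (ne_of_gt h1)]
  simp

end basics
end Urn

namespace Urn

/-- truncated tail sums: `hitSum β r s x m` is the probability, over the first `s` steps
of an urn chain started at `x`, that at least `m` further ties occur (after time 0). -/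
def hitSum (β r : ℝ) : ℕ → ℕ × ℕ → ℕ → ℝ
  | _, _, 0 => 1
  | 0, _, _ + 1 => 0
  | s + 1, x, m + 1 =>
      pA β r x * hitSum β r s (upS x) (m + 1 - tind (upS x))
        + pB β r x * hitSum β r s (dnS x) (m + 1 - tind (dnS x))

lemma hitSum_zero (β r : ℝ) (s : ℕ) (x : ℕ × ℕ) : hitSum β r s x 0 = 1 := by
  cases s <;> rfl

lemma hitSum_succ (β r : ℝ) (s : ℕ) (x : ℕ × ℕ) (m : ℕ) :
    hitSum β r (s+1) x (m+1)
      = pA β r x * hitSum β r s (upS x) (m + 1 - tind (upS x))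
        + pB β r x * hitSum β r s (dnS x) (m + 1 - tind (dnS x)) := rfl

section bounds
variable {β r : ℝ} (hβ : 0 ≤ β) (hr : 1 < r)
include hβ hr

lemma hitSum_nonneg (s : ℕ) (x : ℕ × ℕ) (m : ℕ) (hx : ok x) :
    0 ≤ hitSum β r s x m := by
  induction s generalizing x m with
  | zero => cases m <;> simp [hitSum]
  | succ s ih =>
      cases m with
      | zero => simp [hitSum_zero]
      | succ m =>
          rw [hitSum_succ]
          have h1 := ih (upS x) (m + 1 - tind (upS x)) (ok_upS hx)
          have h2 := ih (dnS x) (m + 1 - tind (dnS x)) (ok_dnS hx)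
          have := pA_pos hβ hr hx
          have := pB_pos hβ hr hx
          nlinarith

lemma hitSum_le_one (s : ℕ) (x : ℕ × ℕ) (m : ℕ) (hx : ok x) :
    hitSum β r s x m ≤ 1 := by
  induction s generalizing x m with
  | zero => cases m <;> simp [hitSum]
  | succ s ih =>
      cases m with
      | zero => simp [hitSum_zero]
      | succ m =>
          rw [hitSum_succ]
          have h1 := ih (upS x) (m + 1 - tind (upS x)) (ok_upS hx)
          have h2 := ih (dnS x) (m + 1 - tind (dnS x)) (ok_dnS hx)
          have h3 := hitSum_nonneg hβ hr s (upS x) (m + 1 - tind (upS x)) (ok_upS hx)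
          have h4 := hitSum_nonneg hβ hr s (dnS x) (m + 1 - tind (dnS x)) (ok_dnS hx)
          have h5 := pA_pos hβ hr hx
          have h6 := pB_pos hβ hr hx
          have h7 := pA_add_pB hβ hr hx
          nlinarith

lemma hitSum_mono_s (s : ℕ) (x : ℕ × ℕ) (m : ℕ) (hx : ok x) :
    hitSum β r s x m ≤ hitSum β r (s+1) x m := by
  induction s generalizing x m with
  | zero =>
      cases m with
      | zero => simp [hitSum_zero]
      | succ m =>
          have h1 := hitSum_nonneg hβ hr 1 x (m+1) hx
          simpa [hitSum] using h1
  | succ s ih =>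
      cases m with
      | zero => simp [hitSum_zero]
      | succ m =>
          rw [hitSum_succ, hitSum_succ]
          have h5 := (pA_pos hβ hr hx).le
          have h6 := (pB_pos hβ hr hx).le
          gcongr
          · exact ih (upS x) _ (ok_upS hx)
          · exact ih (dnS x) _ (ok_dnS hx)

lemma hitSum_le_of_le {s s' : ℕ} (hs : s ≤ s') (x : ℕ × ℕ) (m : ℕ) (hx : ok x) :
    hitSum β r s x m ≤ hitSum β r s' x m := by
  induction s' with
  | zero => simp_all
  | succ s' ih =>
      rcases Nat.lt_or_ge s (s'+1) with h | h
      · exact le_trans (ih (Nat.lt_succ_iff.mp h)) (hitSum_mono_s hβ hr s' x m hx)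
      · have : s = s' + 1 := le_antisymm hs h
        subst this; rfl

lemma hitSum_anti_m {m m' : ℕ} (hm : m ≤ m') (s : ℕ) (x : ℕ × ℕ) (hx : ok x) :
    hitSum β r s x m' ≤ hitSum β r s x m := by
  induction s generalizing x m m' with
  | zero =>
      cases m with
      | zero => cases m' <;> simp [hitSum, hitSum_le_one]
      | succ m => cases m' with
          | zero => omega
          | succ m' => simp [hitSum]
  | succ s ih =>
      cases m with
      | zero =>
          rw [hitSum_zero]
          exact hitSum_le_one hβ hr _ _ _ hx
      | succ m =>
          cases m' with
          | zero => omega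
          | succ m' =>
              rw [hitSum_succ, hitSum_succ]
              have h5 := (pA_pos hβ hr hx).le
              have h6 := (pB_pos hβ hr hx).le
              gcongr
              · exact ih (by omega) _ (ok_upS hx)
              · exact ih (by omega) _ (ok_dnS hx)

end bounds
end Urn

namespace Urn

/-- `ψ(x) = r^{-(x₁-x₂)⁺}` -/
def psi (r : ℝ) (x : ℕ × ℕ) : ℝ := r ^ (-(max ((x.1 : ℝ) - (x.2 : ℝ)) 0))

/-- the per-tie decay factor `q = 2/(r+1)` -/
def qf (r : ℝ) : ℝ := 2 / (r + 1)

/-- the superharmonic potential -/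
def phi (r : ℝ) (x : ℕ × ℕ) : ℕ → ℝ
  | 0 => 1
  | m + 1 => if x.1 = x.2 then qf r ^ (m+1) else qf r ^ m * psi r x

section phis
variable {β r : ℝ} (hβ : 0 ≤ β) (hr : 1 < r)
include hr

lemma qf_pos : 0 < qf r := by
  have : (0:ℝ) < r + 1 := by linarith
  exact div_pos (by norm_num) this

lemma qf_lt_one : qf r < 1 := by
  rw [qf, div_lt_one (by linarith)]; linarith

lemma psi_pos (x : ℕ × ℕ) : 0 < psi r x := Real.rpow_pos_of_pos (by linarith) _

lemma psi_le_one (x : ℕ × ℕ) : psi r x ≤ 1 := by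
  rw [psi]
  calc r ^ (-(max ((x.1 : ℝ) - (x.2 : ℝ)) 0)) ≤ r ^ (0:ℝ) := by
        apply Real.rpow_le_rpow_of_exponent_le (le_of_lt hr)
        simp [le_max_iff]
    _ = 1 := Real.rpow_zero r

omit hr in
lemma psi_eq_of_le {x : ℕ × ℕ} (h : x.1 ≤ x.2) : psi r x = 1 := by
  have : max ((x.1 : ℝ) - (x.2 : ℝ)) 0 = 0 := by
    apply max_eq_right; simp; exact_mod_cast h
  rw [psi, this, neg_zero, Real.rpow_zero]

omit hr in
lemma psi_eq_of_ge {x : ℕ × ℕ} (h : x.2 ≤ x.1) :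
    psi r x = r ^ (-((x.1 : ℝ) - (x.2 : ℝ))) := by
  have : max ((x.1 : ℝ) - (x.2 : ℝ)) 0 = (x.1 : ℝ) - (x.2 : ℝ) := by
    apply max_eq_left; simp; exact_mod_cast h
  rw [psi, this]

omit hr in
lemma phi_tie {x : ℕ × ℕ} (h : x.1 = x.2) (m : ℕ) : phi r x m = qf r ^ m := by
  cases m <;> simp [phi, h]

lemma phi_nonneg (x : ℕ × ℕ) (m : ℕ) : 0 ≤ phi r x m := by
  cases m with
  | zero => norm_num [phi]
  | succ m =>
      rw [phi]
      split
      · have h1 := qf_pos (r := r) hr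
        positivity
      · have h1 := psi_pos (r := r) hr x
        have h2 := qf_pos (r := r) hr
        positivity

include hβ in
/-- superharmonicity of `phi` -/
lemma phi_superharmonic {x : ℕ × ℕ} (hx : ok x) (m : ℕ) :
    pA β r x * phi r (upS x) (m + 1 - tind (upS x))
      + pB β r x * phi r (dnS x) (m + 1 - tind (dnS x)) ≤ phi r x (m+1) := by
  obtain ⟨u, v⟩ := x
  have hu : 1 ≤ u := hx.1
  have hv : 1 ≤ v := hx.2
  have hr0 : (0:ℝ) < r := by linarith
  have hq0 := qf_pos (r := r) hr
  have hqm := (pow_pos hq0 m).le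
  have hup : upS (u, v) = (u+1, v) := rfl
  have hdn : dnS (u, v) = (u, v+1) := rfl
  have hA := (pA_pos hβ hr hx).le
  have hB := (pB_pos hβ hr hx).le
  have hAB := pA_add_pB hβ hr hx
  rcases lt_trichotomy u v with hlt | heq | hgt
  · -- below diagonal
    have hphix : phi r (u, v) (m+1) = qf r ^ m := by
      rw [phi, if_neg (by simp; omega), psi_eq_of_le (by simpa using hlt.le), mul_one]
    rcases Nat.lt_or_ge (u + 1) v with h2 | h2
    · -- gap ≤ -2
      have t1 : tind (upS (u,v)) = 0 := by simp [tind, hup]; omega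
      have t2 : tind (dnS (u,v)) = 0 := by simp [tind, hdn]; omega
      rw [t1, t2, Nat.sub_zero]
      have p1 : phi r (upS (u,v)) (m+1) = qf r ^ m := by
        rw [hup, phi, if_neg (by simp; omega), psi_eq_of_le (by simp; omega), mul_one]
      have p2 : phi r (dnS (u,v)) (m+1) = qf r ^ m := by
        rw [hdn, phi, if_neg (by simp; omega), psi_eq_of_le (by simp; omega), mul_one]
      rw [p1, p2, hphix]
      nlinarith
    · -- gap = -1 : up child is a tie
      have h3 : v = u + 1 := by omega
      have t1 : tind (upS (u,v)) = 1 := by simp [tind, hup]; omega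
      have t2 : tind (dnS (u,v)) = 0 := by simp [tind, hdn]; omega
      rw [t1, t2, Nat.sub_zero, Nat.add_sub_cancel]
      have p1 : phi r (upS (u,v)) m = qf r ^ m := phi_tie (by simp [hup]; omega) m
      have p2 : phi r (dnS (u,v)) (m+1) = qf r ^ m := by
        rw [hdn, phi, if_neg (by simp; omega), psi_eq_of_le (by simp; omega), mul_one]
      rw [p1, p2, hphix]
      nlinarith
  · -- tie
    subst heq
    have hAt : pA β r (u, u) = r / (r+1) := pA_at_tie hβ hr hu
    have hBt : pB β r (u, u) = 1 / (r+1) := pB_at_tie hβ hr hu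
    have t1 : tind (upS (u,u)) = 0 := by simp [tind, hup]
    have t2 : tind (dnS (u,u)) = 0 := by simp [tind, hdn]
    rw [t1, t2, Nat.sub_zero]
    have p1 : phi r (upS (u,u)) (m+1) = qf r ^ m * r⁻¹ := by
      rw [hup, phi, if_neg (by simp)]
      congr 1
      rw [psi_eq_of_ge (by simp)]
      push_cast
      rw [show -((u:ℝ) + 1 - u) = (-1 : ℝ) by ring, Real.rpow_neg_one]
    have p2 : phi r (dnS (u,u)) (m+1) = qf r ^ m := by
      rw [hdn, phi, if_neg (by simp), psi_eq_of_le (by simp), mul_one]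
    rw [p1, p2, phi, if_pos rfl, hAt, hBt, pow_succ]
    have hrp1 : (0:ℝ) < r + 1 := by linarith
    rw [show r / (r+1) * (qf r ^ m * r⁻¹) + 1/(r+1) * qf r ^ m
        = qf r ^ m * (r / (r+1) * r⁻¹ + 1/(r+1)) by ring]
    have : r / (r+1) * r⁻¹ + 1/(r+1) = qf r := by
      rw [qf]; field_simp; ring
    rw [this]
  · -- above diagonal
    have hdrift := drift_s17 hβ hr hx (by simpa using hgt.le)
    have hphix : phi r (u, v) (m+1) = qf r ^ m * psi r (u, v) := by
      rw [phi, if_neg (by simp; omega)]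
    have hps := (psi_pos (r := r) hr (u, v)).le
    have t1 : tind (upS (u,v)) = 0 := by simp [tind, hup]; omega
    have p1 : phi r (upS (u,v)) (m+1) = qf r ^ m * (psi r (u,v) * r⁻¹) := by
      rw [hup, phi, if_neg (by simp; omega)]
      congr 1
      rw [psi_eq_of_ge (by simp; omega), psi_eq_of_ge (by simp; omega)]
      push_cast
      rw [show -((u:ℝ) + 1 - v) = -((u:ℝ) - v) + -1 by ring,
        Real.rpow_add hr0, Real.rpow_neg_one]
    rcases Nat.lt_or_ge (v + 1) u with h2 | h2
    · -- gap ≥ 2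
      have t2 : tind (dnS (u,v)) = 0 := by simp [tind, hdn]; omega
      rw [t1, t2, Nat.sub_zero]
      have p2 : phi r (dnS (u,v)) (m+1) = qf r ^ m * (psi r (u,v) * r) := by
        rw [hdn, phi, if_neg (by simp; omega)]
        congr 1
        rw [psi_eq_of_ge (by simp; omega), psi_eq_of_ge (by simp; omega)]
        push_cast
        rw [show -((u:ℝ) - (v + 1)) = -((u:ℝ) - v) + 1 by ring,
          Real.rpow_add hr0, Real.rpow_one]
      rw [p1, p2, hphix]
      calc pA β r (u,v) * (qf r ^ m * (psi r (u,v) * r⁻¹))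
            + pB β r (u,v) * (qf r ^ m * (psi r (u,v) * r))
          = (qf r ^ m * psi r (u,v)) * (pA β r (u,v) * r⁻¹ + pB β r (u,v) * r) := by ring
        _ ≤ (qf r ^ m * psi r (u,v)) * 1 :=
            mul_le_mul_of_nonneg_left hdrift (by positivity)
        _ = qf r ^ m * psi r (u,v) := mul_one _
    · -- gap = 1 : down child is a tie
      have h3 : u = v + 1 := by omega
      have t2 : tind (dnS (u,v)) = 1 := by simp [tind, hdn]; omega
      rw [t1, t2, Nat.sub_zero, Nat.add_sub_cancel]
      have p2 : phi r (dnS (u,v)) m = qf r ^ m := phi_tie (by simp [hdn]; omega) m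
      have hpsix : psi r (u,v) = r⁻¹ := by
        rw [psi_eq_of_ge (by simp; omega), h3]
        push_cast
        rw [show -((v:ℝ) + 1 - v) = (-1 : ℝ) by ring, Real.rpow_neg_one]
      rw [p1, p2, hphix, hpsix]
      have hrinv : (0:ℝ) < r⁻¹ := by positivity
      calc pA β r (u,v) * (qf r ^ m * (r⁻¹ * r⁻¹)) + pB β r (u,v) * qf r ^ m
          = (qf r ^ m * r⁻¹) * (pA β r (u,v) * r⁻¹ + pB β r (u,v) * r) := by
            field_simp
        _ ≤ (qf r ^ m * r⁻¹) * 1 :=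
            mul_le_mul_of_nonneg_left hdrift (by positivity)
        _ = qf r ^ m * r⁻¹ := mul_one _

include hβ in
/-- the main upper bound -/
lemma hitSum_le_phi (s : ℕ) (x : ℕ × ℕ) (m : ℕ) (hx : ok x) :
    hitSum β r s x m ≤ phi r x m := by
  induction s generalizing x m with
  | zero =>
      cases m with
      | zero => simp [hitSum_zero, phi]
      | succ m => rw [show hitSum β r 0 x (m+1) = 0 from rfl]; exact phi_nonneg hr x (m+1)
  | succ s ih =>
      cases m with
      | zero => simp [hitSum_zero, phi]
      | succ m =>
          rw [hitSum_succ]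
          calc pA β r x * hitSum β r s (upS x) (m + 1 - tind (upS x))
                + pB β r x * hitSum β r s (dnS x) (m + 1 - tind (dnS x))
              ≤ pA β r x * phi r (upS x) (m + 1 - tind (upS x))
                + pB β r x * phi r (dnS x) (m + 1 - tind (dnS x)) := by
                have hA := (pA_pos hβ hr hx).le
                have hB := (pB_pos hβ hr hx).le
                gcongr
                · exact ih (upS x) _ (ok_upS hx)
                · exact ih (dnS x) _ (ok_dnS hx)
            _ ≤ phi r x (m+1) := phi_superharmonic hβ hr hx m

end phis
end Urn

namespace Urn

def runL (x : ℕ × ℕ) : List Bool → ℕ × ℕ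
  | [] => x
  | c :: l => runL (stp c x) l

def wtL (β r : ℝ) (x : ℕ × ℕ) : List Bool → ℝ
  | [] => 1
  | c :: l => pC β r c x * wtL β r (stp c x) l

def tiesL (x : ℕ × ℕ) : List Bool → ℕ
  | [] => 0
  | c :: l => tind (stp c x) + tiesL (stp c x) l

lemma runL_append (x : ℕ × ℕ) (l l' : List Bool) :
    runL x (l ++ l') = runL (runL x l) l' := by
  induction l generalizing x with
  | nil => rfl
  | cons c l ih => simp [runL, ih]

lemma wtL_append (β r : ℝ) (x : ℕ × ℕ) (l l' : List Bool) :
    wtL β r x (l ++ l') = wtL β r x l * wtL β r (runL x l) l' := by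
  induction l generalizing x with
  | nil => simp [wtL, runL]
  | cons c l ih => simp [wtL, runL, ih]; ring

lemma tiesL_append (x : ℕ × ℕ) (l l' : List Bool) :
    tiesL x (l ++ l') = tiesL x l + tiesL (runL x l) l' := by
  induction l generalizing x with
  | nil => simp [tiesL, runL]
  | cons c l ih => simp [tiesL, runL, ih]; ring

lemma ok_runL {x : ℕ × ℕ} (hx : ok x) (l : List Bool) : ok (runL x l) := by
  induction l generalizing x with
  | nil => exact hx
  | cons c l ih => exact ih (ok_stp c hx)

lemma runL_fst_ge {x : ℕ × ℕ} (l : List Bool) : x.1 ≤ (runL x l).1 := by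
  induction l generalizing x with
  | nil => exact le_refl _
  | cons c l ih =>
      refine le_trans ?_ (ih (x := stp c x))
      cases c <;> simp [stp, upS, dnS]

lemma runL_snd_ge {x : ℕ × ℕ} (l : List Bool) : x.2 ≤ (runL x l).2 := by
  induction l generalizing x with
  | nil => exact le_refl _
  | cons c l ih =>
      refine le_trans ?_ (ih (x := stp c x))
      cases c <;> simp [stp, upS, dnS]

lemma runL_fst_le {x : ℕ × ℕ} (l : List Bool) : (runL x l).1 ≤ x.1 + l.length := by
  induction l generalizing x with
  | nil => simp [runL]
  | cons c l ih =>
      refine le_trans (ih (x := stp c x)) ?_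
      cases c <;> simp [stp, upS, dnS] <;> omega

lemma runL_snd_le {x : ℕ × ℕ} (l : List Bool) : (runL x l).2 ≤ x.2 + l.length := by
  induction l generalizing x with
  | nil => simp [runL]
  | cons c l ih =>
      refine le_trans (ih (x := stp c x)) ?_
      cases c <;> simp [stp, upS, dnS] <;> omega

section wtpos
variable {β r : ℝ} (hβ : 0 ≤ β) (hr : 1 < r)
include hβ hr

lemma wtL_pos {x : ℕ × ℕ} (hx : ok x) (l : List Bool) : 0 < wtL β r x l := by
  induction l generalizing x with
  | nil => norm_num [wtL]
  | cons c l ih =>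
      rw [wtL]
      have h2 := ih (ok_stp c hx)
      have h1 : 0 < pC β r c x := by
        cases c <;> simp [pC] <;> [exact pB_pos hβ hr hx; exact pA_pos hβ hr hx]
      positivity

lemma wtL_le_one {x : ℕ × ℕ} (hx : ok x) (l : List Bool) : wtL β r x l ≤ 1 := by
  induction l generalizing x with
  | nil => norm_num [wtL]
  | cons c l ih =>
      rw [wtL]
      have h2 := ih (ok_stp c hx)
      have h2' := (wtL_pos hβ hr (ok_stp c hx) l).le
      have h1 : 0 ≤ pC β r c x := pC_nonneg hβ hr c hx
      have h3 : pC β r c x ≤ 1 := pC_le_one hβ hr c hx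
      nlinarith

/-- the prefix (chaining) lemma -/
lemma wtL_mul_hitSum_le {x : ℕ × ℕ} (hx : ok x) (l : List Bool) (s m : ℕ) :
    wtL β r x l * hitSum β r s (runL x l) (m - tiesL x l)
      ≤ hitSum β r (l.length + s) x m := by
  induction l generalizing x m with
  | nil => simp [wtL, runL, tiesL]
  | cons c l ih =>
      cases m with
      | zero =>
          rw [hitSum_zero, Nat.zero_sub, hitSum_zero, mul_one]
          exact wtL_le_one hβ hr hx _
      | succ m =>
          have hss : (c :: l).length + s = (l.length + s) + 1 := by
            simp; omega
          rw [hss, hitSum_succ]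
          have key : wtL β r x (c :: l) * hitSum β r s (runL x (c :: l))
                (m + 1 - tiesL x (c :: l))
              ≤ pC β r c x * hitSum β r (l.length + s) (stp c x) (m + 1 - tind (stp c x)) := by
            rw [wtL, runL, tiesL, mul_assoc]
            apply mul_le_mul_of_nonneg_left _ (pC_nonneg hβ hr c hx)
            rw [show m + 1 - (tind (stp c x) + tiesL (stp c x) l)
                = (m + 1 - tind (stp c x)) - tiesL (stp c x) l from by omega]
            exact ih (ok_stp c hx) _
          refine le_trans key ?_
          have hup := hitSum_nonneg hβ hr (l.length + s) (upS x) (m + 1 - tind (upS x)) (ok_upS hx)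
          have hdn := hitSum_nonneg hβ hr (l.length + s) (dnS x) (m + 1 - tind (dnS x)) (ok_dnS hx)
          have hA := (pA_pos hβ hr hx).le
          have hB := (pB_pos hβ hr hx).le
          cases c <;> simp [pC, stp] <;> nlinarith

end wtpos

/-- the list `[false, true]` repeated `j` times: climbs the diagonal -/
def climb : ℕ → List Bool
  | 0 => []
  | j + 1 => false :: true :: climb j

lemma runL_climb (z : ℕ) (j : ℕ) : runL (z, z) (climb j) = (z + j, z + j) := by
  induction j generalizing z with
  | zero => simp [climb, runL]
  | succ j ih =>
      have : runL (z, z) (climb (j+1)) = runL (z+1, z+1) (climb j) := by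
        simp [climb, runL, stp, dnS, upS]
      rw [this, ih]
      have : z + 1 + j = z + (j + 1) := by omega
      rw [this]

lemma runL_replicate_true (u v : ℕ) (k : ℕ) :
    runL (u, v) (List.replicate k true) = (u + k, v) := by
  induction k generalizing u with
  | zero => simp [runL]
  | succ k ih =>
      rw [List.replicate_succ]
      have : runL (u, v) (true :: List.replicate k true)
          = runL (u+1, v) (List.replicate k true) := by simp [runL, stp, upS]
      rw [this, ih]
      have h9 : u + 1 + k = u + (k + 1) := by omega
      rw [h9]

lemma runL_replicate_false (u v : ℕ) (k : ℕ) :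
    runL (u, v) (List.replicate k false) = (u, v + k) := by
  induction k generalizing v with
  | zero => simp [runL]
  | succ k ih =>
      rw [List.replicate_succ]
      have : runL (u, v) (false :: List.replicate k false)
          = runL (u, v+1) (List.replicate k false) := by simp [runL, stp, dnS]
      rw [this, ih]
      have h9 : v + 1 + k = v + (k + 1) := by omega
      rw [h9]

/-- from any good state we can reach an arbitrarily high tie -/
lemma exists_path_to_tie (x : ℕ × ℕ) (hx : ok x) (z : ℕ) :
    ∃ (l : List Bool) (w : ℕ), runL x l = (w, w) ∧ z ≤ w ∧ 1 ≤ tiesL x l := by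
  classical
  -- first balance, then climb
  obtain ⟨u, v⟩ := x
  rcases Nat.le_total u v with h | h
  · refine ⟨List.replicate (v - u) true ++ climb (z + 1), v + (z+1), ?_, by omega, ?_⟩
    · rw [runL_append, runL_replicate_true, show u + (v - u) = v from by omega, runL_climb]
    · rw [tiesL_append, runL_replicate_true, show u + (v - u) = v from by omega]
      have : 1 ≤ tiesL (v, v) (climb (z+1)) := by
        have : tind (stp false (v,v)) + tind (stp true (stp false (v,v))) ≤
            tiesL (v, v) (climb (z+1)) := by
          simp only [climb, tiesL]
          omega
        refine le_trans ?_ this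
        simp [stp, dnS, upS, tind]
      omega
  · refine ⟨List.replicate (u - v) false ++ climb (z + 1), u + (z+1), ?_, by omega, ?_⟩
    · rw [runL_append, runL_replicate_false, show v + (u - v) = u from by omega, runL_climb]
    · rw [tiesL_append, runL_replicate_false, show v + (u - v) = u from by omega]
      have : 1 ≤ tiesL (u, u) (climb (z+1)) := by
        have : tind (stp false (u,u)) + tind (stp true (stp false (u,u))) ≤
            tiesL (u, u) (climb (z+1)) := by
          simp only [climb, tiesL]
          omega
        refine le_trans ?_ this
        simp [stp, dnS, upS, tind]
      omega

end Urn

namespace Urn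

/-- truncated first-passage sums for the biased coin: `vA p M d` is (a lower bound for)
the probability that a ±1 walk with up-probability `p` started at `d` hits `0` within
`M` steps. -/
def vA (p : ℝ) : ℕ → ℕ → ℝ
  | _, 0 => 1
  | 0, _ + 1 => 0
  | M + 1, d + 1 => p * vA p M (d + 2) + (1 - p) * vA p M d

def iterSq (u w : ℝ) : ℕ → ℝ
  | 0 => 0
  | k + 1 => u + w * (iterSq u w k) ^ 2

def Mseq : ℕ → ℕ
  | 0 => 0
  | k + 1 => 2 * Mseq k + 1

lemma iterSq_nonneg {u w : ℝ} (hu : 0 ≤ u) (hw : 0 ≤ w) (k : ℕ) : 0 ≤ iterSq u w k := by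
  cases k with
  | zero => simp [iterSq]
  | succ k => rw [iterSq]; positivity

section coin
variable {p : ℝ} (hp0 : 0 < p) (hp1 : p < 1)
include hp0 hp1

lemma vA_nonneg (M d : ℕ) : 0 ≤ vA p M d := by
  induction M generalizing d with
  | zero => cases d <;> simp [vA]
  | succ M ih =>
      cases d with
      | zero => simp [vA]
      | succ d =>
          rw [vA]
          nlinarith [ih (d+2), ih d]

lemma vA_le_one (M d : ℕ) : vA p M d ≤ 1 := by
  induction M generalizing d with
  | zero => cases d <;> simp [vA]
  | succ M ih =>
      cases d with
      | zero => simp [vA]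
      | succ d =>
          rw [vA]
          nlinarith [ih (d+2), ih d, vA_nonneg hp0 hp1 M (d+2), vA_nonneg hp0 hp1 M d]

lemma vA_mono (M d : ℕ) : vA p M d ≤ vA p (M+1) d := by
  induction M generalizing d with
  | zero =>
      cases d with
      | zero => simp [vA]
      | succ d => simpa [vA] using vA_nonneg hp0 hp1 1 (d+1)
  | succ M ih =>
      cases d with
      | zero => simp [vA]
      | succ d =>
          rw [vA, show vA p (M+1+1) (d+1) = p * vA p (M+1) (d + 2) + (1 - p) * vA p (M+1) d
            from rfl]
          have h1 := ih (d+2)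
          have h2 := ih d
          nlinarith

lemma vA_mono_le {M M' : ℕ} (h : M ≤ M') (d : ℕ) : vA p M d ≤ vA p M' d := by
  induction M' with
  | zero => simp_all
  | succ M' ih =>
      rcases Nat.lt_or_ge M (M'+1) with hlt | hge
      · exact le_trans (ih (by omega)) (vA_mono hp0 hp1 M' d)
      · have : M = M' + 1 := by omega
        subst this; rfl

/-- superadditivity: splitting a first passage from `e + d` into two stages -/
lemma vA_superadd (M₁ M₂ e d : ℕ) :
    vA p M₁ e * vA p M₂ d ≤ vA p (M₁ + M₂) (e + d) := by
  induction M₁ generalizing e with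
  | zero =>
      cases e with
      | zero =>
          simp only [vA, one_mul, Nat.zero_add]
          exact le_refl _
      | succ e =>
          simp [vA, vA_nonneg hp0 hp1]
  | succ M₁ ih =>
      cases e with
      | zero =>
          simp only [vA, one_mul, Nat.zero_add]
          exact vA_mono_le hp0 hp1 (by omega) d
      | succ e =>
          have hrec : vA p (M₁ + 1 + M₂) (e + 1 + d)
              = p * vA p (M₁ + M₂) (e + 1 + d + 1) + (1 - p) * vA p (M₁ + M₂) (e + d) := by
            have h1 : M₁ + 1 + M₂ = (M₁ + M₂) + 1 := by omega
            have h2 : e + 1 + d = (e + d) + 1 := by omega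
            rw [h1, h2, vA]
          rw [hrec, vA]
          have k1 : vA p M₁ (e + 2) * vA p M₂ d ≤ vA p (M₁ + M₂) (e + 1 + d + 1) := by
            have := ih (e + 2)
            have h4 : e + 2 + d = e + 1 + d + 1 := by omega
            rwa [h4] at this
          have k2 : vA p M₁ e * vA p M₂ d ≤ vA p (M₁ + M₂) (e + d) := ih e
          have h5 := vA_nonneg hp0 hp1 M₂ d
          have h6 := vA_nonneg hp0 hp1 M₁ (e+2)
          have h7 := vA_nonneg hp0 hp1 M₁ e
          nlinarith

lemma vA_Mseq_ge_iterSq (k : ℕ) : iterSq (1 - p) p k ≤ vA p (Mseq k) 1 := by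
  induction k with
  | zero => simp [iterSq, Mseq, vA]
  | succ k ih =>
      have hrec : vA p (Mseq (k+1)) 1
          = p * vA p (2 * Mseq k) 2 + (1 - p) := by
        show vA p (2 * Mseq k + 1) (0 + 1) = _
        have h0 : vA p (2 * Mseq k) 0 = 1 := by cases h : 2 * Mseq k <;> rfl
        rw [vA, h0]
        norm_num
      rw [hrec, iterSq]
      have h1 : vA p (Mseq k) 1 * vA p (Mseq k) 1 ≤ vA p (2 * Mseq k) 2 := by
        have := vA_superadd hp0 hp1 (Mseq k) (Mseq k) 1 1
        simpa [two_mul] using this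
      have h2 := vA_nonneg hp0 hp1 (Mseq k) 1
      have h3 : 0 ≤ iterSq (1 - p) p k := iterSq_nonneg (by linarith) (by linarith) k
      have h4 := mul_self_le_mul_self h3 ih
      nlinarith

omit hp0 hp1 in
/-- the quadratic iteration converges to `min 1 (u/w)` -/
lemma iterSq_tendsto {u w : ℝ} (hu : 0 < u) (hw : 0 < w) (huw : u + w = 1) :
    Filter.Tendsto (iterSq u w) Filter.atTop (nhds (min 1 (u / w))) := by
  set t := min 1 (u / w) with ht
  have ht0 : 0 < t := lt_min (by norm_num) (div_pos hu hw)
  have htfix : u + w * t ^ 2 = t := by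
    rcases le_total (u / w) 1 with h | h
    · have h' : t = u / w := min_eq_right h
      have hw' : w ≠ 0 := ne_of_gt hw
      have hwt : w * t = u := by rw [h']; field_simp
      linear_combination (t - 1) * hwt + t * huw
    · have h' : t = 1 := min_eq_left h
      rw [h']
      nlinarith
  have hnn : ∀ k, 0 ≤ iterSq u w k := fun k => iterSq_nonneg hu.le hw.le k
  have hle : ∀ k, iterSq u w k ≤ t := by
    intro k
    induction k with
    | zero => simpa [iterSq] using ht0.le
    | succ k ih =>
        rw [iterSq]
        have h4 := mul_self_le_mul_self (hnn k) ih
        nlinarith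
  have hmono : Monotone (iterSq u w) := by
    apply monotone_nat_of_le_succ
    intro k
    induction k with
    | zero =>
        rw [show iterSq u w 1 = u + w * (iterSq u w 0)^2 from rfl,
          show iterSq u w 0 = 0 from rfl]
        nlinarith
    | succ k ih =>
        rw [iterSq, iterSq]
        have h4 := mul_self_le_mul_self (hnn k) ih
        nlinarith
  have hbdd : BddAbove (Set.range (iterSq u w)) := ⟨t, by rintro y ⟨k, rfl⟩; exact hle k⟩
  have htend := tendsto_atTop_ciSup hmono hbdd
  set L := ⨆ k, iterSq u w k with hL
  have hLfix : u + w * L ^ 2 = L := by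
    have h1 : Filter.Tendsto (fun k => iterSq u w (k+1)) Filter.atTop (nhds L) :=
      htend.comp (Filter.tendsto_add_atTop_nat 1)
    have h2 : Filter.Tendsto (fun k => u + w * (iterSq u w k) ^ 2) Filter.atTop
        (nhds (u + w * L ^ 2)) := by
      apply Filter.Tendsto.add tendsto_const_nhds
      exact (Filter.Tendsto.pow htend 2).const_mul w
    have h3 : (fun k => iterSq u w (k+1)) = fun k => u + w * (iterSq u w k) ^ 2 := by
      funext k; rfl
    rw [h3] at h1
    exact tendsto_nhds_unique h2 h1
  have hLle : L ≤ t := ciSup_le hle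
  have hLge : u ≤ L := by
    have h5 : iterSq u w 1 ≤ L := le_ciSup hbdd 1
    simpa [iterSq] using h5
  have hfact : (L - 1) * (w * L - u) = 0 := by
    linear_combination hLfix - L * huw
  have hLt : L = t := by
    rcases mul_eq_zero.mp hfact with h | h
    · have hL1 : L = 1 := by linarith [sub_eq_zero.mp h]
      have h6 : t = 1 := le_antisymm (min_le_left _ _) (hL1 ▸ hLle)
      rw [hL1, h6]
    · have hL2 : L = u / w := by
        have h7 : w * L = u := by linarith [sub_eq_zero.mp h]
        field_simp
        linarith
      rcases lt_or_ge (u / w) 1 with hc | hc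
      · exact hL2.trans (min_eq_right hc.le).symm
      · have ht1 : t = 1 := min_eq_left hc
        have h8 : L ≤ 1 := ht1 ▸ hLle
        have h9 : u / w = 1 := le_antisymm (hL2 ▸ h8) hc
        rw [hL2, h9, ht1]
  rw [← hLt]
  exact htend

end coin
end Urn

namespace Urn

/-- truncated "probability of another tie within `M` steps" recursion -/
def nxt (β r : ℝ) : ℕ → ℕ × ℕ → ℝ
  | 0, _ => 0
  | M + 1, x =>
      pA β r x * (if (upS x).1 = (upS x).2 then 1 else nxt β r M (upS x))
        + pB β r x * (if (dnS x).1 = (dnS x).2 then 1 else nxt β r M (dnS x))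

section nxts
variable {β r : ℝ} (hβ : 0 ≤ β) (hr : 1 < r)
include hβ hr

lemma nxt_nonneg (M : ℕ) (x : ℕ × ℕ) (hx : ok x) : 0 ≤ nxt β r M x := by
  induction M generalizing x with
  | zero => simp [nxt]
  | succ M ih =>
      rw [nxt]
      have hA := (pA_pos hβ hr hx).le
      have hB := (pB_pos hβ hr hx).le
      have h1 : (0:ℝ) ≤ (if (upS x).1 = (upS x).2 then 1 else nxt β r M (upS x)) := by
        split
        · norm_num
        · exact ih (upS x) (ok_upS hx)
      have h2 : (0:ℝ) ≤ (if (dnS x).1 = (dnS x).2 then 1 else nxt β r M (dnS x)) := by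
        split
        · norm_num
        · exact ih (dnS x) (ok_dnS hx)
      positivity

/-- uniform step lower bounds inside a coordinate box -/
lemma step_lb (z M : ℕ) (hz : 1 ≤ z) {u v : ℕ}
    (hu1 : z ≤ u) (hv1 : z ≤ v) (hu2 : u ≤ z + M) (hv2 : v ≤ z + M) :
    ((z:ℝ)/((z:ℝ)+(M:ℝ)))^β * (r/(r+1)) ≤ pA β r (u, v)
      ∧ ((z:ℝ)/((z:ℝ)+(M:ℝ)))^β * (1/(r+1)) ≤ pB β r (u, v) := by
  have hz0 : (0:ℝ) < (z:ℝ) := by exact_mod_cast hz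
  have hzM0 : (0:ℝ) < (z:ℝ) + (M:ℝ) := by positivity
  have hr0 : (0:ℝ) < r := by linarith
  have hu0 : (0:ℝ) < (u:ℝ) := by exact_mod_cast lt_of_lt_of_le hz hu1
  have hv0 : (0:ℝ) < (v:ℝ) := by exact_mod_cast lt_of_lt_of_le hz hv1
  have hub : (u:ℝ) ≤ (z:ℝ) + (M:ℝ) := by exact_mod_cast hu2
  have hvb : (v:ℝ) ≤ (z:ℝ) + (M:ℝ) := by exact_mod_cast hv2
  have hzu : (z:ℝ) ≤ (u:ℝ) := by exact_mod_cast hu1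
  have hzv : (z:ℝ) ≤ (v:ℝ) := by exact_mod_cast hv1
  have hpu : (0:ℝ) < (u:ℝ)^β := Real.rpow_pos_of_pos hu0 _
  have hpv : (0:ℝ) < (v:ℝ)^β := Real.rpow_pos_of_pos hv0 _
  have hpz : (0:ℝ) < (z:ℝ)^β := Real.rpow_pos_of_pos hz0 _
  have hpzM : (0:ℝ) < ((z:ℝ)+(M:ℝ))^β := Real.rpow_pos_of_pos hzM0 _
  have hzu' : (z:ℝ)^β ≤ (u:ℝ)^β := Real.rpow_le_rpow hz0.le hzu hβ
  have hzv' : (z:ℝ)^β ≤ (v:ℝ)^β := Real.rpow_le_rpow hz0.le hzv hβ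
  have hub' : (u:ℝ)^β ≤ ((z:ℝ)+(M:ℝ))^β := Real.rpow_le_rpow hu0.le hub hβ
  have hvb' : (v:ℝ)^β ≤ ((z:ℝ)+(M:ℝ))^β := Real.rpow_le_rpow hv0.le hvb hβ
  have hcd : ((z:ℝ)/((z:ℝ)+(M:ℝ)))^β = (z:ℝ)^β / ((z:ℝ)+(M:ℝ))^β :=
    Real.div_rpow hz0.le hzM0.le β
  have hdenom : (0:ℝ) < r * (u:ℝ)^β + (v:ℝ)^β := by positivity
  have hdenom2 : r * (u:ℝ)^β + (v:ℝ)^β ≤ (r+1) * ((z:ℝ)+(M:ℝ))^β := by nlinarith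
  have hrp1 : (0:ℝ) < r + 1 := by linarith
  constructor
  · rw [pA_eq, hcd]
    show (z:ℝ)^β / ((z:ℝ)+(M:ℝ))^β * (r/(r+1)) ≤ r * (u:ℝ)^β / (r * (u:ℝ)^β + (v:ℝ)^β)
    have heq : (z:ℝ)^β / ((z:ℝ)+(M:ℝ))^β * (r/(r+1))
        = (r * (z:ℝ)^β) / ((r+1) * ((z:ℝ)+(M:ℝ))^β) := by
      field_simp
    rw [heq]
    apply div_le_div₀ (by positivity) (by nlinarith) hdenom hdenom2
  · rw [pB_eq, hcd]
    show (z:ℝ)^β / ((z:ℝ)+(M:ℝ))^β * (1/(r+1)) ≤ (v:ℝ)^β / (r * (u:ℝ)^β + (v:ℝ)^β)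
    have heq : (z:ℝ)^β / ((z:ℝ)+(M:ℝ))^β * (1/(r+1))
        = (z:ℝ)^β / ((r+1) * ((z:ℝ)+(M:ℝ))^β) := by
      rw [div_mul_div_comm, mul_one, mul_comm (((z:ℝ)+(M:ℝ))^β) (r+1)]
    rw [heq]
    apply div_le_div₀ (by positivity) hzv' hdenom hdenom2

/-- comparison of `nxt` with the coin walk, inside a box -/
lemma nxt_ge_vA (z M : ℕ) (hz : 1 ≤ z) (c : ℝ)
    (hcdef : c = ((z:ℝ)/((z:ℝ)+(M:ℝ)))^β) :
    ∀ (K : ℕ) (x : ℕ × ℕ), z ≤ x.1 → z ≤ x.2 → x.1 + K ≤ z + M → x.2 + K ≤ z + M →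
      (x.2 < x.1 → c ^ K * vA (r/(r+1)) K (x.1 - x.2) ≤ nxt β r K x)
      ∧ (x.1 < x.2 → c ^ K * vA (1/(r+1)) K (x.2 - x.1) ≤ nxt β r K x) := by
  have hrp1 : (0:ℝ) < r + 1 := by linarith
  have hp0 : (0:ℝ) < r/(r+1) := by positivity
  have hp1 : r/(r+1) < 1 := by rw [div_lt_one hrp1]; linarith
  have hq0 : (0:ℝ) < 1/(r+1) := by positivity
  have hq1 : 1/(r+1) < 1 := by rw [div_lt_one hrp1]; linarith
  have hz0 : (0:ℝ) < (z:ℝ) := by exact_mod_cast hz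
  have hc0 : 0 < c := by rw [hcdef]; exact Real.rpow_pos_of_pos (by positivity) _
  have hc1 : c ≤ 1 := by
    rw [hcdef]
    calc ((z:ℝ)/((z:ℝ)+(M:ℝ)))^β ≤ (1:ℝ)^β := by
          apply Real.rpow_le_rpow (by positivity) _ hβ
          rw [div_le_one (by positivity)]
          simp
      _ = 1 := Real.one_rpow _
  intro K
  induction K with
  | zero =>
      intro x h1 h2 h3 h4
      constructor <;> intro hgap
      · have hd : x.1 - x.2 = (x.1 - x.2 - 1) + 1 := by omega
        rw [hd]
        simp [vA, nxt]
      · have hd : x.2 - x.1 = (x.2 - x.1 - 1) + 1 := by omega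
        rw [hd]
        simp [vA, nxt]
  | succ K ih =>
      intro x h1 h2 h3 h4
      have hx : ok x := ⟨le_trans hz h1, le_trans hz h2⟩
      have hsb : c * (r/(r+1)) ≤ pA β r (x.1, x.2) ∧ c * (1/(r+1)) ≤ pB β r (x.1, x.2) := by
        rw [hcdef]
        exact step_lb hβ hr z M hz h1 h2 (by omega) (by omega)
      rw [show ((x.1, x.2) : ℕ × ℕ) = x from rfl] at hsb
      have hA := (pA_pos hβ hr hx).le
      have hB := (pB_pos hβ hr hx).le
      have hcK : (0:ℝ) < c ^ K := pow_pos hc0 K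
      have hle1 : c ^ K ≤ 1 := pow_le_one₀ hc0.le hc1
      constructor <;> intro hgap
      · -- above the diagonal
        have hnottieup : ¬ (upS x).1 = (upS x).2 := by simp [upS]; omega
        rw [nxt, if_neg hnottieup]
        have hd : x.1 - x.2 = (x.1 - x.2 - 1) + 1 := by omega
        rw [hd, vA]
        have hterm1 : c ^ (K+1) * ((r/(r+1)) * vA (r/(r+1)) K (x.1 - x.2 - 1 + 2))
            ≤ pA β r x * nxt β r K (upS x) := by
          have hih := (ih (upS x) (by simp [upS]; omega) (by simp [upS]; omega)
            (by simp [upS]; omega) (by simp [upS]; omega)).1 (by simp [upS]; omega)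
          have hgap2 : (upS x).1 - (upS x).2 = x.1 - x.2 - 1 + 2 := by
            simp [upS]; omega
          rw [hgap2] at hih
          have hvnn := vA_nonneg hp0 hp1 K (x.1 - x.2 - 1 + 2)
          calc c ^ (K+1) * ((r/(r+1)) * vA (r/(r+1)) K (x.1 - x.2 - 1 + 2))
              = (c * (r/(r+1))) * (c ^ K * vA (r/(r+1)) K (x.1 - x.2 - 1 + 2)) := by ring
            _ ≤ pA β r x * nxt β r K (upS x) :=
                mul_le_mul hsb.1 hih (by positivity) hA
        have hterm2 : c ^ (K+1) * ((1 - r/(r+1)) * vA (r/(r+1)) K (x.1 - x.2 - 1))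
            ≤ pB β r x * (if (dnS x).1 = (dnS x).2 then 1 else nxt β r K (dnS x)) := by
          have h1mp : 1 - r/(r+1) = 1/(r+1) := by field_simp; ring
          rw [h1mp]
          rcases Nat.eq_or_lt_of_le (by omega : x.2 + 1 ≤ x.1) with he | hlt
          · have htie : (dnS x).1 = (dnS x).2 := by simp [dnS]; omega
            rw [if_pos htie]
            have hd0 : x.1 - x.2 - 1 = 0 := by omega
            rw [hd0]
            have hv0 : vA (r/(r+1)) K 0 = 1 := by cases K <;> rfl
            rw [hv0, mul_one]
            calc c ^ (K+1) * (1/(r+1)) = c ^ K * (c * (1/(r+1))) := by ring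
              _ ≤ 1 * (c * (1/(r+1))) :=
                  mul_le_mul_of_nonneg_right hle1 (by positivity)
              _ = c * (1/(r+1)) := one_mul _
              _ ≤ pB β r x := hsb.2
              _ = pB β r x * 1 := (mul_one _).symm
          · have hnottie : ¬ (dnS x).1 = (dnS x).2 := by simp [dnS]; omega
            rw [if_neg hnottie]
            have hih := (ih (dnS x) (by simp [dnS]; omega) (by simp [dnS]; omega)
              (by simp [dnS]; omega) (by simp [dnS]; omega)).1 (by simp [dnS]; omega)
            have hgap2 : (dnS x).1 - (dnS x).2 = x.1 - x.2 - 1 := by simp [dnS]; omega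
            rw [hgap2] at hih
            have hvnn := vA_nonneg hp0 hp1 K (x.1 - x.2 - 1)
            calc c ^ (K+1) * ((1/(r+1)) * vA (r/(r+1)) K (x.1 - x.2 - 1))
                = (c * (1/(r+1))) * (c ^ K * vA (r/(r+1)) K (x.1 - x.2 - 1)) := by ring
              _ ≤ pB β r x * nxt β r K (dnS x) :=
                  mul_le_mul hsb.2 hih (by positivity) hB
        calc c ^ (K+1) * (r/(r+1) * vA (r/(r+1)) K (x.1 - x.2 - 1 + 2)
              + (1 - r/(r+1)) * vA (r/(r+1)) K (x.1 - x.2 - 1))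
            = c ^ (K+1) * ((r/(r+1)) * vA (r/(r+1)) K (x.1 - x.2 - 1 + 2))
              + c ^ (K+1) * ((1 - r/(r+1)) * vA (r/(r+1)) K (x.1 - x.2 - 1)) := by ring
          _ ≤ pA β r x * nxt β r K (upS x)
              + pB β r x * (if (dnS x).1 = (dnS x).2 then 1 else nxt β r K (dnS x)) :=
              add_le_add hterm1 hterm2
      · -- below the diagonal
        have hnottiedn : ¬ (dnS x).1 = (dnS x).2 := by simp [dnS]; omega
        rw [nxt, if_neg hnottiedn]
        have hd : x.2 - x.1 = (x.2 - x.1 - 1) + 1 := by omega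
        rw [hd, vA]
        have hterm1 : c ^ (K+1) * ((1/(r+1)) * vA (1/(r+1)) K (x.2 - x.1 - 1 + 2))
            ≤ pB β r x * nxt β r K (dnS x) := by
          have hih := (ih (dnS x) (by simp [dnS]; omega) (by simp [dnS]; omega)
            (by simp [dnS]; omega) (by simp [dnS]; omega)).2 (by simp [dnS]; omega)
          have hgap2 : (dnS x).2 - (dnS x).1 = x.2 - x.1 - 1 + 2 := by simp [dnS]; omega
          rw [hgap2] at hih
          have hvnn := vA_nonneg hq0 hq1 K (x.2 - x.1 - 1 + 2)
          calc c ^ (K+1) * ((1/(r+1)) * vA (1/(r+1)) K (x.2 - x.1 - 1 + 2))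
              = (c * (1/(r+1))) * (c ^ K * vA (1/(r+1)) K (x.2 - x.1 - 1 + 2)) := by ring
            _ ≤ pB β r x * nxt β r K (dnS x) :=
                mul_le_mul hsb.2 hih (by positivity) hB
        have hterm2 : c ^ (K+1) * ((1 - 1/(r+1)) * vA (1/(r+1)) K (x.2 - x.1 - 1))
            ≤ pA β r x * (if (upS x).1 = (upS x).2 then 1 else nxt β r K (upS x)) := by
          have h1mp : 1 - 1/(r+1) = r/(r+1) := by field_simp; ring
          rw [h1mp]
          rcases Nat.eq_or_lt_of_le (by omega : x.1 + 1 ≤ x.2) with he | hlt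
          · have htie : (upS x).1 = (upS x).2 := by simp [upS]; omega
            rw [if_pos htie]
            have hd0 : x.2 - x.1 - 1 = 0 := by omega
            rw [hd0]
            have hv0 : vA (1/(r+1)) K 0 = 1 := by cases K <;> rfl
            rw [hv0, mul_one]
            calc c ^ (K+1) * (r/(r+1)) = c ^ K * (c * (r/(r+1))) := by ring
              _ ≤ 1 * (c * (r/(r+1))) :=
                  mul_le_mul_of_nonneg_right hle1 (by positivity)
              _ = c * (r/(r+1)) := one_mul _
              _ ≤ pA β r x := hsb.1
              _ = pA β r x * 1 := (mul_one _).symm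
          · have hnottie : ¬ (upS x).1 = (upS x).2 := by simp [upS]; omega
            rw [if_neg hnottie]
            have hih := (ih (upS x) (by simp [upS]; omega) (by simp [upS]; omega)
              (by simp [upS]; omega) (by simp [upS]; omega)).2 (by simp [upS]; omega)
            have hgap2 : (upS x).2 - (upS x).1 = x.2 - x.1 - 1 := by simp [upS]; omega
            rw [hgap2] at hih
            have hvnn := vA_nonneg hq0 hq1 K (x.2 - x.1 - 1)
            calc c ^ (K+1) * ((r/(r+1)) * vA (1/(r+1)) K (x.2 - x.1 - 1))
                = (c * (r/(r+1))) * (c ^ K * vA (1/(r+1)) K (x.2 - x.1 - 1)) := by ring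
              _ ≤ pA β r x * nxt β r K (upS x) :=
                  mul_le_mul hsb.1 hih (by positivity) hA
        calc c ^ (K+1) * (1/(r+1) * vA (1/(r+1)) K (x.2 - x.1 - 1 + 2)
              + (1 - 1/(r+1)) * vA (1/(r+1)) K (x.2 - x.1 - 1))
            = c ^ (K+1) * ((1 - 1/(r+1)) * vA (1/(r+1)) K (x.2 - x.1 - 1))
              + c ^ (K+1) * ((1/(r+1)) * vA (1/(r+1)) K (x.2 - x.1 - 1 + 2)) := by ring
          _ ≤ pA β r x * (if (upS x).1 = (upS x).2 then 1 else nxt β r K (upS x))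
              + pB β r x * nxt β r K (dnS x) :=
              add_le_add hterm2 hterm1

end nxts
end Urn

namespace Urn

section tielb
variable {β r : ℝ} (hβ : 0 ≤ β) (hr : 1 < r)
include hβ hr

lemma nxt_tie_ge (z M : ℕ) (hz : 1 ≤ z) (c : ℝ)
    (hcdef : c = ((z:ℝ)/((z:ℝ)+((M:ℝ)+1)))^β) :
    c ^ (M+1) * ((r/(r+1)) * vA (r/(r+1)) M 1 + (1/(r+1)) * vA (1/(r+1)) M 1)
      ≤ nxt β r (M+1) (z, z) := by
  have hrp1 : (0:ℝ) < r + 1 := by linarith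
  have hp0 : (0:ℝ) < r/(r+1) := by positivity
  have hp1 : r/(r+1) < 1 := by rw [div_lt_one hrp1]; linarith
  have hq0 : (0:ℝ) < 1/(r+1) := by positivity
  have hq1 : 1/(r+1) < 1 := by rw [div_lt_one hrp1]; linarith
  have hcdef' : c = ((z:ℝ)/((z:ℝ)+((M+1 : ℕ):ℝ)))^β := by
    rw [hcdef]; norm_num
  have hcomp := nxt_ge_vA hβ hr z (M+1) hz c hcdef'
  have hc0 : 0 < c := by
    rw [hcdef]
    apply Real.rpow_pos_of_pos
    have : (0:ℝ) < (z:ℝ) := by exact_mod_cast hz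
    positivity
  have hc1 : c ≤ 1 := by
    rw [hcdef]
    have hz0 : (0:ℝ) < (z:ℝ) := by exact_mod_cast hz
    calc ((z:ℝ)/((z:ℝ)+((M:ℝ)+1)))^β ≤ (1:ℝ)^β := by
          apply Real.rpow_le_rpow (by positivity) _ hβ
          rw [div_le_one (by positivity)]
          have hM0 : (0:ℝ) ≤ (M:ℝ) := Nat.cast_nonneg M
          linarith
      _ = 1 := Real.one_rpow _
  have hup := (hcomp M (z+1, z) (by omega) (by omega) (by omega) (by omega)).1 (by omega)
  have hdn := (hcomp M (z, z+1) (by omega) (by omega) (by omega) (by omega)).2 (by omega)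
  simp only [show z + 1 - z = 1 from by omega] at hup hdn
  have hnt1 : ¬ (upS (z,z)).1 = (upS (z,z)).2 := by simp [upS]
  have hnt2 : ¬ (dnS (z,z)).1 = (dnS (z,z)).2 := by simp [dnS]
  rw [nxt, if_neg hnt1, if_neg hnt2]
  have hA : pA β r (z,z) = r/(r+1) := pA_at_tie hβ hr hz
  have hB : pB β r (z,z) = 1/(r+1) := pB_at_tie hβ hr hz
  have hupeq : upS (z,z) = ((z+1 : ℕ), z) := rfl
  have hdneq : dnS (z,z) = (z, (z+1 : ℕ)) := rfl
  rw [hA, hB, hupeq, hdneq]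
  have hcM : c ^ (M+1) ≤ c ^ M := pow_le_pow_of_le_one hc0.le hc1 (by omega)
  have hv1 := vA_nonneg hp0 hp1 M 1
  have hv2 := vA_nonneg hq0 hq1 M 1
  have hcMp : (0:ℝ) < c ^ M := pow_pos hc0 M
  calc c ^ (M+1) * ((r/(r+1)) * vA (r/(r+1)) M 1 + (1/(r+1)) * vA (1/(r+1)) M 1)
      = (r/(r+1)) * (c ^ (M+1) * vA (r/(r+1)) M 1)
        + (1/(r+1)) * (c ^ (M+1) * vA (1/(r+1)) M 1) := by ring
    _ ≤ (r/(r+1)) * (c ^ M * vA (r/(r+1)) M 1)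
        + (1/(r+1)) * (c ^ M * vA (1/(r+1)) M 1) := by
        apply add_le_add
        · apply mul_le_mul_of_nonneg_left _ hp0.le
          exact mul_le_mul_of_nonneg_right hcM hv1
        · apply mul_le_mul_of_nonneg_left _ hq0.le
          exact mul_le_mul_of_nonneg_right hcM hv2
    _ ≤ (r/(r+1)) * nxt β r M (z+1, z) + (1/(r+1)) * nxt β r M (z, z+1) := by
        apply add_le_add
        · exact mul_le_mul_of_nonneg_left hup hp0.le
        · exact mul_le_mul_of_nonneg_left hdn hq0.le

/-- for every `ρ < q` there are `M` and `z₀` such that from any tie at height `≥ z₀`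
the truncated next-tie mass within `M` steps is at least `ρ`. -/
lemma exists_nxt_lb {ρ : ℝ} (hρ : ρ < qf r) :
    ∃ (M z₀ : ℕ), 1 ≤ z₀ ∧ ∀ z, z₀ ≤ z → ρ ≤ nxt β r M (z, z) := by
  rcases le_or_gt ρ 0 with hρ0 | hρ0
  · exact ⟨0, 1, le_refl _, fun z hz => by
      rw [show nxt β r 0 (z,z) = 0 from rfl]; exact hρ0⟩
  have hrp1 : (0:ℝ) < r + 1 := by linarith
  have hp0 : (0:ℝ) < r/(r+1) := by positivity
  have hp1 : r/(r+1) < 1 := by rw [div_lt_one hrp1]; linarith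
  have hq0 : (0:ℝ) < 1/(r+1) := by positivity
  have hq1 : 1/(r+1) < 1 := by rw [div_lt_one hrp1]; linarith
  set p : ℝ := r/(r+1) with hp
  set p' : ℝ := 1/(r+1) with hp'
  have hpp' : p + p' = 1 := by rw [hp, hp']; field_simp
  set δ : ℝ := (qf r - ρ)/2 with hδ
  have hδ0 : 0 < δ := by rw [hδ]; linarith
  -- limits of the two coin iterations
  have hA : Filter.Tendsto (iterSq (1 - p) p) Filter.atTop (nhds (min 1 ((1-p)/p))) :=
    iterSq_tendsto (by rw [hp]; rw [sub_pos, div_lt_one hrp1]; linarith) hp0 (by ring)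
  have hB : Filter.Tendsto (iterSq (1 - p') p') Filter.atTop (nhds (min 1 ((1-p')/p'))) :=
    iterSq_tendsto (by rw [hp']; rw [sub_pos, div_lt_one hrp1]; linarith) hq0 (by ring)
  have hminA : min 1 ((1-p)/p) = 1/r := by
    have h1 : (1-p)/p = 1/r := by
      rw [hp]
      have ha : (0:ℝ) < r := by linarith
      have hb : (0:ℝ) < r + 1 := by linarith
      field_simp; ring
    rw [h1]
    apply min_eq_right
    rw [div_le_one (by linarith)]; linarith
  have hminB : min 1 ((1-p')/p') = 1 := by
    apply min_eq_left
    have h1 : (1-p')/p' = r := by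
      rw [hp']
      have hb : (0:ℝ) < r + 1 := by linarith
      field_simp; ring
    rw [h1]; linarith
  rw [hminA] at hA
  rw [hminB] at hB
  -- choose k so that both iterates are δ-close
  have hevA : ∀ᶠ k in Filter.atTop, 1/r - δ < iterSq (1 - p) p k :=
    (tendsto_order.mp hA).1 _ (by linarith)
  have hevB : ∀ᶠ k in Filter.atTop, 1 - δ < iterSq (1 - p') p' k :=
    (tendsto_order.mp hB).1 _ (by linarith)
  obtain ⟨k, hk⟩ := (hevA.and hevB).exists
  set M := Mseq k with hM
  have hvA1 : 1/r - δ ≤ vA p M 1 :=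
    le_trans hk.1.le (vA_Mseq_ge_iterSq hp0 hp1 k)
  have hvB1 : 1 - δ ≤ vA p' M 1 :=
    le_trans hk.2.le (vA_Mseq_ge_iterSq hq0 hq1 k)
  -- the bracket is at least q - δ
  have hbr : qf r - δ ≤ p * vA p M 1 + p' * vA p' M 1 := by
    have h1 : p * (1/r - δ) + p' * (1 - δ) = qf r - δ := by
      rw [hp, hp', qf]
      have ha : (0:ℝ) < r := by linarith
      have hb : (0:ℝ) < r + 1 := by linarith
      field_simp
      ring
    calc qf r - δ = p * (1/r - δ) + p' * (1 - δ) := h1.symm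
      _ ≤ p * vA p M 1 + p' * vA p' M 1 := by
          apply add_le_add
          · exact mul_le_mul_of_nonneg_left hvA1 hp0.le
          · exact mul_le_mul_of_nonneg_left hvB1 hq0.le
  have hqδ : 0 < qf r - δ := by
    have := qf_pos (r := r) hr
    rw [hδ]; linarith
  -- choose z₀ so that c^(M+1) ≥ ρ/(q-δ)
  set θ : ℝ := ρ / (qf r - δ) with hθ
  have hθ1 : θ < 1 := by
    rw [hθ, div_lt_one hqδ]
    rw [hδ]; linarith
  have htendc : Filter.Tendsto
      (fun z : ℕ => (((z:ℝ)/((z:ℝ)+((M:ℝ)+1)))^β) ^ (M+1)) Filter.atTop (nhds 1) := by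
    have h1 : Filter.Tendsto (fun z : ℕ => (z:ℝ)/((z:ℝ)+((M:ℝ)+1)))
        Filter.atTop (nhds 1) := by
      have h2 : Filter.Tendsto (fun z : ℕ => ((M:ℝ)+1)/((z:ℝ)+((M:ℝ)+1)))
          Filter.atTop (nhds 0) := by
        apply Filter.Tendsto.div_atTop tendsto_const_nhds
        apply Filter.tendsto_atTop_add_const_right
        exact tendsto_natCast_atTop_atTop
      have h3 := Filter.Tendsto.const_sub (1:ℝ) h2
      rw [sub_zero] at h3
      apply h3.congr
      intro z
      have hz0 : (0:ℝ) < (z:ℝ)+((M:ℝ)+1) := by positivity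
      field_simp; ring
    have h4 : Filter.Tendsto (fun z : ℕ => ((z:ℝ)/((z:ℝ)+((M:ℝ)+1)))^β)
        Filter.atTop (nhds 1) := by
      have hcont : ContinuousAt (fun x : ℝ => x ^ β) 1 :=
        Real.continuousAt_rpow_const 1 β (Or.inl one_ne_zero)
      have := hcont.tendsto.comp h1
      simpa [Real.one_rpow, Function.comp_def] using this
    have h5 := Filter.Tendsto.pow h4 (M+1)
    simpa using h5
  have hev : ∀ᶠ z : ℕ in Filter.atTop,
      θ < (((z:ℝ)/((z:ℝ)+((M:ℝ)+1)))^β) ^ (M+1) :=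
    (tendsto_order.mp htendc).1 _ hθ1
  obtain ⟨z₀, hz₀⟩ := Filter.eventually_atTop.mp hev
  refine ⟨M + 1, max z₀ 1, le_max_right _ _, ?_⟩
  intro z hz
  have hz1 : 1 ≤ z := le_trans (le_max_right _ _) hz
  have hzz₀ : z₀ ≤ z := le_trans (le_max_left _ _) hz
  set c : ℝ := ((z:ℝ)/((z:ℝ)+((M:ℝ)+1)))^β with hcdef
  have hkey := nxt_tie_ge hβ hr z M hz1 c hcdef
  have hcθ : θ ≤ c ^ (M+1) := (hz₀ z hzz₀).le
  have hc0 : 0 < c := by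
    rw [hcdef]
    apply Real.rpow_pos_of_pos
    have : (0:ℝ) < (z:ℝ) := by exact_mod_cast hz1
    positivity
  calc ρ = θ * (qf r - δ) := by
        rw [hθ, div_mul_cancel₀ _ (ne_of_gt hqδ)]
    _ ≤ c ^ (M+1) * (p * vA p M 1 + p' * vA p' M 1) := by
        apply mul_le_mul hcθ hbr hqδ.le (by positivity)
    _ ≤ nxt β r (M+1) (z, z) := hkey

/-- lower-bounding `hitSum` at a tie by `nxt · C` -/
lemma hitSum_ge_nxt_mul (z₀ : ℕ) (hz₀ : 1 ≤ z₀) (s n : ℕ) (C : ℝ) (hC : 0 ≤ C)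
    (hhit : ∀ z, z₀ ≤ z → C ≤ hitSum β r s (z, z) n) :
    ∀ (K : ℕ) (x : ℕ × ℕ), z₀ ≤ x.1 → z₀ ≤ x.2 →
      nxt β r K x * C ≤ hitSum β r (K + s) x (n+1) := by
  intro K
  induction K with
  | zero =>
      intro x h1 h2
      rw [show nxt β r 0 x = 0 from rfl, zero_mul]
      exact hitSum_nonneg hβ hr _ _ _ ⟨le_trans hz₀ h1, le_trans hz₀ h2⟩
  | succ K ih =>
      intro x h1 h2
      have hx : ok x := ⟨le_trans hz₀ h1, le_trans hz₀ h2⟩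
      rw [show K + 1 + s = (K + s) + 1 from by omega, hitSum_succ, nxt]
      have hbu : (if (upS x).1 = (upS x).2 then 1 else nxt β r K (upS x)) * C
          ≤ hitSum β r (K + s) (upS x) (n + 1 - tind (upS x)) := by
        split
        · next h =>
            rw [one_mul]
            have ht : tind (upS x) = 1 := by simp [tind, h]
            rw [ht, Nat.add_sub_cancel]
            have hupeq : upS x = (x.2, x.2) := by
              have : x.1 + 1 = x.2 := h
              simp [upS, Prod.ext_iff, this]
            rw [hupeq]
            exact le_trans (hhit x.2 h2)
              (hitSum_le_of_le hβ hr (by omega) _ _ ⟨le_trans hz₀ h2, le_trans hz₀ h2⟩)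
        · next h =>
            have ht : tind (upS x) = 0 := by simp [tind, h]
            rw [ht, Nat.sub_zero]
            exact ih (upS x) (by simp [upS]; omega) (by simp [upS]; exact h2)
      have hbd : (if (dnS x).1 = (dnS x).2 then 1 else nxt β r K (dnS x)) * C
          ≤ hitSum β r (K + s) (dnS x) (n + 1 - tind (dnS x)) := by
        split
        · next h =>
            rw [one_mul]
            have ht : tind (dnS x) = 1 := by simp [tind, h]
            rw [ht, Nat.add_sub_cancel]
            have hdneq : dnS x = (x.1, x.1) := by
              have : x.1 = x.2 + 1 := h
              simp [dnS, Prod.ext_iff, this]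
            rw [hdneq]
            exact le_trans (hhit x.1 h1)
              (hitSum_le_of_le hβ hr (by omega) _ _ ⟨le_trans hz₀ h1, le_trans hz₀ h1⟩)
        · next h =>
            have ht : tind (dnS x) = 0 := by simp [tind, h]
            rw [ht, Nat.sub_zero]
            exact ih (dnS x) (by simp [dnS]; exact h1) (by simp [dnS]; omega)
      have hA := (pA_pos hβ hr hx).le
      have hB := (pB_pos hβ hr hx).le
      calc (pA β r x * (if (upS x).1 = (upS x).2 then 1 else nxt β r K (upS x))
            + pB β r x * (if (dnS x).1 = (dnS x).2 then 1 else nxt β r K (dnS x))) * C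
          = pA β r x * ((if (upS x).1 = (upS x).2 then 1 else nxt β r K (upS x)) * C)
            + pB β r x * ((if (dnS x).1 = (dnS x).2 then 1 else nxt β r K (dnS x)) * C) := by
            ring
        _ ≤ pA β r x * hitSum β r (K + s) (upS x) (n + 1 - tind (upS x))
            + pB β r x * hitSum β r (K + s) (dnS x) (n + 1 - tind (dnS x)) := by
            apply add_le_add
            · exact mul_le_mul_of_nonneg_left hbu hA
            · exact mul_le_mul_of_nonneg_left hbd hB

/-- the chain bound : `n` ties each cost at least a factor `ρ` -/
lemma hitSum_chain (z₀ : ℕ) (hz₀ : 1 ≤ z₀) (M : ℕ) (ρ : ℝ) (hρ0 : 0 ≤ ρ)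
    (hnxt : ∀ z, z₀ ≤ z → ρ ≤ nxt β r M (z, z)) :
    ∀ (n : ℕ) (z : ℕ), z₀ ≤ z → ρ ^ n ≤ hitSum β r (n * M) (z, z) n := by
  intro n
  induction n with
  | zero => intro z hz; simp [hitSum_zero]
  | succ n ih =>
      intro z hz
      have hok : ok ((z : ℕ), z) := ⟨le_trans hz₀ hz, le_trans hz₀ hz⟩
      have h1 : ρ ^ (n+1) ≤ nxt β r M (z, z) * ρ ^ n := by
        rw [pow_succ, mul_comm]
        exact mul_le_mul_of_nonneg_right (hnxt z hz) (pow_nonneg hρ0 n)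
      refine le_trans h1 ?_
      have h2 := hitSum_ge_nxt_mul hβ hr z₀ hz₀ (n*M) n (ρ^n) (pow_nonneg hρ0 n)
        (fun z' hz' => ih z' hz') M (z, z) hz hz
      rwa [show M + n*M = (n+1)*M from by ring] at h2

end tielb
end Urn

namespace Urn

def allBool : ℕ → Finset (List Bool)
  | 0 => {[]}
  | s + 1 => ((allBool s).image (true :: ·)) ∪ ((allBool s).image (false :: ·))

lemma mem_allBool (s : ℕ) (l : List Bool) : l ∈ allBool s ↔ l.length = s := by
  induction s generalizing l with
  | zero => simp [allBool, List.length_eq_zero_iff]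
  | succ s ih =>
      simp only [allBool, Finset.mem_union, Finset.mem_image]
      constructor
      · rintro (⟨l', hl', rfl⟩ | ⟨l', hl', rfl⟩) <;> simp [ih l' |>.mp hl']
      · intro hl
        cases l with
        | nil => simp at hl
        | cons c l' =>
            have : l'.length = s := by simpa using hl
            cases c
            · exact Or.inr ⟨l', (ih l').mpr this, rfl⟩
            · exact Or.inl ⟨l', (ih l').mpr this, rfl⟩

lemma sum_allBool_succ (s : ℕ) (F : List Bool → ℝ) :
    ∑ l ∈ allBool (s+1), F l
      = (∑ l ∈ allBool s, F (true :: l)) + (∑ l ∈ allBool s, F (false :: l)) := by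
  rw [show allBool (s+1)
      = ((allBool s).image (true :: ·)) ∪ ((allBool s).image (false :: ·)) from rfl]
  rw [Finset.sum_union]
  · congr 1
    · rw [Finset.sum_image (by intro a _ b _ h; simpa using h)]
    · rw [Finset.sum_image (by intro a _ b _ h; simpa using h)]
  · rw [Finset.disjoint_left]
    intro a ha hb
    simp only [Finset.mem_image] at ha hb
    obtain ⟨l, _, rfl⟩ := ha
    obtain ⟨l', _, h⟩ := hb
    simp at h

section sums
variable {β r : ℝ} (hβ : 0 ≤ β) (hr : 1 < r)
include hβ hr

lemma sum_wtL (s : ℕ) (x : ℕ × ℕ) (hx : ok x) :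
    ∑ l ∈ allBool s, wtL β r x l = 1 := by
  induction s generalizing x with
  | zero => simp [allBool, wtL]
  | succ s ih =>
      rw [sum_allBool_succ]
      have h1 : ∀ l, wtL β r x (true :: l) = pA β r x * wtL β r (upS x) l := by
        intro l; simp [wtL, pC, stp]
      have h2 : ∀ l, wtL β r x (false :: l) = pB β r x * wtL β r (dnS x) l := by
        intro l; simp [wtL, pC, stp]
      simp only [h1, h2, ← Finset.mul_sum]
      rw [ih (upS x) (ok_upS hx), ih (dnS x) (ok_dnS hx), mul_one, mul_one]
      exact pA_add_pB hβ hr hx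

lemma hitSum_eq_sum (s : ℕ) (x : ℕ × ℕ) (m : ℕ) (hx : ok x) :
    hitSum β r s x m
      = ∑ l ∈ allBool s, wtL β r x l * (if m ≤ tiesL x l then 1 else 0) := by
  induction s generalizing x m with
  | zero =>
      cases m with
      | zero => simp [allBool, wtL, tiesL, hitSum_zero]
      | succ m => simp [allBool, wtL, tiesL, hitSum]
  | succ s ih =>
      cases m with
      | zero =>
          rw [hitSum_zero]
          have : ∀ l ∈ allBool (s+1), wtL β r x l * (if 0 ≤ tiesL x l then 1 else 0)
              = wtL β r x l := by
            intro l _; simp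
          rw [Finset.sum_congr rfl this, sum_wtL hβ hr (s+1) x hx]
      | succ m =>
          rw [hitSum_succ, sum_allBool_succ]
          have h1 : ∀ l, wtL β r x (true :: l) * (if m+1 ≤ tiesL x (true :: l) then 1 else 0)
              = pA β r x * (wtL β r (upS x) l
                * (if m + 1 - tind (upS x) ≤ tiesL (upS x) l then 1 else 0)) := by
            intro l
            have e1 : wtL β r x (true :: l) = pA β r x * wtL β r (upS x) l := by
              simp [wtL, pC, stp]
            have e2 : tiesL x (true :: l) = tind (upS x) + tiesL (upS x) l := by
              simp [tiesL, stp]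
            have e3 : (m+1 ≤ tind (upS x) + tiesL (upS x) l)
                ↔ (m + 1 - tind (upS x) ≤ tiesL (upS x) l) := by omega
            rw [e1, e2]
            by_cases h : m + 1 - tind (upS x) ≤ tiesL (upS x) l
            · rw [if_pos (e3.mpr h), if_pos h]; ring
            · rw [if_neg (fun hc => h (e3.mp hc)), if_neg h]; ring
          have h2 : ∀ l, wtL β r x (false :: l) * (if m+1 ≤ tiesL x (false :: l) then 1 else 0)
              = pB β r x * (wtL β r (dnS x) l
                * (if m + 1 - tind (dnS x) ≤ tiesL (dnS x) l then 1 else 0)) := by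
            intro l
            have e1 : wtL β r x (false :: l) = pB β r x * wtL β r (dnS x) l := by
              simp [wtL, pC, stp]
            have e2 : tiesL x (false :: l) = tind (dnS x) + tiesL (dnS x) l := by
              simp [tiesL, stp]
            have e3 : (m+1 ≤ tind (dnS x) + tiesL (dnS x) l)
                ↔ (m + 1 - tind (dnS x) ≤ tiesL (dnS x) l) := by omega
            rw [e1, e2]
            by_cases h : m + 1 - tind (dnS x) ≤ tiesL (dnS x) l
            · rw [if_pos (e3.mpr h), if_pos h]; ring
            · rw [if_neg (fun hc => h (e3.mp hc)), if_neg h]; ring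
          simp only [h1, h2, ← Finset.mul_sum]
          rw [← ih (upS x) _ (ok_upS hx), ← ih (dnS x) _ (ok_dnS hx)]

end sums
end Urn

namespace Urn
open MeasureTheory

section bridge
variable (x₀ : ℕ × ℕ)

/-- the trajectory determined by a step list -/
def pOf (l : List Bool) : ℕ → ℕ × ℕ := fun t => runL x₀ (l.take t)

lemma pOf_zero (l : List Bool) : pOf x₀ l 0 = x₀ := rfl

lemma pOf_length (l : List Bool) : pOf x₀ l l.length = runL x₀ l := by
  rw [pOf, List.take_length]

lemma pOf_append_le (l : List Bool) (c : Bool) {t : ℕ} (ht : t ≤ l.length) :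
    pOf x₀ (l ++ [c]) t = pOf x₀ l t := by
  rw [pOf, pOf, List.take_append_of_le_length ht]

lemma pOf_append_last (l : List Bool) (c : Bool) :
    pOf x₀ (l ++ [c]) (l.length + 1) = stp c (runL x₀ l) := by
  rw [pOf]
  have h1 : (l ++ [c]).take (l.length + 1) = l ++ [c] :=
    List.take_of_length_le (by simp)
  rw [h1, runL_append]
  rfl

lemma pOf_cons (c : Bool) (l : List Bool) (j : ℕ) :
    pOf x₀ (c :: l) (j + 1) = pOf (stp c x₀) l j := by
  rw [pOf, pOf, List.take_succ_cons]
  rfl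

lemma urnStep_stp (β r : ℝ) (y : ℕ × ℕ) (c : Bool) :
    urnStep β r y (stp c y) = pC β r c y := by
  cases c
  · rfl
  · rfl

lemma prod_urnStep (β r : ℝ) (l : List Bool) :
    ∏ t ∈ Finset.range l.length, urnStep β r (pOf x₀ l t) (pOf x₀ l (t + 1))
      = wtL β r x₀ l := by
  induction l using List.reverseRecOn with
  | nil => simp [wtL]
  | append_singleton l c ih =>
      rw [show (l ++ [c]).length = l.length + 1 from by simp, Finset.prod_range_succ]
      have h1 : ∀ t ∈ Finset.range l.length,
          urnStep β r (pOf x₀ (l ++ [c]) t) (pOf x₀ (l ++ [c]) (t + 1))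
            = urnStep β r (pOf x₀ l t) (pOf x₀ l (t + 1)) := by
        intro t ht
        simp only [Finset.mem_range] at ht
        rw [pOf_append_le x₀ l c (by omega), pOf_append_le x₀ l c (by omega)]
      rw [Finset.prod_congr rfl h1, ih, pOf_append_le x₀ l c (le_refl _), pOf_length,
        pOf_append_last, wtL_append]
      have h2 : wtL β r (runL x₀ l) [c] = pC β r c (runL x₀ l) := by
        cases c <;> simp [wtL, pC]
      rw [h2, urnStep_stp]

lemma count_ties (l : List Bool) :
    tind x₀ + tiesL x₀ l
      = ∑ j ∈ Finset.range (l.length + 1),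
          (if (pOf x₀ l j).1 = (pOf x₀ l j).2 then 1 else 0) := by
  induction l using List.reverseRecOn with
  | nil => simp [tiesL, tind, pOf, runL]
  | append_singleton l c ih =>
      rw [show (l ++ [c]).length = l.length + 1 from by simp, Finset.sum_range_succ]
      have h1 : ∀ j ∈ Finset.range (l.length + 1),
          (if (pOf x₀ (l ++ [c]) j).1 = (pOf x₀ (l ++ [c]) j).2 then 1 else 0)
            = (if (pOf x₀ l j).1 = (pOf x₀ l j).2 then (1:ℕ) else 0) := by
        intro j hj
        simp only [Finset.mem_range] at hj
        rw [pOf_append_le x₀ l c (by omega)]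
      rw [Finset.sum_congr rfl h1, ← ih, pOf_append_last]
      have h2 : tiesL x₀ (l ++ [c]) = tiesL x₀ l + tind (stp c (runL x₀ l)) := by
        rw [tiesL_append]
        cases c <;> simp [tiesL, tind]
      rw [h2, show tind (stp c (runL x₀ l))
        = (if (stp c (runL x₀ l)).1 = (stp c (runL x₀ l)).2 then 1 else 0) from rfl]
      omega

/-- every locally valid trajectory follows some step list -/
lemma exists_list_of_valid (ω : ℕ → ℕ × ℕ) (h0 : ω 0 = x₀) :
    ∀ s : ℕ, (∀ t, t < s → ω (t+1) = upS (ω t) ∨ ω (t+1) = dnS (ω t)) →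
    ∃ l : List Bool, l.length = s ∧ ∀ t ≤ s, ω t = pOf x₀ l t := by
  intro s
  induction s with
  | zero =>
      intro _
      refine ⟨[], rfl, ?_⟩
      intro t ht
      have : t = 0 := by omega
      subst this
      simpa [pOf, runL] using h0
  | succ s ih =>
      intro hv
      obtain ⟨l, hlen, hl⟩ := ih (fun t ht => hv t (by omega))
      have hend : runL x₀ l = ω s := by
        rw [hl s (le_refl s), ← hlen, pOf_length]
      have hstep : ∃ c : Bool, ω (s+1) = stp c (ω s) := by
        rcases hv s (by omega) with hc | hc
        · exact ⟨true, by simpa [stp] using hc⟩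
        · exact ⟨false, by simpa [stp] using hc⟩
      obtain ⟨c, hc⟩ := hstep
      refine ⟨l ++ [c], by simp [hlen], ?_⟩
      intro t ht
      rcases Nat.lt_or_ge t (s+1) with h | h
      · rw [pOf_append_le x₀ l c (by omega)]
        exact hl t (by omega)
      · have ht1 : t = s + 1 := by omega
        subst ht1
        have h3 : s + 1 = l.length + 1 := by omega
        rw [h3, pOf_append_last, hend, ← hc, hlen]

/-- distinct same-length step lists produce different trajectories -/
lemma pOf_ne : ∀ (x : ℕ × ℕ) {l l' : List Bool}, l.length = l'.length → l ≠ l' →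
    ∃ j, j ≤ l.length ∧ pOf x l j ≠ pOf x l' j := by
  intro x l
  induction l generalizing x with
  | nil =>
      intro l' hlen hne
      cases l' with
      | nil => exact absurd rfl hne
      | cons c t => simp at hlen
  | cons c t ih =>
      intro l' hlen hne
      cases l' with
      | nil => simp at hlen
      | cons c' t' =>
          by_cases hcc : c = c'
          · subst hcc
            have ht : t ≠ t' := by
              intro h; exact hne (by rw [h])
            obtain ⟨j, hj, hne'⟩ := ih (stp c x) (by simpa using hlen) ht
            refine ⟨j + 1, by simp; omega, ?_⟩
            rw [pOf_cons, pOf_cons]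
            exact hne'
          · refine ⟨1, by simp, ?_⟩
            have e1 : pOf x (c :: t) 1 = stp c x := by
              rw [show (1:ℕ) = 0 + 1 from rfl, pOf_cons]; rfl
            have e2 : pOf x (c' :: t') 1 = stp c' x := by
              rw [show (1:ℕ) = 0 + 1 from rfl, pOf_cons]; rfl
            rw [e1, e2]
            cases c <;> cases c' <;> simp_all [stp, upS, dnS, Prod.ext_iff]

/-- the cylinder set of a step list -/
def cylSet (l : List Bool) : Set (ℕ → ℕ × ℕ) :=
  {ω | ∀ t ≤ l.length, ω t = pOf x₀ l t}

lemma measurable_cylSet (l : List Bool) : MeasurableSet (cylSet x₀ l) := by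
  have h1 : cylSet x₀ l = ⋂ (t : ℕ) (_ : t ≤ l.length),
      (fun ω : ℕ → ℕ × ℕ => ω t) ⁻¹' {pOf x₀ l t} := by
    ext ω; simp [cylSet]
  rw [h1]
  exact MeasurableSet.biInter (Set.to_countable _)
    (fun t _ => (measurable_pi_apply t) (measurableSet_singleton _))

lemma cylSet_disjoint {l l' : List Bool} (hlen : l.length = l'.length) (hne : l ≠ l') :
    Disjoint (cylSet x₀ l) (cylSet x₀ l') := by
  rw [Set.disjoint_left]
  intro ω hω hω'
  obtain ⟨j, hj, hne'⟩ := pOf_ne x₀ hlen hne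
  exact hne' ((hω j hj).symm.trans (hω' j (by omega)))

end bridge
end Urn

namespace Urn
open MeasureTheory

def validAt (ω : ℕ → ℕ × ℕ) (t : ℕ) : Prop :=
  ω (t+1) = upS (ω t) ∨ ω (t+1) = dnS (ω t)

def GoodSet (x₀ : ℕ × ℕ) : Set (ℕ → ℕ × ℕ) :=
  {ω | ω 0 = x₀ ∧ ∀ t, validAt ω t}

def Dset (x₀ : ℕ × ℕ) (n s : ℕ) : Set (ℕ → ℕ × ℕ) :=
  ⋃ l ∈ (allBool s).filter (fun l => n ≤ tind x₀ + tiesL x₀ l), cylSet x₀ l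

section meas
variable {β r : ℝ} {x₀ : ℕ × ℕ}
variable {μ : Measure (ℕ → ℕ × ℕ)}

lemma toReal_cylSet (hμ : IsUrnProcess μ β r x₀) (l : List Bool) :
    (μ (cylSet x₀ l)).toReal = wtL β r x₀ l := by
  have h := hμ.2 l.length (pOf x₀ l) (pOf_zero x₀ l)
  rw [prod_urnStep] at h
  exact h

lemma measure_cylSet (hμ : IsUrnProcess μ β r x₀) (l : List Bool) :
    μ (cylSet x₀ l) = ENNReal.ofReal (wtL β r x₀ l) := by
  haveI := hμ.1
  rw [← toReal_cylSet hμ l, ENNReal.ofReal_toReal (measure_ne_top μ _)]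

lemma measure_Dset (hβ : 0 ≤ β) (hr : 1 < r) (hμ : IsUrnProcess μ β r x₀)
    (hx : ok x₀) (n s : ℕ) :
    μ (Dset x₀ n s) = ENNReal.ofReal (hitSum β r s x₀ (n - tind x₀)) := by
  classical
  haveI := hμ.1
  have hd : ((((allBool s).filter (fun l => n ≤ tind x₀ + tiesL x₀ l)) : Finset (List Bool))
      : Set (List Bool)).PairwiseDisjoint (cylSet x₀) := by
    intro l hl l' hl' hne
    simp only [Finset.coe_filter, Set.mem_setOf_eq] at hl hl'
    have h1 : l.length = s := (mem_allBool s l).mp hl.1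
    have h2 : l'.length = s := (mem_allBool s l').mp hl'.1
    exact cylSet_disjoint x₀ (h1.trans h2.symm) hne
  rw [Dset, measure_biUnion_finset hd (fun l _ => measurable_cylSet x₀ l)]
  have h1 : ∀ l ∈ (allBool s).filter (fun l => n ≤ tind x₀ + tiesL x₀ l),
      μ (cylSet x₀ l) = ENNReal.ofReal (wtL β r x₀ l) :=
    fun l _ => measure_cylSet hμ l
  rw [Finset.sum_congr rfl h1,
    ← ENNReal.ofReal_sum_of_nonneg (fun l _ => (wtL_pos hβ hr hx l).le)]
  congr 1
  rw [Finset.sum_filter, hitSum_eq_sum hβ hr s x₀ _ hx]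
  apply Finset.sum_congr rfl
  intro l _
  by_cases h : n - tind x₀ ≤ tiesL x₀ l
  · rw [if_pos (by omega : n ≤ tind x₀ + tiesL x₀ l), if_pos h, mul_one]
  · rw [if_neg (by omega : ¬ n ≤ tind x₀ + tiesL x₀ l), if_neg h, mul_zero]

lemma null_notstart (hμ : IsUrnProcess μ β r x₀) : μ {ω | ¬ ω 0 = x₀} = 0 := by
  haveI := hμ.1
  have h := hμ.2 0 (fun _ => x₀) rfl
  simp only [Finset.range_zero, Finset.prod_empty] at h
  have hset : {ω : ℕ → ℕ × ℕ | ∀ t ≤ 0, ω t = (fun _ => x₀) t} = {ω | ω 0 = x₀} := by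
    ext ω
    constructor
    · intro hω; exact hω 0 (le_refl 0)
    · intro hω t ht
      have h' : t = 0 := by omega
      subst h'; exact hω
  rw [hset] at h
  have h1 : μ {ω : ℕ → ℕ × ℕ | ω 0 = x₀} = 1 := (ENNReal.toReal_eq_one_iff _).mp h
  have hms : MeasurableSet {ω : ℕ → ℕ × ℕ | ω 0 = x₀} := by
    have : {ω : ℕ → ℕ × ℕ | ω 0 = x₀} = (fun ω : ℕ → ℕ × ℕ => ω 0) ⁻¹' {x₀} := by
      ext ω; simp
    rw [this]
    exact (measurable_pi_apply 0) (measurableSet_singleton _)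
  have h2 : {ω : ℕ → ℕ × ℕ | ¬ ω 0 = x₀} = {ω : ℕ → ℕ × ℕ | ω 0 = x₀}ᶜ := rfl
  rw [h2, measure_compl hms (measure_ne_top μ _), h1, measure_univ, tsub_self]

lemma null_bad (hμ : IsUrnProcess μ β r x₀) (t : ℕ) :
    μ {ω | ω 0 = x₀ ∧ (∀ j, j < t → validAt ω j) ∧ ¬ validAt ω t} = 0 := by
  classical
  haveI := hμ.1
  set N : List Bool → (ℕ × ℕ) → Set (ℕ → ℕ × ℕ) := fun l y =>
    if l.length = t ∧ ¬ y = upS (runL x₀ l) ∧ ¬ y = dnS (runL x₀ l)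
    then {ω | ∀ j ≤ t + 1, ω j = (fun j => if j ≤ t then pOf x₀ l j else y) j}
    else ∅ with hN
  have hNnull : ∀ l y, μ (N l y) = 0 := by
    intro l y
    rw [hN]
    simp only
    split
    case isTrue hcond =>
      obtain ⟨hlen, hy1, hy2⟩ := hcond
      set q : ℕ → ℕ × ℕ := fun j => if j ≤ t then pOf x₀ l j else y with hq
      have hq0 : q 0 = x₀ := by rw [hq]; simp [pOf_zero]
      have h := hμ.2 (t+1) q hq0
      have hzero : ∏ j ∈ Finset.range (t+1), urnStep β r (q j) (q (j+1)) = 0 := by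
        apply Finset.prod_eq_zero (Finset.self_mem_range_succ t)
        have hqt : q t = runL x₀ l := by
          rw [hq]
          simp only [le_refl, if_pos]
          rw [← hlen, pOf_length]
        have hqt1 : q (t+1) = y := by
          rw [hq]; simp
        rw [hqt, hqt1, urnStep]
        rw [if_neg (by exact hy1), if_neg (by exact hy2)]
      rw [hzero] at h
      rcases (ENNReal.toReal_eq_zero_iff _).mp h with h' | h'
      · exact h'
      · exact absurd h' (measure_ne_top μ _)
    case isFalse => exact measure_empty
  have hsub : {ω | ω 0 = x₀ ∧ (∀ j, j < t → validAt ω j) ∧ ¬ validAt ω t}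
      ⊆ ⋃ (l : List Bool) (y : ℕ × ℕ), N l y := by
    rintro ω ⟨h0, hv, hbad⟩
    obtain ⟨l, hlen, hl⟩ := exists_list_of_valid x₀ ω h0 t (fun j hj => hv j hj)
    have hωt : ω t = runL x₀ l := by
      rw [hl t (le_refl t), ← hlen, pOf_length]
    rw [validAt, not_or] at hbad
    refine Set.mem_iUnion.mpr ⟨l, Set.mem_iUnion.mpr ⟨ω (t+1), ?_⟩⟩
    rw [hN]
    simp only
    rw [if_pos ⟨hlen, by rw [← hωt]; exact hbad.1, by rw [← hωt]; exact hbad.2⟩]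
    intro j hj
    rcases Nat.lt_or_ge j (t+1) with h | h
    · simp only [if_pos (by omega : j ≤ t)]
      exact hl j (by omega)
    · have hj1 : j = t + 1 := by omega
      subst hj1
      simp
  exact measure_mono_null hsub
    (measure_iUnion_null fun l => measure_iUnion_null fun y => hNnull l y)

lemma measurable_GoodSet : MeasurableSet (GoodSet x₀) := by
  have h1 : GoodSet x₀ = ((fun ω : ℕ → ℕ × ℕ => ω 0) ⁻¹' {x₀}) ∩
      ⋂ (t : ℕ), ⋃ (z : ℕ × ℕ),
        (((fun ω : ℕ → ℕ × ℕ => ω t) ⁻¹' {z}) ∩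
          (((fun ω : ℕ → ℕ × ℕ => ω (t+1)) ⁻¹' {upS z})
            ∪ ((fun ω : ℕ → ℕ × ℕ => ω (t+1)) ⁻¹' {dnS z}))) := by
    ext ω
    simp only [GoodSet, Set.mem_inter_iff, Set.mem_preimage, Set.mem_singleton_iff,
      Set.mem_iInter, Set.mem_iUnion, Set.mem_union, Set.mem_setOf_eq, validAt]
    constructor
    · rintro ⟨h0, hv⟩
      exact ⟨h0, fun t => ⟨ω t, rfl, hv t⟩⟩
    · rintro ⟨h0, hv⟩
      refine ⟨h0, fun t => ?_⟩
      obtain ⟨z, hz, hw⟩ := hv t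
      rw [← hz] at hw
      exact hw
  rw [h1]
  apply MeasurableSet.inter
  · exact (measurable_pi_apply 0) (measurableSet_singleton _)
  · apply MeasurableSet.iInter
    intro t
    apply MeasurableSet.iUnion
    intro z
    exact ((measurable_pi_apply t) (measurableSet_singleton _)).inter
      (((measurable_pi_apply (t+1)) (measurableSet_singleton _)).union
        ((measurable_pi_apply (t+1)) (measurableSet_singleton _)))

lemma null_compl_GoodSet (hμ : IsUrnProcess μ β r x₀) : μ (GoodSet x₀)ᶜ = 0 := by
  classical
  have hsub : (GoodSet x₀)ᶜ ⊆ {ω | ¬ ω 0 = x₀} ∪ ⋃ (t : ℕ),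
      {ω | ω 0 = x₀ ∧ (∀ j, j < t → validAt ω j) ∧ ¬ validAt ω t} := by
    intro ω hω
    by_cases h0 : ω 0 = x₀
    · right
      simp only [GoodSet, Set.mem_compl_iff, Set.mem_setOf_eq, not_and, not_forall] at hω
      obtain ⟨t, ht⟩ := hω h0
      have hex : ∃ t, ¬ validAt ω t := ⟨t, ht⟩
      refine Set.mem_iUnion.mpr ⟨Nat.find hex, h0, fun j hj => ?_, Nat.find_spec hex⟩
      have := Nat.find_min hex hj
      exact not_not.mp this
    · left; exact h0
  apply measure_mono_null hsub
  exact measure_union_null (null_notstart hμ)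
    (measure_iUnion_null fun t => null_bad hμ t)

lemma Dset_subset_event (n s : ℕ) :
    Dset x₀ n s ⊆ {ω | (n : ℕ∞) ≤ intensity ω} := by
  classical
  intro ω hω
  simp only [Dset, Set.mem_iUnion] at hω
  obtain ⟨l, hl, hω⟩ := hω
  rw [Finset.mem_filter] at hl
  obtain ⟨hmem, hties⟩ := hl
  replace hω : ∀ t ≤ l.length, ω t = pOf x₀ l t := hω
  set F := (Finset.range (l.length + 1)).filter (fun j => (ω j).1 = (ω j).2) with hF
  have hcard : tind x₀ + tiesL x₀ l ≤ F.card := by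
    rw [count_ties, hF, Finset.card_filter]
    apply le_of_eq
    apply Finset.sum_congr rfl
    intro j hj
    simp only [Finset.mem_range] at hj
    rw [hω j (by omega)]
  have h2 : (↑F : Set ℕ) ⊆ {t | (ω t).1 = (ω t).2} := by
    intro j hj
    rw [hF] at hj
    simp only [Finset.coe_filter, Set.mem_setOf_eq] at hj
    exact hj.2
  calc (n : ℕ∞) ≤ (F.card : ℕ∞) := by exact_mod_cast le_trans hties hcard
    _ = (↑F : Set ℕ).encard := (Set.encard_coe_eq_coe_finsetCard F).symm
    _ ≤ intensity ω := Set.encard_mono h2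

lemma event_inter_good_subset (n : ℕ) :
    {ω | (n : ℕ∞) ≤ intensity ω} ∩ GoodSet x₀
      ⊆ ⋃ s, (GoodSet x₀ ∩ Dset x₀ n s) := by
  classical
  rintro ω ⟨hev, hgood⟩
  obtain ⟨T, hTsub, hTcard⟩ := Set.exists_subset_encard_eq hev
  have hTfin : T.Finite := Set.finite_of_encard_eq_coe hTcard
  obtain ⟨s, hs⟩ := hTfin.bddAbove
  refine Set.mem_iUnion.mpr ⟨s, hgood, ?_⟩
  obtain ⟨l, hlen, hl⟩ := exists_list_of_valid x₀ ω hgood.1 s (fun t _ => hgood.2 t)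
  have hTcard' : hTfin.toFinset.card = n := by
    have h3 := hTfin.encard_eq_coe_toFinset_card
    rw [hTcard] at h3
    exact_mod_cast h3.symm
  have hsubF : hTfin.toFinset ⊆ (Finset.range (s + 1)).filter
      (fun j => (ω j).1 = (ω j).2) := by
    intro j hj
    rw [Set.Finite.mem_toFinset] at hj
    rw [Finset.mem_filter, Finset.mem_range]
    exact ⟨by have := hs hj; omega, hTsub hj⟩
  have hcard2 : n ≤ ((Finset.range (s + 1)).filter
      (fun j => (ω j).1 = (ω j).2)).card := by
    rw [← hTcard']
    exact Finset.card_le_card hsubF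
  have hties : n ≤ tind x₀ + tiesL x₀ l := by
    rw [count_ties]
    calc n ≤ ((Finset.range (s + 1)).filter (fun j => (ω j).1 = (ω j).2)).card := hcard2
      _ = ∑ j ∈ Finset.range (l.length + 1),
            (if (pOf x₀ l j).1 = (pOf x₀ l j).2 then 1 else 0) := by
          rw [Finset.card_filter, hlen]
          apply Finset.sum_congr rfl
          intro j hj
          simp only [Finset.mem_range] at hj
          rw [hl j (by omega)]
  refine Set.mem_iUnion.mpr ⟨l, Set.mem_iUnion.mpr
    ⟨?_, fun t ht => hl t (by omega)⟩⟩
  rw [Finset.mem_filter]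
  exact ⟨(mem_allBool s l).mpr hlen, hties⟩

lemma good_Dset_mono (n : ℕ) :
    Monotone (fun s => GoodSet x₀ ∩ Dset x₀ n s) := by
  classical
  apply monotone_nat_of_le_succ
  intro s
  rintro ω ⟨hgood, hD⟩
  refine ⟨hgood, ?_⟩
  simp only [Dset, Set.mem_iUnion] at hD ⊢
  obtain ⟨l, hl, hω⟩ := hD
  rw [Finset.mem_filter] at hl
  obtain ⟨hmem, hties⟩ := hl
  have hlen : l.length = s := (mem_allBool s l).mp hmem
  replace hω : ∀ t ≤ l.length, ω t = pOf x₀ l t := hω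
  have hstep : ∃ c : Bool, ω (s+1) = stp c (ω s) := by
    rcases hgood.2 s with hc | hc
    · exact ⟨true, by simpa [stp] using hc⟩
    · exact ⟨false, by simpa [stp] using hc⟩
  obtain ⟨c, hc⟩ := hstep
  refine ⟨l ++ [c], ?_, ?_⟩
  · rw [Finset.mem_filter]
    constructor
    · exact (mem_allBool (s+1) (l ++ [c])).mpr (by simp [hlen])
    · have h4 : tiesL x₀ l ≤ tiesL x₀ (l ++ [c]) := by
        rw [tiesL_append]
        omega
      omega
  · intro t ht
    have hlen' : (l ++ [c]).length = s + 1 := by simp [hlen]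
    rcases Nat.lt_or_ge t (s+1) with h | h
    · rw [pOf_append_le x₀ l c (by omega)]
      exact hω t (by omega)
    · have ht1 : t = s + 1 := by omega
      subst ht1
      have h3 : s + 1 = l.length + 1 := by omega
      rw [h3, pOf_append_last]
      have hend : runL x₀ l = ω s := by
        rw [hω s (by omega), ← hlen, pOf_length]
      rw [hend, ← hc, hlen]

lemma measure_event_ge (hβ : 0 ≤ β) (hr : 1 < r) (hμ : IsUrnProcess μ β r x₀)
    (hx : ok x₀) (n s : ℕ) :
    ENNReal.ofReal (hitSum β r s x₀ (n - tind x₀)) ≤ μ {ω | (n : ℕ∞) ≤ intensity ω} := by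
  rw [← measure_Dset hβ hr hμ hx n s]
  exact measure_mono (Dset_subset_event n s)

lemma measure_event_le (hβ : 0 ≤ β) (hr : 1 < r) (hμ : IsUrnProcess μ β r x₀)
    (hx : ok x₀) (n : ℕ) :
    μ {ω | (n : ℕ∞) ≤ intensity ω} ≤ ENNReal.ofReal (phi r x₀ (n - tind x₀)) := by
  haveI := hμ.1
  have h1 : {ω : ℕ → ℕ × ℕ | (n : ℕ∞) ≤ intensity ω}
      ⊆ (⋃ s, (GoodSet x₀ ∩ Dset x₀ n s)) ∪ (GoodSet x₀)ᶜ := by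
    intro ω hω
    by_cases hg : ω ∈ GoodSet x₀
    · left; exact event_inter_good_subset n ⟨hω, hg⟩
    · right; exact hg
  calc μ {ω : ℕ → ℕ × ℕ | (n : ℕ∞) ≤ intensity ω}
      ≤ μ (⋃ s, (GoodSet x₀ ∩ Dset x₀ n s)) + μ (GoodSet x₀)ᶜ :=
        le_trans (measure_mono h1) (measure_union_le _ _)
    _ = μ (⋃ s, (GoodSet x₀ ∩ Dset x₀ n s)) := by
        rw [null_compl_GoodSet hμ, add_zero]
    _ = ⨆ s, μ (GoodSet x₀ ∩ Dset x₀ n s) := (good_Dset_mono n).measure_iUnion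
    _ ≤ ENNReal.ofReal (phi r x₀ (n - tind x₀)) := by
        apply iSup_le
        intro s
        calc μ (GoodSet x₀ ∩ Dset x₀ n s) ≤ μ (Dset x₀ n s) :=
              measure_mono Set.inter_subset_right
          _ = ENNReal.ofReal (hitSum β r s x₀ (n - tind x₀)) :=
              measure_Dset hβ hr hμ hx n s
          _ ≤ ENNReal.ofReal (phi r x₀ (n - tind x₀)) :=
              ENNReal.ofReal_le_ofReal (hitSum_le_phi hβ hr s x₀ _ hx)

end meas
end Urn

namespace Urn
open MeasureTheory Filter

section final
variable {β r : ℝ} {x₀ : ℕ × ℕ} {μ : Measure (ℕ → ℕ × ℕ)}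

lemma f_upper (hβ : 0 ≤ β) (hr : 1 < r) (hμ : IsUrnProcess μ β r x₀) (hx : ok x₀)
    (n : ℕ) (hn : 1 ≤ n) :
    (μ {ω | (n : ℕ∞) ≤ intensity ω}).toReal ≤ psi r x₀ * qf r ^ (n - 1) := by
  have h1 := measure_event_le hβ hr hμ hx n
  have h2 : (μ {ω | (n : ℕ∞) ≤ intensity ω}).toReal ≤ phi r x₀ (n - tind x₀) :=
    ENNReal.toReal_le_of_le_ofReal (phi_nonneg hr x₀ _) h1
  refine le_trans h2 (le_of_eq ?_)
  obtain ⟨k, rfl⟩ : ∃ k, n = k + 1 := ⟨n - 1, by omega⟩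
  have hk1 : k + 1 - 1 = k := by omega
  by_cases htie : x₀.1 = x₀.2
  · have ht : tind x₀ = 1 := by simp [tind, htie]
    rw [ht, hk1, phi_tie htie, psi_eq_of_le (le_of_eq htie), one_mul]
  · have ht : tind x₀ = 0 := by simp [tind, htie]
    rw [ht, Nat.sub_zero, hk1, phi, if_neg htie, mul_comm]

lemma f_lower (hβ : 0 ≤ β) (hr : 1 < r) (hμ : IsUrnProcess μ β r x₀) (hx : ok x₀)
    {ρ : ℝ} (hρ0 : 0 < ρ) (hρq : ρ < qf r) :
    ∃ c : ℝ, 0 < c ∧ ∀ n : ℕ, 1 ≤ n →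
      c * ρ ^ (n - 1) ≤ (μ {ω | (n : ℕ∞) ≤ intensity ω}).toReal := by
  haveI := hμ.1
  obtain ⟨M, z₀, hz₀, hnxt⟩ := exists_nxt_lb hβ hr hρq
  obtain ⟨l₁, w, hrun, hwz, hties1⟩ := exists_path_to_tie x₀ hx z₀
  refine ⟨wtL β r x₀ l₁, wtL_pos hβ hr hx l₁, ?_⟩
  intro n hn
  obtain ⟨k, rfl⟩ : ∃ k, n = k + 1 := ⟨n - 1, by omega⟩
  have hw1 : 1 ≤ w := le_trans hz₀ hwz
  have hokw : ok ((w : ℕ), w) := ⟨hw1, hw1⟩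
  have hchain := hitSum_chain hβ hr z₀ hz₀ M ρ hρ0.le hnxt k w hwz
  have htind : tind x₀ ≤ 1 := by rw [tind]; split <;> omega
  have hanti : hitSum β r (k * M) (w, w) k
      ≤ hitSum β r (k * M) (w, w) (k + 1 - tind x₀ - tiesL x₀ l₁) :=
    hitSum_anti_m hβ hr (by omega) _ _ hokw
  have hprefix := wtL_mul_hitSum_le hβ hr hx l₁ (k * M) (k + 1 - tind x₀)
  rw [hrun] at hprefix
  have hmeas := measure_event_ge hβ hr hμ hx (k+1) (l₁.length + k * M)
  have htoReal : hitSum β r (l₁.length + k * M) x₀ (k + 1 - tind x₀)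
      ≤ (μ {ω | ((k+1 : ℕ) : ℕ∞) ≤ intensity ω}).toReal := by
    have h5 := ENNReal.toReal_mono (measure_ne_top μ _) hmeas
    rwa [ENNReal.toReal_ofReal (hitSum_nonneg hβ hr _ _ _ hx)] at h5
  have hk1 : k + 1 - 1 = k := by omega
  rw [hk1]
  calc wtL β r x₀ l₁ * ρ ^ k
      ≤ wtL β r x₀ l₁ * hitSum β r (k * M) (w, w) k :=
        mul_le_mul_of_nonneg_left hchain (wtL_pos hβ hr hx l₁).le
    _ ≤ wtL β r x₀ l₁ * hitSum β r (k * M) (w, w) (k + 1 - tind x₀ - tiesL x₀ l₁) :=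
        mul_le_mul_of_nonneg_left hanti (wtL_pos hβ hr hx l₁).le
    _ ≤ hitSum β r (l₁.length + k * M) x₀ (k + 1 - tind x₀) := hprefix
    _ ≤ _ := htoReal

lemma aux_tendsto (a b : ℝ) :
    Tendsto (fun n : ℕ => a / n + (((n:ℝ) - 1)/n) * b) atTop (nhds b) := by
  have h1 : Tendsto (fun n : ℕ => a / n) atTop (nhds 0) :=
    tendsto_const_div_atTop_nhds_zero_nat a
  have h2 : Tendsto (fun n : ℕ => 1 - 1/(n:ℝ)) atTop (nhds 1) := by
    have h0 := tendsto_one_div_atTop_nhds_zero_nat (𝕜 := ℝ)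
    have := (tendsto_const_nhds (x := (1:ℝ)) (f := atTop (α := ℕ))).sub h0
    simpa using this
  have h3 : Tendsto (fun n : ℕ => (1 - 1/(n:ℝ)) * b) atTop (nhds b) := by
    simpa using h2.mul_const b
  have h4 := h1.add h3
  rw [zero_add] at h4
  apply h4.congr'
  filter_upwards [eventually_ge_atTop 1] with n hn
  have hn0 : (0:ℝ) < n := by exact_mod_cast hn
  have hne : (n:ℝ) ≠ 0 := ne_of_gt hn0
  field_simp

end final
end Urn


/-- For `r > 1`, the intensity of a `(β,r,x₀)`-urn process has an exponential
tail: `P[N(β,r,x₀) ≥ n] ≤ r^{-(x₀₁-x₀₂)⁺}·(2/(r+1))^{n-1}` for all `n ≥ 1`, and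
`(1/n)·log P[N(β,r,x₀) ≥ n] → log(2/(r+1))` as `n → ∞`. -/
theorem stmt_17 (β r : ℝ) (hβ : 0 ≤ β) (hr : 1 < r)
    (x₀ : ℕ × ℕ) (hx₁ : 0 < x₀.1) (hx₂ : 0 < x₀.2)
    (μ : Measure (ℕ → ℕ × ℕ)) (hμ : IsUrnProcess μ β r x₀) :
    (∀ n : ℕ, 1 ≤ n →
      (μ {ω | (n : ℕ∞) ≤ intensity ω}).toReal
        ≤ r ^ (-(max ((x₀.1 : ℝ) - (x₀.2 : ℝ)) 0)) * (2 / (r + 1)) ^ (n - 1)) ∧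
    Tendsto (fun n : ℕ =>
        Real.log ((μ {ω | (n : ℕ∞) ≤ intensity ω}).toReal) / (n : ℝ))
      atTop (nhds (Real.log (2 / (r + 1)))) := by
  classical
  have hx : Urn.ok x₀ := ⟨hx₁, hx₂⟩
  have hq0 : 0 < Urn.qf r := Urn.qf_pos hr
  have hq1 : Urn.qf r < 1 := Urn.qf_lt_one hr
  have hC0 : 0 < Urn.psi r x₀ := Urn.psi_pos hr x₀
  set f : ℕ → ℝ := fun n => (μ {ω | (n : ℕ∞) ≤ intensity ω}).toReal with hf
  have hupper : ∀ n : ℕ, 1 ≤ n → f n ≤ Urn.psi r x₀ * Urn.qf r ^ (n - 1) :=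
    fun n hn => Urn.f_upper hβ hr hμ hx n hn
  have hlower : ∀ ρ : ℝ, 0 < ρ → ρ < Urn.qf r →
      ∃ c : ℝ, 0 < c ∧ ∀ n : ℕ, 1 ≤ n → c * ρ ^ (n - 1) ≤ f n :=
    fun ρ h1 h2 => Urn.f_lower hβ hr hμ hx h1 h2
  have hfpos : ∀ n : ℕ, 1 ≤ n → 0 < f n := by
    obtain ⟨c, hc, hcl⟩ := hlower (Urn.qf r / 2) (by linarith) (by linarith)
    intro n hn
    have := hcl n hn
    have : 0 < c * (Urn.qf r / 2) ^ (n-1) := by positivity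
    linarith [hcl n hn]
  constructor
  · exact hupper
  · rw [Metric.tendsto_atTop]
    intro ε hε
    set L : ℝ := Real.log (2 / (r + 1)) with hL
    have hLq : L = Real.log (Urn.qf r) := rfl
    -- upper eventual bound
    have hauxU := Urn.aux_tendsto (Real.log (Urn.psi r x₀)) (Real.log (Urn.qf r))
    have hevU : ∀ᶠ n : ℕ in atTop,
        Real.log (Urn.psi r x₀) / n + (((n:ℝ) - 1)/n) * Real.log (Urn.qf r) < L + ε :=
      (tendsto_order.mp hauxU).2 _ (by rw [hLq]; linarith)
    -- lower eventual bound
    set ρ : ℝ := Urn.qf r * Real.exp (-(ε/2)) with hρ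
    have hρ0 : 0 < ρ := by positivity
    have hρq : ρ < Urn.qf r := by
      rw [hρ]
      nth_rewrite 2 [show Urn.qf r = Urn.qf r * 1 from (mul_one _).symm]
      apply mul_lt_mul_of_pos_left _ hq0
      apply Real.exp_lt_one_iff.mpr
      linarith
    have hlogρ : Real.log ρ = L - ε/2 := by
      rw [hρ, Real.log_mul (ne_of_gt hq0) (ne_of_gt (Real.exp_pos _)), Real.log_exp, hLq]
      ring
    obtain ⟨c, hc0, hcl⟩ := hlower ρ hρ0 hρq
    have hauxL := Urn.aux_tendsto (Real.log c) (Real.log ρ)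
    have hevL : ∀ᶠ n : ℕ in atTop,
        L - ε < Real.log c / n + (((n:ℝ) - 1)/n) * Real.log ρ :=
      (tendsto_order.mp hauxL).1 _ (by rw [hlogρ]; linarith)
    have hev := (hevU.and hevL).and (eventually_ge_atTop 1)
    obtain ⟨N, hN⟩ := eventually_atTop.mp hev
    refine ⟨N, fun n hn => ?_⟩
    obtain ⟨⟨h1, h2⟩, hn1⟩ := hN n hn
    have hn0 : (0:ℝ) < n := by exact_mod_cast hn1
    have hfn := hfpos n hn1
    -- upper: log f n / n < L + ε
    have hup : Real.log (f n) / n < L + ε := by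
      have hlog : Real.log (f n)
          ≤ Real.log (Urn.psi r x₀) + ((n:ℝ) - 1) * Real.log (Urn.qf r) := by
        calc Real.log (f n) ≤ Real.log (Urn.psi r x₀ * Urn.qf r ^ (n - 1)) :=
              Real.log_le_log hfn (hupper n hn1)
          _ = Real.log (Urn.psi r x₀) + ((n - 1 : ℕ):ℝ) * Real.log (Urn.qf r) := by
              rw [Real.log_mul (ne_of_gt hC0) (by positivity), Real.log_pow]
          _ = Real.log (Urn.psi r x₀) + ((n:ℝ) - 1) * Real.log (Urn.qf r) := by
              rw [Nat.cast_sub hn1, Nat.cast_one]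
      calc Real.log (f n) / n
          ≤ (Real.log (Urn.psi r x₀) + ((n:ℝ) - 1) * Real.log (Urn.qf r)) / n := by
            exact (div_le_div_iff_of_pos_right hn0).mpr hlog
        _ = Real.log (Urn.psi r x₀) / n + (((n:ℝ) - 1)/n) * Real.log (Urn.qf r) := by
            rw [add_div]; ring
        _ < L + ε := h1
    -- lower : L - ε < log f n / n
    have hlo : L - ε < Real.log (f n) / n := by
      have hlog : Real.log c + ((n:ℝ) - 1) * Real.log ρ ≤ Real.log (f n) := by
        calc Real.log c + ((n:ℝ) - 1) * Real.log ρ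
            = Real.log c + ((n - 1 : ℕ):ℝ) * Real.log ρ := by
              rw [Nat.cast_sub hn1, Nat.cast_one]
          _ = Real.log (c * ρ ^ (n - 1)) := by
              rw [Real.log_mul (ne_of_gt hc0) (by positivity), Real.log_pow]
          _ ≤ Real.log (f n) := Real.log_le_log (by positivity) (hcl n hn1)
      calc L - ε < Real.log c / n + (((n:ℝ) - 1)/n) * Real.log ρ := h2
        _ = (Real.log c + ((n:ℝ) - 1) * Real.log ρ) / n := by rw [add_div]; ring
        _ ≤ Real.log (f n) / n := (div_le_div_iff_of_pos_right hn0).mpr hlog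
    rw [Real.dist_eq, abs_lt]
    constructor <;> [linarith; linarith]
end
end
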